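/- arXiv:math/0110175 — 8 statements merged into one kernel-verified Lean document; each statement's English description precedes it below -/
import Mathlib

section
/- Let h ≥ 1 be an integer, c > 0 a real number, and s a complex number with Re(s) > h. Then z_{2h}(s,c) = (1/(2h−1)!) · Σ_{l=0}^{h−1} b_{2h,l} · z_even(s−l, 0, 2h−1, c), where both sides are given by absolutely convergent series. -/
open Polynomial

/-- Summability of the basic even zeta-type series. -/
lemma z_even_aux_summable (c : ℝ) (hc : 0 < c) (m : ℝ) (hm : 0 ≤ m) (w : ℂ)
    (hw : 1 < w.re) :
    Summable (fun n : ℕ =>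
      ((2 * (c * (n + 1)) + m : ℝ) : ℂ) /
        ((c * (n + 1) * (c * (n + 1) + m) : ℝ) : ℂ) ^ w) := by
  apply Summable.of_norm
  have hsum : Summable (fun n : ℕ =>
      (2 + m / c) * c ^ (1 - 2 * w.re) * ((n + 1 : ℝ)) ^ (1 - 2 * w.re)) := by
    apply Summable.mul_left
    have h1 := (Real.summable_nat_rpow (p := 1 - 2 * w.re)).2 (by linarith)
    have h2 := (summable_nat_add_iff 1).2 h1
    convert h2 using 2 with n
    push_cast
    · rfl
    · push_cast; ring_nf
  apply Summable.of_nonneg_of_le (fun n => norm_nonneg _) _ hsum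
  intro n
  set x : ℝ := c * (n + 1) with hxdef
  have hx0 : 0 < x := by positivity
  have hn1 : (1 : ℝ) ≤ (n : ℝ) + 1 := by
    have := n.cast_nonneg (α := ℝ); linarith
  have hxc : c ≤ x := by
    calc c = c * 1 := by ring
    _ ≤ c * ((n : ℝ) + 1) := by
        apply mul_le_mul_of_nonneg_left hn1 hc.le
  have hA0 : 0 < x * (x + m) := by positivity
  have hnum0 : 0 ≤ 2 * x + m := by linarith
  rw [norm_div, Complex.norm_real, Real.norm_eq_abs,
    Complex.norm_cpow_eq_rpow_re_of_pos hA0,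
    abs_of_nonneg hnum0]
  have hx2 : x ^ 2 ≤ x * (x + m) := by nlinarith
  have hσ : 0 < w.re := by linarith
  have hden : (x ^ 2) ^ w.re ≤ (x * (x + m)) ^ w.re :=
    Real.rpow_le_rpow (by positivity) hx2 hσ.le
  have hnum : 2 * x + m ≤ (2 + m / c) * x := by
    have : m ≤ (m / c) * x := by
      calc m = (m / c) * c := by field_simp
      _ ≤ (m / c) * x := by
          apply mul_le_mul_of_nonneg_left hxc (by positivity)
    linarith
  calc (2 * x + m) / (x * (x + m)) ^ w.re
      ≤ ((2 + m / c) * x) / (x ^ 2) ^ w.re := by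
        apply div_le_div₀ (by positivity) hnum (by positivity) hden
    _ = (2 + m / c) * c ^ (1 - 2 * w.re) * ((n + 1 : ℝ)) ^ (1 - 2 * w.re) := by
        rw [← Real.rpow_natCast x 2, ← Real.rpow_mul hx0.le]
        rw [show ((2 : ℕ) : ℝ) * w.re = 2 * w.re by norm_num]
        rw [mul_div_assoc]
        rw [show x / x ^ (2 * w.re) = x ^ (1 - 2 * w.re) by
          rw [Real.rpow_sub hx0, Real.rpow_one]]
        rw [hxdef, Real.mul_rpow hc.le (by positivity), mul_assoc]


/-- Lemma 3, even case: `z_{2h}(s,c)` as a combination of `z_even(s-l,0,2h-1,c)`. -/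
theorem z_even_dim_decomposition (h : ℕ) (hh : 1 ≤ h) (c : ℝ) (hc : 0 < c)
    (b : ℕ → ℝ)
    (hb : (∏ i ∈ Finset.Icc 1 (2 * h - 2), (X + C (i : ℝ))) =
      ∑ l ∈ Finset.range h, C (b l) * (X ^ 2 + C ((2 * h - 1 : ℕ) : ℝ) * X) ^ l)
    (s : ℂ) (hs : (h : ℝ) < s.re) :
    Summable (fun n : ℕ =>
        (((2 * (c * (n + 1)) + ((2 * h - 1 : ℕ) : ℝ)) / (Nat.factorial (2 * h - 1) : ℝ) *
            ∏ i ∈ Finset.Icc 1 (2 * h - 2), (c * (n + 1) + (i : ℝ)) : ℝ) : ℂ) /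
          ((c * (n + 1) * (c * (n + 1) + ((2 * h - 1 : ℕ) : ℝ)) : ℝ) : ℂ) ^ s) ∧
      (∀ l < h, Summable (fun n : ℕ =>
        ((2 * (c * (n + 1)) + ((2 * h - 1 : ℕ) : ℝ) : ℝ) : ℂ) /
          ((c * (n + 1) * (c * (n + 1) + ((2 * h - 1 : ℕ) : ℝ)) : ℝ) : ℂ) ^ (s - l))) ∧
      (∑' n : ℕ,
        (((2 * (c * (n + 1)) + ((2 * h - 1 : ℕ) : ℝ)) / (Nat.factorial (2 * h - 1) : ℝ) *
            ∏ i ∈ Finset.Icc 1 (2 * h - 2), (c * (n + 1) + (i : ℝ)) : ℝ) : ℂ) /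
          ((c * (n + 1) * (c * (n + 1) + ((2 * h - 1 : ℕ) : ℝ)) : ℝ) : ℂ) ^ s) =
        (1 / (Nat.factorial (2 * h - 1) : ℂ)) *
          ∑ l ∈ Finset.range h, (b l : ℂ) *
            ∑' n : ℕ,
              ((2 * (c * (n + 1)) + ((2 * h - 1 : ℕ) : ℝ) : ℝ) : ℂ) /
                ((c * (n + 1) * (c * (n + 1) + ((2 * h - 1 : ℕ) : ℝ)) : ℝ) : ℂ) ^ (s - l) := by
  set m : ℝ := ((2 * h - 1 : ℕ) : ℝ) with hmdef
  have hm : 0 ≤ m := by positivity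
  -- summability for each l < h
  have hsuml : ∀ l : ℕ, l < h → Summable (fun n : ℕ =>
      ((2 * (c * (n + 1)) + m : ℝ) : ℂ) /
        ((c * (n + 1) * (c * (n + 1) + m) : ℝ) : ℂ) ^ (s - l)) := by
    intro l hl
    apply z_even_aux_summable c hc m hm
    have : (l : ℝ) + 1 ≤ (h : ℝ) := by exact_mod_cast hl
    simp only [Complex.sub_re, Complex.natCast_re]
    linarith
  -- the evaluated polynomial identity
  have hbx : ∀ x : ℝ, (∏ i ∈ Finset.Icc 1 (2 * h - 2), (x + (i : ℝ))) =
      ∑ l ∈ Finset.range h, b l * (x ^ 2 + m * x) ^ l := by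
    intro x
    have := congrArg (Polynomial.eval x) hb
    simpa [Polynomial.eval_prod, Polynomial.eval_finset_sum] using this
  -- pointwise decomposition of the general term
  have key : ∀ n : ℕ,
      (((2 * (c * (n + 1)) + m) / (Nat.factorial (2 * h - 1) : ℝ) *
            ∏ i ∈ Finset.Icc 1 (2 * h - 2), (c * (n + 1) + (i : ℝ)) : ℝ) : ℂ) /
          ((c * (n + 1) * (c * (n + 1) + m) : ℝ) : ℂ) ^ s =
        ∑ l ∈ Finset.range h, ((Nat.factorial (2 * h - 1) : ℂ))⁻¹ * (b l : ℂ) *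
          (((2 * (c * (n + 1)) + m : ℝ) : ℂ) /
            ((c * (n + 1) * (c * (n + 1) + m) : ℝ) : ℂ) ^ (s - l)) := by
    intro n
    set x : ℝ := c * (n + 1) with hxdef
    have hx0 : 0 < x := by positivity
    have hA0 : 0 < x * (x + m) := by positivity
    have hAC : ((x * (x + m) : ℝ) : ℂ) ≠ 0 := by
      exact_mod_cast hA0.ne'
    have hpow : ∀ l : ℕ, ((x * (x + m) : ℝ) : ℂ) ^ (s - (l : ℂ)) =
        ((x * (x + m) : ℝ) : ℂ) ^ s / ((x * (x + m) : ℝ) : ℂ) ^ (l : ℕ) := by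
      intro l
      rw [Complex.cpow_sub _ _ hAC, Complex.cpow_natCast]
    have hAs : ((x * (x + m) : ℝ) : ℂ) ^ s ≠ 0 := by
      intro hz
      rcases (Complex.cpow_eq_zero_iff _ _).1 hz with ⟨h1, _⟩
      exact hAC h1
    have hprodC : ((∏ i ∈ Finset.Icc 1 (2 * h - 2), (x + (i : ℝ)) : ℝ) : ℂ) =
        ∑ l ∈ Finset.range h, (b l : ℂ) * ((x * (x + m) : ℝ) : ℂ) ^ l := by
      rw_mod_cast [hbx x]
      push_cast
      apply Finset.sum_congr rfl
      intro l _
      ring_nf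
    rw [show (∑ l ∈ Finset.range h, ((Nat.factorial (2 * h - 1) : ℂ))⁻¹ * (b l : ℂ) *
          (((2 * (c * (n + 1)) + m : ℝ) : ℂ) /
            ((c * (n + 1) * (c * (n + 1) + m) : ℝ) : ℂ) ^ (s - (l:ℕ)))) =
        (∑ l ∈ Finset.range h, ((Nat.factorial (2 * h - 1) : ℂ))⁻¹ * (b l : ℂ) *
          (((2 * x + m : ℝ) : ℂ) * ((x * (x + m) : ℝ) : ℂ) ^ l)) /
          ((x * (x + m) : ℝ) : ℂ) ^ s from ?_]
    · push_cast at hprodC ⊢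
      rw [hprodC, Finset.mul_sum, Finset.sum_div, Finset.sum_div]
      apply Finset.sum_congr rfl
      intro l _
      ring
    · rw [Finset.sum_div]
      apply Finset.sum_congr rfl
      intro l _
      rw [hpow l]
      have : ((2 * (c * (↑n + 1)) + m : ℝ) : ℂ) = ((2 * x + m : ℝ) : ℂ) := by
        rw [hxdef]
      rw [this, div_div_eq_mul_div, mul_div_assoc, mul_div_assoc, mul_div_assoc]
  -- summability of the left-hand side
  have hsumL : Summable (fun n : ℕ =>
      (((2 * (c * (n + 1)) + m) / (Nat.factorial (2 * h - 1) : ℝ) *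
            ∏ i ∈ Finset.Icc 1 (2 * h - 2), (c * (n + 1) + (i : ℝ)) : ℝ) : ℂ) /
          ((c * (n + 1) * (c * (n + 1) + m) : ℝ) : ℂ) ^ s) := by
    rw [funext key]
    exact summable_sum fun l hl => ((hsuml l (Finset.mem_range.1 hl)).mul_left _)
  refine ⟨hsumL, hsuml, ?_⟩
  rw [funext key]
  rw [Summable.tsum_finsetSum (fun l hl => ((hsuml l (Finset.mem_range.1 hl)).mul_left _))]
  rw [Finset.mul_sum]
  apply Finset.sum_congr rfl
  intro l _
  rw [tsum_mul_left]
  ring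
end

section
/- Let h ≥ 1 be an integer, c > 0 a real number, and s a complex number with Re(s) > h + 1/2. Then z_{2h+1}(s,c) = (2/(2h)!) · Σ_{l=0}^{h} b_{2h+1,l} · z_odd(s−l, 0, 2h, c), where both sides are given by absolutely convergent series. -/
open Polynomial

lemma aux_summable (c : ℝ) (hc : 0 < c) (d : ℝ) (hd : 0 ≤ d) (w : ℂ) (hw : 1/2 < w.re) :
    Summable (fun n : ℕ => 1 / (((c * (n + 1) * (c * (n + 1) + d) : ℝ) : ℂ)) ^ w) := by
  have hq : (1:ℝ) < 2 * w.re := by linarith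
  apply Summable.of_norm
  have hx : ∀ n : ℕ, (0:ℝ) < c * (n + 1) := by
    intro n
    positivity
  have ht : ∀ n : ℕ, (0:ℝ) < c * (n + 1) * (c * (n + 1) + d) := by
    intro n
    have := hx n
    nlinarith
  have hsum : Summable (fun n : ℕ => (c * (n + 1) : ℝ) ^ (-(2 * w.re))) := by
    have h1 : Summable (fun n : ℕ => ((n : ℝ)) ^ (-(2 * w.re))) :=
      Real.summable_nat_rpow.mpr (by linarith)
    have h2 : Summable (fun n : ℕ => (((n + 1 : ℕ) : ℝ)) ^ (-(2 * w.re))) :=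
      (summable_nat_add_iff 1).mpr h1
    have h3 := h2.mul_left (c ^ (-(2 * w.re)))
    apply h3.congr
    intro n
    rw [← Real.mul_rpow hc.le (by positivity)]
    push_cast
    ring_nf
  apply Summable.of_nonneg_of_le (fun n => norm_nonneg _) _ hsum
  intro n
  have htn := ht n
  have hxn := hx n
  rw [norm_div, norm_one, Complex.norm_cpow_eq_rpow_re_of_pos htn,
    one_div, ← Real.rpow_neg htn.le]
  calc (c * (n + 1) * (c * (n + 1) + d)) ^ (-w.re)
      ≤ ((c * (n + 1)) ^ (2:ℝ)) ^ (-w.re) := by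
        apply Real.rpow_le_rpow_of_nonpos (by positivity) _ (by linarith)
        rw [Real.rpow_two]
        nlinarith
    _ = (c * (n + 1)) ^ (-(2 * w.re)) := by
        rw [← Real.rpow_mul hxn.le]
        ring_nf

/-- Lemma 3, odd case: `z_{2h+1}(s,c)` as a combination of `z_odd(s-l,0,2h,c)`. -/
theorem z_odd_dim_decomposition (h : ℕ) (hh : 1 ≤ h) (c : ℝ) (hc : 0 < c)
    (b : ℕ → ℝ)
    (hb : (X + C (h : ℝ)) * ∏ i ∈ Finset.Icc 1 (2 * h - 1), (X + C (i : ℝ)) =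
      ∑ l ∈ Finset.range (h + 1), C (b l) * (X ^ 2 + C ((2 * h : ℕ) : ℝ) * X) ^ l)
    (s : ℂ) (hs : (h : ℝ) + 1 / 2 < s.re) :
    Summable (fun n : ℕ =>
        (((2 * (c * (n + 1)) + (2 * h : ℝ)) / (Nat.factorial (2 * h) : ℝ) *
            ∏ i ∈ Finset.Icc 1 (2 * h - 1), (c * (n + 1) + (i : ℝ)) : ℝ) : ℂ) /
          ((c * (n + 1) * (c * (n + 1) + (2 * h : ℝ)) : ℝ) : ℂ) ^ s) ∧
      (∀ l ≤ h, Summable (fun n : ℕ =>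
        1 / ((c * (n + 1) * (c * (n + 1) + (2 * h : ℝ)) : ℝ) : ℂ) ^ (s - l))) ∧
      (∑' n : ℕ,
        (((2 * (c * (n + 1)) + (2 * h : ℝ)) / (Nat.factorial (2 * h) : ℝ) *
            ∏ i ∈ Finset.Icc 1 (2 * h - 1), (c * (n + 1) + (i : ℝ)) : ℝ) : ℂ) /
          ((c * (n + 1) * (c * (n + 1) + (2 * h : ℝ)) : ℝ) : ℂ) ^ s) =
        (2 / (Nat.factorial (2 * h) : ℂ)) *
          ∑ l ∈ Finset.range (h + 1), (b l : ℂ) *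
            ∑' n : ℕ,
              1 / ((c * (n + 1) * (c * (n + 1) + (2 * h : ℝ)) : ℝ) : ℂ) ^ (s - l) := by
  -- notation
  set x : ℕ → ℝ := fun n => c * (n + 1) with hxdef
  have hx : ∀ n : ℕ, (0:ℝ) < x n := fun n => by positivity
  set t : ℕ → ℝ := fun n => x n * (x n + 2 * h) with htdef
  have ht : ∀ n : ℕ, (0:ℝ) < t n := by
    intro n
    have := hx n
    have : (0:ℝ) ≤ 2 * h := by positivity
    simp only [htdef]
    nlinarith [hx n]
  -- summability of each z_odd
  have hsuml : ∀ l ≤ h, Summable (fun n : ℕ =>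
      1 / ((c * (n + 1) * (c * (n + 1) + (2 * h : ℝ)) : ℝ) : ℂ) ^ (s - l)) := by
    intro l hl
    apply aux_summable c hc (2 * h) (by positivity) (s - l)
    have : (l : ℝ) ≤ (h : ℝ) := by exact_mod_cast hl
    simp only [Complex.sub_re, Complex.natCast_re]
    linarith
  -- polynomial identity evaluated at x n
  have hbx : ∀ n : ℕ, (x n + h) * ∏ i ∈ Finset.Icc 1 (2 * h - 1), (x n + i) =
      ∑ l ∈ Finset.range (h + 1), b l * (t n) ^ l := by
    intro n
    have := congrArg (Polynomial.eval (x n)) hb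
    simpa [eval_prod, eval_finset_sum, htdef, sq, mul_comm, mul_assoc, add_mul, mul_add]
      using this
  -- termwise identity in ℂ
  have hterm : ∀ n : ℕ,
      (((2 * (c * (n + 1)) + (2 * h : ℝ)) / (Nat.factorial (2 * h) : ℝ) *
            ∏ i ∈ Finset.Icc 1 (2 * h - 1), (c * (n + 1) + (i : ℝ)) : ℝ) : ℂ) /
          ((c * (n + 1) * (c * (n + 1) + (2 * h : ℝ)) : ℝ) : ℂ) ^ s =
        ∑ l ∈ Finset.range (h + 1), (2 / (Nat.factorial (2 * h) : ℂ) * (b l : ℂ)) *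
          (1 / ((c * (n + 1) * (c * (n + 1) + (2 * h : ℝ)) : ℝ) : ℂ) ^ (s - l)) := by
    intro n
    have htn := ht n
    have ht0 : ((t n : ℝ) : ℂ) ≠ 0 := by
      exact_mod_cast ne_of_gt (by exact_mod_cast htn : (0:ℝ) < t n)
    have hts : ((t n : ℝ) : ℂ) ^ s ≠ 0 := by
      intro hcon
      rcases (Complex.cpow_eq_zero_iff _ _).mp hcon with ⟨h1, _⟩
      exact ht0 h1
    have hnum : (2 * (c * (n + 1)) + (2 * h : ℝ)) / (Nat.factorial (2 * h) : ℝ) *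
        ∏ i ∈ Finset.Icc 1 (2 * h - 1), (c * (n + 1) + (i : ℝ)) =
        2 / (Nat.factorial (2 * h) : ℝ) * ∑ l ∈ Finset.range (h + 1), b l * (t n) ^ l := by
      rw [← hbx n]
      have : 2 * (c * (n + 1)) + (2 * h : ℝ) = 2 * (x n + h) := by
        simp only [hxdef]; ring
      rw [this]
      simp only [hxdef]
      ring
    have key : ∀ l ∈ Finset.range (h + 1),
        ((t n : ℝ) : ℂ) ^ (l : ℕ) / ((t n : ℝ) : ℂ) ^ s =
        1 / ((t n : ℝ) : ℂ) ^ (s - (l : ℂ)) := by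
      intro l _
      rw [Complex.cpow_sub _ _ ht0, Complex.cpow_natCast]
      field_simp
    calc (((2 * (c * (n + 1)) + (2 * h : ℝ)) / (Nat.factorial (2 * h) : ℝ) *
            ∏ i ∈ Finset.Icc 1 (2 * h - 1), (c * (n + 1) + (i : ℝ)) : ℝ) : ℂ) /
          ((c * (n + 1) * (c * (n + 1) + (2 * h : ℝ)) : ℝ) : ℂ) ^ s
        = (2 / (Nat.factorial (2 * h) : ℂ)) *
            ∑ l ∈ Finset.range (h + 1), (b l : ℂ) *
              (((t n : ℝ) : ℂ) ^ (l : ℕ) / ((t n : ℝ) : ℂ) ^ s) := by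
          have hT : ((t n : ℝ) : ℂ) = ↑c * (↑n + 1) * (↑c * (↑n + 1) + 2 * ↑h) := by
            simp only [htdef, hxdef]
            push_cast
            ring
          rw [hnum]
          push_cast
          rw [← hT, mul_div_assoc, Finset.sum_div]
          congr 1
          apply Finset.sum_congr rfl
          intro l _
          rw [mul_div_assoc]
      _ = ∑ l ∈ Finset.range (h + 1), (2 / (Nat.factorial (2 * h) : ℂ) * (b l : ℂ)) *
            (1 / ((c * (n + 1) * (c * (n + 1) + (2 * h : ℝ)) : ℝ) : ℂ) ^ (s - l)) := by
          rw [Finset.mul_sum]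
          apply Finset.sum_congr rfl
          intro l hl
          rw [← key l hl]
          simp only [htdef, hxdef]
          ring
  -- summability of main series
  have hmain : Summable (fun n : ℕ =>
      (((2 * (c * (n + 1)) + (2 * h : ℝ)) / (Nat.factorial (2 * h) : ℝ) *
            ∏ i ∈ Finset.Icc 1 (2 * h - 1), (c * (n + 1) + (i : ℝ)) : ℝ) : ℂ) /
          ((c * (n + 1) * (c * (n + 1) + (2 * h : ℝ)) : ℝ) : ℂ) ^ s) := by
    apply Summable.congr _ (fun n => (hterm n).symm)
    apply summable_sum
    intro l hl
    exact ((hsuml l (Nat.lt_succ_iff.mp (Finset.mem_range.mp hl))).mul_left _)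
  refine ⟨hmain, hsuml, ?_⟩
  rw [tsum_congr hterm]
  rw [Summable.tsum_finsetSum (fun l hl =>
    ((hsuml l (Nat.lt_succ_iff.mp (Finset.mem_range.mp hl))).mul_left _))]
  rw [Finset.mul_sum]
  apply Finset.sum_congr rfl
  intro l hl
  rw [tsum_mul_left]
  ring
end

section
/- Let b, c > 0 be real numbers and let s be a complex number with 1/2 < Re(s) < 1. Then ∫_0^∞ (cx)^{−s}(cx+b)^{−s} dx = (1/(c·√π)) · (b/2)^{1−2s} · Γ(1−s)·Γ(s+1/2) / (2s−1), where Γ is the Gamma function and all complex powers of positive reals are principal powers. -/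
open MeasureTheory Set

lemma div_cpow_aux {p q : ℝ} (hp : 0 ≤ p) (hq : 0 < q) (w : ℂ) :
    ((p / q : ℝ) : ℂ) ^ w = ((p : ℝ) : ℂ) ^ w * ((q : ℝ) : ℂ) ^ (-w) := by
  rw [div_eq_mul_inv, Complex.ofReal_mul,
    Complex.mul_cpow_ofReal_nonneg hp (inv_nonneg.mpr hq.le), Complex.ofReal_inv,
    Complex.inv_cpow _ _ (by rw [Complex.arg_ofReal_of_nonneg hq.le]; positivity),
    ← Complex.cpow_neg]

/-- Closed form for the full-line integral used in the proof of Lemma 5. -/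
theorem integral_cpow_mul_cpow (b c : ℝ) (hb : 0 < b) (hc : 0 < c) (s : ℂ)
    (hs1 : 1 / 2 < s.re) (hs2 : s.re < 1) :
    (∫ x in Ioi (0 : ℝ), ((c * x : ℝ) : ℂ) ^ (-s) * ((c * x + b : ℝ) : ℂ) ^ (-s)) =
      ((1 / (c * Real.sqrt Real.pi) : ℝ) : ℂ) * ((b / 2 : ℝ) : ℂ) ^ (1 - 2 * s) *
        Complex.Gamma (1 - s) * Complex.Gamma (s + 1 / 2) / (2 * s - 1) := by
  set f : ℝ → ℝ := fun x => c * x / (c * x + b) with hf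
  set f' : ℝ → ℝ := fun x => c * b / (c * x + b) ^ 2 with hf'
  have hden : ∀ x : ℝ, x ∈ Ioi (0:ℝ) → 0 < c * x + b := fun x hx => by
    have : 0 < x := hx; positivity
  -- derivative
  have hderiv : ∀ x ∈ Ioi (0:ℝ), HasDerivWithinAt f (f' x) (Ioi (0:ℝ)) x := by
    intro x hx
    have h1 : HasDerivAt (fun x : ℝ => c * x) c x := by
      simpa using (hasDerivAt_id x).const_mul c
    have h2 : HasDerivAt (fun x : ℝ => c * x + b) c x := h1.add_const b
    have := h1.div h2 (hden x hx).ne'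
    refine this.hasDerivWithinAt.congr_deriv ?_
    show _ = c * b / (c * x + b) ^ 2
    ring
  -- injectivity
  have hinj : InjOn f (Ioi (0:ℝ)) := by
    intro x hx y hy hxy
    have hx' := hden x hx; have hy' := hden y hy
    rw [hf, div_eq_div_iff hx'.ne' hy'.ne'] at hxy
    have : c * x * b = c * y * b := by ring_nf at hxy ⊢; linarith [hxy]
    exact mul_left_cancel₀ (by positivity : (c:ℝ) ≠ 0) (mul_right_cancel₀ hb.ne' this)
  -- image
  have himg : f '' Ioi (0:ℝ) = Ioo (0:ℝ) 1 := by
    ext t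
    constructor
    · rintro ⟨x, hx, rfl⟩
      have hx' : 0 < x := hx
      have hd := hden x hx
      exact ⟨div_pos (by positivity) hd, by rw [div_lt_one hd]; linarith⟩
    · rintro ⟨ht0, ht1⟩
      refine ⟨b * t / (c * (1 - t)), ?_, ?_⟩
      · have : 0 < 1 - t := by linarith
        exact mem_Ioi.mpr (by positivity)
      · have h1 : (0:ℝ) < 1 - t := by linarith
        rw [hf]; field_simp; ring
  -- change of variables
  have hcov := integral_image_eq_integral_abs_deriv_smul measurableSet_Ioi hderiv hinj
    (fun t : ℝ => ((t:ℝ):ℂ) ^ ((1-s) - 1) * (1 - ((t:ℝ):ℂ)) ^ ((2*s-1) - 1))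
  rw [himg] at hcov
  -- pointwise simplification of the transformed integrand
  have hpt : ∀ x ∈ Ioi (0:ℝ),
      |f' x| • (((f x : ℝ):ℂ) ^ ((1-s) - 1) * (1 - ((f x : ℝ):ℂ)) ^ ((2*s-1) - 1)) =
      ((c:ℂ) * ((b:ℝ):ℂ) ^ (2*s-1)) *
        (((c * x : ℝ) : ℂ) ^ (-s) * ((c * x + b : ℝ) : ℂ) ^ (-s)) := by
    intro x hx
    have hx' : 0 < x := hx
    have hd := hden x hx
    have hA : (0:ℝ) < c * x := by positivity
    have hBne : ((c * x + b : ℝ) : ℂ) ≠ 0 := Complex.ofReal_ne_zero.mpr hd.ne'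
    have hbne : ((b : ℝ) : ℂ) ≠ 0 := Complex.ofReal_ne_zero.mpr hb.ne'
    have habs : |f' x| = f' x := abs_of_pos (by rw [hf']; positivity)
    have hr : 1 - f x = b / (c * x + b) := by rw [hf]; field_simp; ring
    have h1m : (1:ℂ) - ((f x : ℝ):ℂ) = ((b / (c * x + b) : ℝ) : ℂ) := by
      rw [← Complex.ofReal_one, ← Complex.ofReal_sub, hr]
    rw [habs, Complex.real_smul, h1m, hf, hf']
    rw [show ((1:ℂ)-s) - 1 = -s by ring, show (2*s-(1:ℂ)) - 1 = 2*s-2 by ring]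
    rw [div_cpow_aux hA.le hd (-s), div_cpow_aux hb.le hd (2*s-2), neg_neg,
      show -(2*s-(2:ℂ)) = 2 - 2*s by ring,
      Complex.ofReal_div, Complex.ofReal_mul, Complex.ofReal_pow]
    set A := ((c * x : ℝ) : ℂ)
    set B := ((c * x + b : ℝ) : ℂ)
    have hB2 : B ^ (2:ℕ) ≠ 0 := pow_ne_zero _ hBne
    have e1 : B ^ s * B ^ (2 - 2*s) = (B:ℂ)^(2:ℕ) * B ^ (-s) := by
      rw [← Complex.cpow_natCast B 2, ← Complex.cpow_add _ _ hBne,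
        ← Complex.cpow_add _ _ hBne]
      congr 1; push_cast; ring
    have e2 : ((b:ℝ):ℂ) * ((b:ℝ):ℂ) ^ (2*s-2) = ((b:ℝ):ℂ) ^ (2*s-1) := by
      nth_rewrite 1 [← Complex.cpow_one ((b:ℝ):ℂ)]
      rw [← Complex.cpow_add _ _ hbne]
      ring_nf
    calc (c:ℂ) * ↑b / B^(2:ℕ) * (A ^ (-s) * B ^ s * (↑b ^ (2*s-2) * B ^ (2-2*s)))
        = (c:ℂ) * (↑b * ↑b^(2*s-2)) * (A^(-s) * (B ^ s * B ^ (2-2*s))) / B^(2:ℕ) := by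
          ring
      _ = (c:ℂ) * (↑b * ↑b^(2*s-2)) * (A^(-s) * (B^(2:ℕ) * B^(-s))) / B^(2:ℕ) := by
          rw [e1]
      _ = (c:ℂ) * (↑b * ↑b^(2*s-2)) * (A^(-s) * B^(-s)) * (B^(2:ℕ) / B^(2:ℕ)) := by
          ring
      _ = (c:ℂ) * ↑b^(2*s-1) * (A^(-s) * B^(-s)) := by
          rw [e2, div_self hB2, mul_one]
  -- assemble
  have hbne : ((b : ℝ) : ℂ) ≠ 0 := Complex.ofReal_ne_zero.mpr hb.ne'
  have hcne : ((c : ℝ) : ℂ) ≠ 0 := Complex.ofReal_ne_zero.mpr hc.ne'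
  have hbpow : ((b:ℝ):ℂ) ^ (2*s-1) ≠ 0 := by
    intro h
    exact hbne (Complex.cpow_eq_zero_iff _ _ |>.mp h).1
  have h2s1 : (2*s - 1 : ℂ) ≠ 0 := by
    intro h
    have := congrArg Complex.re h
    simp [Complex.sub_re, Complex.mul_re] at this
    linarith
  have hGs : Complex.Gamma s ≠ 0 := Complex.Gamma_ne_zero_of_re_pos (by linarith)
  have hsqrt : ((Real.sqrt Real.pi : ℝ) : ℂ) ≠ 0 :=
    Complex.ofReal_ne_zero.mpr (Real.sqrt_ne_zero'.mpr Real.pi_pos)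
  -- change of variables conclusion
  have hcov2 : Complex.betaIntegral (1-s) (2*s-1) =
      ((c:ℂ) * ((b:ℝ):ℂ) ^ (2*s-1)) *
        ∫ x in Ioi (0:ℝ), ((c * x : ℝ) : ℂ) ^ (-s) * ((c * x + b : ℝ) : ℂ) ^ (-s) := by
    rw [Complex.betaIntegral, intervalIntegral.integral_of_le zero_le_one,
      integral_Ioc_eq_integral_Ioo, hcov, setIntegral_congr_fun measurableSet_Ioi hpt,
      integral_const_mul]
  -- Gamma-beta relation
  have hGb : Complex.Gamma (1-s) * Complex.Gamma (2*s-1) =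
      Complex.Gamma s * Complex.betaIntegral (1-s) (2*s-1) := by
    have h1 : 0 < (1-s).re := by simp [Complex.sub_re]; linarith
    have h2 : 0 < (2*s-1).re := by
      simp [Complex.sub_re, Complex.mul_re]; linarith
    have := Complex.Gamma_mul_Gamma_eq_betaIntegral h1 h2
    rwa [show (1-s) + (2*s-1) = s by ring] at this
  -- duplication formula
  have hdup := Complex.Gamma_mul_Gamma_add_half (s - 1/2)
  rw [show s - 1/2 + 1/2 = s by ring, show 2*(s - 1/2) = 2*s - 1 by ring,
    show 1 - (2*s - 1) = 2 - 2*s by ring] at hdup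
  have hG3 : Complex.Gamma (s + 1/2) = (s - 1/2) * Complex.Gamma (s - 1/2) := by
    rw [show s + 1/2 = (s - 1/2) + 1 by ring]
    exact Complex.Gamma_add_one _ (by
      intro h
      have := congrArg Complex.re h
      simp [Complex.sub_re] at this
      norm_num at this
      linarith)
  -- solve for the integral
  have hI : (∫ x in Ioi (0:ℝ), ((c * x : ℝ) : ℂ) ^ (-s) * ((c * x + b : ℝ) : ℂ) ^ (-s)) =
      Complex.Gamma (1-s) * Complex.Gamma (2*s-1) / (Complex.Gamma s * ((c:ℂ) * ((b:ℝ):ℂ) ^ (2*s-1))) := by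
    rw [hGb, hcov2]
    rw [mul_div_mul_left _ _ hGs, mul_div_cancel_left₀ _ (mul_ne_zero hcne hbpow)]
  have hGh : Complex.Gamma (s - 1/2) =
      Complex.Gamma (2*s-1) * 2 ^ (2 - 2*s) * ((Real.sqrt Real.pi : ℝ) : ℂ) / Complex.Gamma s := by
    rw [eq_div_iff hGs]; exact hdup
  have hbb : ((b:ℝ):ℂ) ^ (1 - 2*s) * ((b:ℝ):ℂ) ^ (2*s-1) = 1 := by
    rw [← Complex.cpow_add _ _ hbne, show (1 - 2*s) + (2*s-1) = 0 by ring, Complex.cpow_zero]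
  have h22 : ((2:ℂ)) ^ (2*s-1) * ((2:ℂ)) ^ (2 - 2*s) = 2 := by
    rw [← Complex.cpow_add _ _ (by norm_num : (2:ℂ) ≠ 0),
      show (2*s-1) + (2 - 2*s) = 1 by ring, Complex.cpow_one]
  rw [hI, div_cpow_aux hb.le two_pos (1 - 2*s), hG3, hGh,
    show -(1 - 2*s) = 2*s - 1 by ring]
  simp only [Complex.ofReal_ofNat, Complex.ofReal_div, Complex.ofReal_one, Complex.ofReal_mul]
  have h2ne : (2:ℂ) ^ (2*s-1) ≠ 0 := by
    intro h; exact two_ne_zero (Complex.cpow_eq_zero_iff _ _ |>.mp h).1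
  rw [eq_inv_of_mul_eq_one_left hbb, show (2:ℂ) ^ (2-2*s) = 2 / 2 ^ (2*s-1) from eq_div_of_mul_eq h2ne (by rw [mul_comm]; exact h22)]
  generalize ((b:ℝ):ℂ) ^ (2*s-1) = B at hbpow ⊢
  generalize (2:ℂ) ^ (2*s-1) = P at h2ne ⊢
  rw [show s - 1/2 = (2*s-1)/2 by ring]
  generalize (2:ℂ)*s-1 = S at h2s1 ⊢
  field_simp
end

section
/- Let b, c > 0 be real numbers and let s be a complex number with Re(s) > 1/2. Then ∫_1^∞ (cx)^{−s}(cx+b)^{−s} dx = c^{−s}(c+b)^{−s}/(2s−1) · Σ_{k=0}^∞ [ (s)_k / (2s)_k ] · (b/(c+b))^k, where (w)_k = w(w+1)···(w+k−1) denotes the Pochhammer symbol (rising factorial, (w)_0 = 1), and the series on the right converges absolutely. -/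
open MeasureTheory Set Filter

open MeasureTheory Set

namespace TailHyp

lemma asc_eval_prod (u : ℂ) (k : ℕ) :
    (ascPochhammer ℂ k).eval u = ∏ j ∈ Finset.range k, (u + j) := by
  induction k with
  | zero => simp
  | succ n ih => rw [ascPochhammer_succ_eval, ih, Finset.prod_range_succ]

lemma re_add_nat_pos {u : ℂ} (hu : 0 < u.re) (k : ℕ) : 0 < (u + k).re := by
  rw [Complex.add_re, Complex.natCast_re]
  exact add_pos_of_pos_of_nonneg hu (Nat.cast_nonneg k)

lemma add_nat_ne_zero {u : ℂ} (hu : 0 < u.re) (k : ℕ) : u + k ≠ 0 := by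
  intro h
  have := re_add_nat_pos hu k
  rw [h] at this; simp at this

lemma asc_ne_zero {u : ℂ} (hu : 0 < u.re) (k : ℕ) : (ascPochhammer ℂ k).eval u ≠ 0 := by
  rw [asc_eval_prod]
  refine Finset.prod_ne_zero_iff.mpr fun j _ => ?_
  exact add_nat_ne_zero hu j

lemma Gamma_add_nat {u : ℂ} (hu : 0 < u.re) (k : ℕ) :
    Complex.Gamma (u + k) = (ascPochhammer ℂ k).eval u * Complex.Gamma u := by
  induction k with
  | zero => simp
  | succ n ih =>
      have h1 : u + ((n + 1 : ℕ) : ℂ) = (u + n) + 1 := by push_cast; ring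
      rw [h1, Complex.Gamma_add_one _ (add_nat_ne_zero hu n), ih, ascPochhammer_succ_eval]
      ring

lemma summable_norm_ratio (u v : ℂ) (hv : ∀ k : ℕ, (k : ℝ) ≤ ‖v + k‖)
    {w : ℝ} (hw0 : 0 ≤ w) (hw1 : w < 1) (f : ℕ → ℂ)
    (hrec : ∀ k : ℕ, f (k + 1) = (u + k) / (v + k) * w * f k) :
    Summable fun k => ‖f k‖ := by
  set l : ℝ := (1 + w) / 2 with hl
  have hwl : w < l := by rw [hl]; linarith
  have hl1 : l < 1 := by rw [hl]; linarith
  apply summable_of_ratio_norm_eventually_le (f := fun k => ‖f k‖) hl1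
  rw [Filter.eventually_atTop]
  refine ⟨⌈‖u‖ * w / (l - w)⌉₊ + 1, fun k hk => ?_⟩
  have hk1 : (1 : ℕ) ≤ k := le_trans (Nat.le_add_left 1 _) hk
  have hkpos : (0 : ℝ) < k := by exact_mod_cast hk1
  have hvk0 : (0 : ℝ) < ‖v + k‖ := lt_of_lt_of_le hkpos (hv k)
  have h1 : ‖u + (k : ℂ)‖ ≤ ‖u‖ + k := by
    calc ‖u + (k : ℂ)‖ ≤ ‖u‖ + ‖((k : ℕ) : ℂ)‖ := norm_add_le _ _
    _ = ‖u‖ + k := by simp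
  have h2 : ‖(u + k) / (v + k)‖ ≤ (‖u‖ + k) / k := by
    rw [norm_div]
    exact div_le_div₀ (by positivity) h1 hkpos (hv k)
  have hx : ‖u‖ * w / (l - w) ≤ (k : ℝ) := by
    have hle := Nat.le_ceil (‖u‖ * w / (l - w))
    have h3 : ((⌈‖u‖ * w / (l - w)⌉₊ + 1 : ℕ) : ℝ) ≤ k := by exact_mod_cast hk
    push_cast at h3; linarith
  have hx2 : ‖u‖ * w ≤ (l - w) * k := by
    rw [div_le_iff₀ (by linarith : (0 : ℝ) < l - w)] at hx
    linarith [hx]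
  have hfin : (‖u‖ + k) / k * w ≤ l := by
    rw [div_mul_eq_mul_div, div_le_iff₀ hkpos]
    nlinarith
  have hb : ‖f (k + 1)‖ ≤ (‖u‖ + k) / k * w * ‖f k‖ := by
    rw [hrec k]
    calc ‖(u + k) / (v + k) * w * f k‖ = ‖(u + k) / (v + k)‖ * w * ‖f k‖ := by
          rw [norm_mul, norm_mul, Complex.norm_real, Real.norm_of_nonneg hw0]
      _ ≤ (‖u‖ + k) / k * w * ‖f k‖ := by
          have := norm_nonneg (f k)
          gcongr
  have : ‖f (k + 1)‖ ≤ l * ‖f k‖ :=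
    le_trans hb (mul_le_mul_of_nonneg_right hfin (norm_nonneg _))
  simpa [Real.norm_of_nonneg (norm_nonneg _)] using this

-- NEW PART

lemma norm_one_add_nat (k : ℕ) : (k : ℝ) ≤ ‖(1 : ℂ) + k‖ := by
  have h : ((1 : ℂ) + k) = (((1 + k : ℕ) : ℝ) : ℂ) := by push_cast; ring
  rw [h, Complex.norm_real, Real.norm_of_nonneg (by positivity)]
  exact_mod_cast Nat.le_succ k |>.trans (by push_cast; linarith)

lemma summable_binom (s : ℂ) {w : ℝ} (hw0 : 0 ≤ w) (hw1 : w < 1) :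
    Summable fun k : ℕ =>
      ‖(ascPochhammer ℂ k).eval s / (k.factorial : ℂ) * ((w : ℝ) : ℂ) ^ k‖ := by
  apply summable_norm_ratio s 1 norm_one_add_nat hw0 hw1
  intro k
  have hfac : ((k.factorial : ℕ) : ℂ) ≠ 0 := by exact_mod_cast k.factorial_ne_zero
  have hk1 : ((k : ℂ) + 1) ≠ 0 := Nat.cast_add_one_ne_zero k
  have hk1' : ((1 : ℂ) + k) ≠ 0 := by rwa [add_comm]
  rw [ascPochhammer_succ_eval, Nat.factorial_succ, pow_succ]
  push_cast
  field_simp [hfac, hk1, hk1']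
  ring

lemma hasSum_binomial (s : ℂ) (hs : 0 < s.re) {w : ℝ} (hw0 : 0 ≤ w) (hw1 : w < 1) :
    HasSum (fun k : ℕ => (ascPochhammer ℂ k).eval s / (k.factorial : ℂ) * ((w : ℝ) : ℂ) ^ k)
      (((1 - w : ℝ) : ℂ) ^ (-s)) := by
  have hsum : Summable fun k : ℕ =>
      (ascPochhammer ℂ k).eval s / (k.factorial : ℂ) * ((w : ℝ) : ℂ) ^ k :=
    (summable_binom s hw0 hw1).of_norm
  rw [hsum.hasSum_iff]
  have hΓ : Complex.Gamma s ≠ 0 := by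
    apply Complex.Gamma_ne_zero
    intro m h
    rw [h] at hs
    simp only [Complex.neg_re, Complex.natCast_re, neg_pos] at hs
    exact absurd hs (Nat.cast_nonneg m).not_gt
  apply mul_right_cancel₀ hΓ
  rw [← tsum_mul_right]
  set F : ℕ → ℝ → ℂ := fun k t =>
    ((w : ℝ) : ℂ) ^ k / (k.factorial : ℂ) * ((t : ℂ) ^ (s + k - 1) * Complex.exp (-(t : ℂ)))
    with hF
  have hIk : ∀ k : ℕ, (∫ t in Ioi (0 : ℝ), (t : ℂ) ^ (s + k - 1) * Complex.exp (-(t : ℂ)))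
      = Complex.Gamma (s + k) := by
    intro k
    have h := Complex.integral_cpow_mul_exp_neg_mul_Ioi (re_add_nat_pos hs k) one_pos
    simpa using h
  have hFi : ∀ k : ℕ, Integrable (F k) (volume.restrict (Ioi (0 : ℝ))) := by
    intro k
    apply Integrable.const_mul
    have heq : (fun x : ℝ => ((Real.exp (-x) : ℝ) : ℂ) * (x : ℂ) ^ (s + k - 1))
        = fun x : ℝ => (x : ℂ) ^ (s + k - 1) * Complex.exp (-(x : ℂ)) := by
      funext x
      rw [mul_comm]
      congr 1
      rw [← Complex.ofReal_neg, Complex.ofReal_exp]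
    exact heq ▸ (Complex.GammaIntegral_convergent (re_add_nat_pos hs k))
  have hσk : ∀ k : ℕ, (0 : ℝ) < s.re + k :=
    fun k => add_pos_of_pos_of_nonneg hs (Nat.cast_nonneg k)
  have hnorm : ∀ k : ℕ, (∫ t in Ioi (0 : ℝ), ‖F k t‖)
      = w ^ k / (k.factorial : ℝ) * Real.Gamma (s.re + k) := by
    intro k
    have h1 : ∀ t ∈ Ioi (0 : ℝ), ‖F k t‖
        = w ^ k / (k.factorial : ℝ) * (Real.exp (-t) * t ^ (s.re + k - 1)) := by
      intro t ht
      rw [mem_Ioi] at ht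
      rw [hF]
      simp only [norm_mul, norm_div, norm_pow, Complex.norm_exp,
        Complex.norm_real, Complex.norm_natCast, Real.norm_of_nonneg hw0]
      rw [Complex.norm_cpow_eq_rpow_re_of_pos ht]
      have hre : (s + (k : ℂ) - 1).re = s.re + k - 1 := by simp
      have hre2 : (-(t : ℂ)).re = -t := by simp
      rw [hre, hre2]
      ring
    rw [setIntegral_congr_fun measurableSet_Ioi h1, MeasureTheory.integral_const_mul,
      ← Real.Gamma_eq_integral (hσk k)]
  have hsum2 : Summable fun k : ℕ => ∫ t in Ioi (0 : ℝ), ‖F k t‖ := by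
    have h := summable_norm_ratio ((s.re : ℝ) : ℂ) 1 norm_one_add_nat hw0 hw1
      (fun k => ((w ^ k / (k.factorial : ℝ) * Real.Gamma (s.re + k) : ℝ) : ℂ)) ?_
    · apply Summable.congr (h.congr ?_)
      · intro k; rw [hnorm k]
      · intro k
        rw [Complex.norm_real, Real.norm_of_nonneg]
        have := (Real.Gamma_pos_of_pos (hσk k)).le
        positivity
    · intro k
      have hG : Real.Gamma (s.re + ((k + 1 : ℕ) : ℝ)) = (s.re + k) * Real.Gamma (s.re + k) := by
        have he : s.re + ((k + 1 : ℕ) : ℝ) = (s.re + k) + 1 := by push_cast; ring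
        rw [he, Real.Gamma_add_one (hσk k).ne']
      have hk1 : ((k : ℂ) + 1) ≠ 0 := Nat.cast_add_one_ne_zero k
      have h1k : ((1 : ℂ) + (k : ℂ)) ≠ 0 := by rwa [add_comm]
      have hfac : ((k.factorial : ℕ) : ℂ) ≠ 0 := by exact_mod_cast k.factorial_ne_zero
      beta_reduce
      rw [hG]
      push_cast [Nat.factorial_succ, pow_succ]
      field_simp
      ring
  have hexp : ∀ x : ℂ, (∑' n : ℕ, x ^ n / (n.factorial : ℂ)) = Complex.exp x := by
    intro x
    rw [Complex.exp_eq_exp_ℂ, NormedSpace.exp_eq_tsum_div]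
  have h1w : (0 : ℝ) < 1 - w := by linarith
  calc (∑' k : ℕ, (ascPochhammer ℂ k).eval s / (k.factorial : ℂ) * ((w : ℝ) : ℂ) ^ k
        * Complex.Gamma s)
      = ∑' k : ℕ, ∫ t in Ioi (0 : ℝ), F k t := by
        apply tsum_congr
        intro k
        rw [hF]
        simp only
        rw [MeasureTheory.integral_const_mul, hIk k, Gamma_add_nat hs k]
        ring
    _ = ∫ t in Ioi (0 : ℝ), ∑' k : ℕ, F k t :=
        integral_tsum_of_summable_integral_norm hFi hsum2
    _ = ∫ t in Ioi (0 : ℝ), (t : ℂ) ^ (s - 1) * Complex.exp (-((((1 - w : ℝ)) : ℂ) * t)) := by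
        apply setIntegral_congr_fun measurableSet_Ioi
        intro t ht
        rw [mem_Ioi] at ht
        have ht0 : (t : ℂ) ≠ 0 := Complex.ofReal_ne_zero.mpr ht.ne'
        show (∑' k : ℕ, F k t) = (t : ℂ) ^ (s - 1) * Complex.exp (-((((1 - w : ℝ)) : ℂ) * t))
        have hterm : ∀ k : ℕ, F k t
            = (t : ℂ) ^ (s - 1) * Complex.exp (-(t : ℂ))
              * (((w : ℂ) * (t : ℂ)) ^ k / (k.factorial : ℂ)) := by
          intro k
          rw [hF]
          simp only
          have he : s + (k : ℂ) - 1 = (s - 1) + (k : ℕ) := by push_cast; ring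
          rw [he, Complex.cpow_add _ _ ht0, Complex.cpow_natCast, mul_pow]
          ring
        rw [tsum_congr hterm, tsum_mul_left, hexp, mul_assoc, ← Complex.exp_add]
        congr 2
        push_cast
        ring
    _ = (1 / ((1 - w : ℝ) : ℂ)) ^ s * Complex.Gamma s :=
        Complex.integral_cpow_mul_exp_neg_mul_Ioi hs h1w
    _ = ((1 - w : ℝ) : ℂ) ^ (-s) * Complex.Gamma s := by
        congr 1
        rw [one_div, Complex.inv_cpow _ _ (by
          rw [Complex.arg_ofReal_of_nonneg h1w.le]
          exact Real.pi_ne_zero.symm), ← Complex.cpow_neg]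

end TailHyp

open TailHyp

/-- Hypergeometric representation of the tail integral used in Lemma 5:
`∫_1^∞ (cx)^{-s}(cx+b)^{-s} dx = c^{-s}(c+b)^{-s}(2s-1)^{-1} F(s,1;2s;b/(c+b))`. -/
theorem integral_tail_hypergeometric (b c : ℝ) (hb : 0 < b) (hc : 0 < c) (s : ℂ)
    (hs : 1 / 2 < s.re) :
    Summable (fun k : ℕ =>
        ‖(ascPochhammer ℂ k).eval s / (ascPochhammer ℂ k).eval (2 * s) *
          ((b / (c + b) : ℝ) : ℂ) ^ k‖) ∧
      (∫ x in Ioi (1 : ℝ), ((c * x : ℝ) : ℂ) ^ (-s) * ((c * x + b : ℝ) : ℂ) ^ (-s)) =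
        (c : ℂ) ^ (-s) * ((c + b : ℝ) : ℂ) ^ (-s) / (2 * s - 1) *
          ∑' k : ℕ,
            (ascPochhammer ℂ k).eval s / (ascPochhammer ℂ k).eval (2 * s) *
              ((b / (c + b) : ℝ) : ℂ) ^ k := by
  have hs0 : 0 < s.re := by linarith
  have h2s0 : 0 < (2 * s).re := by
    have : (2 * s).re = 2 * s.re := by simp [Complex.mul_re]
    rw [this]; linarith
  have h2s : 0 < (2 * s - 1).re := by
    have : (2 * s - 1).re = 2 * s.re - 1 := by simp [Complex.mul_re]
    rw [this]; linarith
  have h2s1ne : (2 * s - 1) ≠ 0 := by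
    intro h; rw [h] at h2s; simp at h2s
  have hcb : 0 < c + b := by linarith
  have hz0 : 0 < b / (c + b) := div_pos hb hcb
  have hz1 : b / (c + b) < 1 := (div_lt_one hcb).mpr (by linarith)
  set z : ℝ := b / (c + b) with hzdef
  constructor
  · -- summability
    apply summable_norm_ratio s (2 * s) ?_ hz0.le hz1
    · intro k
      have hne1 : (ascPochhammer ℂ k).eval (2 * s) ≠ 0 := asc_ne_zero h2s0 k
      have hne2 : (2 * s + k) ≠ 0 := add_nat_ne_zero h2s0 k
      rw [ascPochhammer_succ_eval, ascPochhammer_succ_eval, pow_succ]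
      field_simp
    · intro k
      calc (k : ℝ) ≤ (2 * s + k).re := by
            rw [Complex.add_re, Complex.natCast_re]; linarith
        _ ≤ ‖2 * s + (k : ℂ)‖ := Complex.re_le_norm _
  · -- main identity
    set C0 : ℂ := (c : ℂ) ^ (-s) * ((c + b : ℝ) : ℂ) ^ (-s) with hC0
    set a : ℕ → ℂ := fun k =>
      (ascPochhammer ℂ k).eval s / (k.factorial : ℂ) * ((z : ℝ) : ℂ) ^ k with ha
    set G : ℕ → ℝ → ℂ := fun k x =>
      C0 * a k * ((x : ℂ) ^ (2 * s - 2) * ((1 - x : ℝ) : ℂ) ^ k) with hG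
    have himg : (Inv.inv '' Ioo (0 : ℝ) 1) = Ioi 1 := by
      rw [Set.image_inv_eq_inv, Set.inv_Ioo_0_left one_pos, inv_one]
    have hderiv : ∀ x ∈ Ioo (0 : ℝ) 1,
        HasDerivWithinAt Inv.inv (-(x ^ 2)⁻¹) (Ioo (0 : ℝ) 1) x :=
      fun x hx => (hasDerivAt_inv hx.1.ne').hasDerivWithinAt
    have hinj : InjOn Inv.inv (Ioo (0 : ℝ) 1) := fun p _ q _ h => inv_injective h
    rw [show (Ioi (1 : ℝ)) = Inv.inv '' Ioo (0 : ℝ) 1 from himg.symm,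
      integral_image_eq_integral_abs_deriv_smul measurableSet_Ioo hderiv hinj]
    have hfeq : ∀ k : ℕ,
        (fun x : ℝ => (x : ℂ) ^ (2 * s - 1 - 1) * (1 - (x : ℂ)) ^ ((k : ℂ) + 1 - 1))
          = fun x : ℝ => (x : ℂ) ^ (2 * s - 2) * ((1 - x : ℝ) : ℂ) ^ k := by
      intro k
      funext x
      rw [show 2 * s - 1 - 1 = 2 * s - 2 by ring, show (k : ℂ) + 1 - 1 = ((k : ℕ) : ℂ) by ring,
        Complex.cpow_natCast]
      push_cast
      ring
    calc (∫ x in Ioo (0 : ℝ) 1, |(-(x ^ 2)⁻¹)| •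
            (((c * x⁻¹ : ℝ) : ℂ) ^ (-s) * ((c * x⁻¹ + b : ℝ) : ℂ) ^ (-s)))
        = ∫ x in Ioo (0 : ℝ) 1,
            C0 * ((x : ℂ) ^ (2 * s - 2) * ((1 - z * (1 - x) : ℝ) : ℂ) ^ (-s)) := by
          apply setIntegral_congr_fun measurableSet_Ioo
          intro x hx
          obtain ⟨hx0, hx1⟩ := hx
          have hxC : ((x : ℝ) : ℂ) ≠ 0 := Complex.ofReal_ne_zero.mpr hx0.ne'
          have harg : ((x : ℝ) : ℂ).arg ≠ Real.pi := by
            rw [Complex.arg_ofReal_of_nonneg hx0.le]; exact Real.pi_ne_zero.symm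
          have hxinv : ∀ y : ℝ, 0 ≤ y →
              ((y * x⁻¹ : ℝ) : ℂ) ^ (-s) = ((y : ℝ) : ℂ) ^ (-s) * ((x : ℝ) : ℂ) ^ s := by
            intro y hy
            rw [Complex.ofReal_mul, Complex.mul_cpow_ofReal_nonneg hy (inv_nonneg.mpr hx0.le), Complex.ofReal_inv,
              Complex.inv_cpow _ _ harg, ← Complex.cpow_neg, neg_neg]
          have h1x : 0 < 1 - z * (1 - x) := by nlinarith
          have ht2 : c * x⁻¹ + b = (c + b * x) * x⁻¹ := by field_simp
          have ht3 : c + b * x = (c + b) * (1 - z * (1 - x)) := by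
            rw [hzdef]; field_simp; ring
          have hT2 : ((c * x⁻¹ + b : ℝ) : ℂ) ^ (-s)
              = ((c + b : ℝ) : ℂ) ^ (-s) * ((1 - z * (1 - x) : ℝ) : ℂ) ^ (-s)
                * ((x : ℝ) : ℂ) ^ s := by
            rw [ht2, hxinv _ (by positivity), ht3, Complex.ofReal_mul,
              Complex.mul_cpow_ofReal_nonneg hcb.le h1x.le]
          have hx2 : (((x ^ 2)⁻¹ : ℝ) : ℂ) = ((x : ℝ) : ℂ) ^ (-2 : ℂ) := by
            push_cast
            rw [Complex.cpow_neg]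
            congr 1
            rw [show (2 : ℂ) = ((2 : ℕ) : ℂ) by norm_num, Complex.cpow_natCast]
          have hcomb : ((x : ℝ) : ℂ) ^ (-2 : ℂ) * (((x : ℝ) : ℂ) ^ s * ((x : ℝ) : ℂ) ^ s)
              = ((x : ℝ) : ℂ) ^ (2 * s - 2) := by
            rw [← Complex.cpow_add _ _ hxC, ← Complex.cpow_add _ _ hxC]
            congr 1; ring
          beta_reduce
          rw [abs_neg, abs_of_pos (by positivity : (0:ℝ) < (x ^ 2)⁻¹), Complex.real_smul,
            hxinv c hc.le, hT2, hx2, hC0]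
          rw [← hcomb]
          ring
      _ = ∫ x in Ioo (0 : ℝ) 1, ∑' k : ℕ, G k x := by
          apply setIntegral_congr_fun measurableSet_Ioo
          intro x hx
          obtain ⟨hx0, hx1⟩ := hx
          have hw0 : 0 ≤ z * (1 - x) := by nlinarith
          have hw1 : z * (1 - x) < 1 := by nlinarith
          have hbin := (hasSum_binomial s hs0 hw0 hw1).mul_left (C0 * ((x : ℂ) ^ (2 * s - 2)))
          beta_reduce
          rw [← mul_assoc, ← hbin.tsum_eq]
          apply tsum_congr
          intro k
          rw [hG, ha]
          simp only
          rw [show ((z * (1 - x) : ℝ) : ℂ) = (z : ℂ) * ((1 - x : ℝ) : ℂ) by push_cast; ring,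
            mul_pow]
          ring
      _ = ∑' k : ℕ, ∫ x in Ioo (0 : ℝ) 1, G k x := by
          have hGint : ∀ k : ℕ, Integrable (G k) (volume.restrict (Ioo (0 : ℝ) 1)) := by
            intro k
            have base := Complex.betaIntegral_convergent h2s
              (v := (k : ℂ) + 1) (by simp; positivity)
            rw [hfeq k, intervalIntegrable_iff_integrableOn_Ioc_of_le zero_le_one] at base
            exact (base.mono_set Ioo_subset_Ioc_self).const_mul _
          refine (integral_tsum_of_summable_integral_norm hGint ?_).symm
          have hre : (2 * s - 2).re = 2 * s.re - 2 := by simp [Complex.mul_re]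
          have hMint : IntegrableOn (fun x : ℝ => x ^ (2 * s.re - 2)) (Ioo (0 : ℝ) 1) := by
            have h := intervalIntegral.intervalIntegrable_rpow' (a := 0) (b := 1)
              (r := 2 * s.re - 2) (by linarith)
            rw [intervalIntegrable_iff_integrableOn_Ioc_of_le zero_le_one] at h
            exact h.mono_set Ioo_subset_Ioc_self
          set M : ℝ := ∫ x in Ioo (0 : ℝ) 1, x ^ (2 * s.re - 2) with hM
          have hbound : ∀ k : ℕ, (∫ x in Ioo (0 : ℝ) 1, ‖G k x‖) ≤ ‖C0 * a k‖ * M := by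
            intro k
            rw [hM, ← MeasureTheory.integral_const_mul]
            apply setIntegral_mono_on (hGint k).norm (hMint.const_mul _) measurableSet_Ioo
            intro x hx
            obtain ⟨hx0, hx1⟩ := hx
            have h1 : ‖((1 - x : ℝ) : ℂ) ^ k‖ ≤ 1 := by
              rw [norm_pow, Complex.norm_real, Real.norm_of_nonneg (by linarith)]
              exact pow_le_one₀ (by linarith) (by linarith)
            rw [hG]
            simp only
            calc ‖C0 * a k * ((x : ℂ) ^ (2 * s - 2) * ((1 - x : ℝ) : ℂ) ^ k)‖
                = ‖C0 * a k‖ * (x ^ (2 * s.re - 2) * ‖((1 - x : ℝ) : ℂ) ^ k‖) := by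
                  rw [norm_mul (C0 * a k), norm_mul ((x : ℂ) ^ (2 * s - 2)),
                    Complex.norm_cpow_eq_rpow_re_of_pos hx0, hre]
              _ ≤ ‖C0 * a k‖ * (x ^ (2 * s.re - 2) * 1) := by
                  have h2 : (0 : ℝ) ≤ x ^ (2 * s.re - 2) := Real.rpow_nonneg hx0.le _
                  gcongr
              _ = ‖C0 * a k‖ * x ^ (2 * s.re - 2) := by ring
          apply Summable.of_nonneg_of_le
            (fun k => integral_nonneg (fun x => norm_nonneg _)) hbound
          simp only [norm_mul]
          exact ((summable_binom s hz0.le hz1).mul_left ‖C0‖).mul_right M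
      _ = ∑' k : ℕ, C0 / (2 * s - 1) *
            ((ascPochhammer ℂ k).eval s / (ascPochhammer ℂ k).eval (2 * s)
              * ((z : ℝ) : ℂ) ^ k) := by
          apply tsum_congr
          intro k
          have hbeta : (∫ x in Ioo (0 : ℝ) 1, (x : ℂ) ^ (2 * s - 2) * ((1 - x : ℝ) : ℂ) ^ k)
              = Complex.betaIntegral (2 * s - 1) ((k : ℂ) + 1) := by
            rw [Complex.betaIntegral, intervalIntegral.integral_of_le zero_le_one,
              MeasureTheory.integral_Ioc_eq_integral_Ioo, hfeq k]
          have hval := Complex.betaIntegral_eval_nat_add_one_right h2s k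
          have hprod : (∏ j ∈ Finset.range (k + 1), (2 * s - 1 + (j : ℂ)))
              = (2 * s - 1) * (ascPochhammer ℂ k).eval (2 * s) := by
            rw [Finset.prod_range_succ', asc_eval_prod]
            rw [Finset.prod_congr rfl (fun i _ => show 2 * s - 1 + ((i + 1 : ℕ) : ℂ)
              = 2 * s + i by push_cast; ring)]
            simp [mul_comm]
          have hfac : ((k.factorial : ℕ) : ℂ) ≠ 0 := by exact_mod_cast k.factorial_ne_zero
          have hascne := asc_ne_zero h2s0 k
          rw [hG]
          simp only
          rw [MeasureTheory.integral_const_mul, hbeta, hval, hprod, ha]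
          simp only
          field_simp
      _ = C0 / (2 * s - 1) * ∑' k : ℕ,
            ((ascPochhammer ℂ k).eval s / (ascPochhammer ℂ k).eval (2 * s)
              * ((z : ℝ) : ℂ) ^ k) := tsum_mul_left
end

section
/- Let b, c > 0 be real numbers. There exists a function Z : ℂ → ℂ, complex analytic on ℂ ∖ {1/2 − m : m a nonnegative integer}, such that Z(s) = z_odd(s,0,b,c) (the convergent series) for all s with Re(s) > 1/2, and for every nonnegative integer m, Z has a simple pole at s = 1/2 − m with lim_{s→1/2−m} (s−(1/2−m))·Z(s) = ((−1)^m / 2^{m+1}) · ((2m−1)!!/m!) · (1/c) · (b/2)^{2m}, where (2m−1)!! is the double factorial with the convention (−1)!! = 1. -/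
open Filter Topology

namespace ZoddAux

noncomputable def zA (s : ℂ) (m : ℕ) : ℂ :=
  (∏ j ∈ Finset.range m, (s + j)) / (Nat.factorial m : ℂ)

noncomputable def zP (R : ℝ) (m : ℕ) : ℝ :=
  ∏ j ∈ Finset.range m, ((R + j) / (j + 1))

lemma zP_nonneg {R : ℝ} (hR : 0 ≤ R) (m : ℕ) : 0 ≤ zP R m :=
  Finset.prod_nonneg fun j _ => div_nonneg (by positivity) (by positivity)

lemma zP_succ (R : ℝ) (m : ℕ) : zP R (m+1) = zP R m * ((R + m) / (m + 1)) :=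
  Finset.prod_range_succ _ _

lemma zA_zero (s : ℂ) : zA s 0 = 1 := by simp [zA]

lemma zA_succ (s : ℂ) (m : ℕ) : zA s (m+1) * ((m:ℂ)+1) = zA s m * (s + m) := by
  have hm : ((Nat.factorial m : ℕ) : ℂ) ≠ 0 := Nat.cast_ne_zero.mpr (Nat.factorial_ne_zero m)
  have hm1 : ((m:ℂ)+1) ≠ 0 := Nat.cast_add_one_ne_zero m
  simp only [zA, Finset.prod_range_succ, Nat.factorial_succ, Nat.cast_mul]
  push_cast
  field_simp

lemma zA_succ' (s : ℂ) (m : ℕ) : zA s (m+1) = zA s m * (s + m) / ((m:ℂ)+1) := by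
  rw [eq_div_iff (Nat.cast_add_one_ne_zero m)]
  exact zA_succ s m

lemma norm_zA_le {s : ℂ} {R : ℝ} (h : ‖s‖ ≤ R) (m : ℕ) : ‖zA s m‖ ≤ zP R m := by
  have hR : 0 ≤ R := le_trans (norm_nonneg s) h
  induction m with
  | zero => simp [zA_zero, zP]
  | succ m ih =>
    rw [zA_succ', zP_succ, norm_div, norm_mul, ← mul_div_assoc]
    have hnorm1 : ‖(m:ℂ)+1‖ = (m:ℝ)+1 := by
      have : ((m:ℂ)+1) = ((m+1 : ℕ) : ℂ) := by push_cast; ring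
      rw [this, Complex.norm_natCast]; push_cast; ring
    have h2 : ‖s + (m:ℂ)‖ ≤ R + m := by
      refine le_trans (norm_add_le _ _) ?_
      rw [Complex.norm_natCast]; linarith
    rw [hnorm1]
    have hden : (0:ℝ) < (m:ℝ)+1 := by positivity
    apply div_le_div_of_nonneg_right ?_ hden.le |>.trans_eq rfl
    exact mul_le_mul ih h2 (norm_nonneg _) (zP_nonneg hR m)

lemma summable_zP_mul {R ρ : ℝ} (hR : 0 ≤ R) (hρ0 : 0 ≤ ρ) (hρ : ρ < 1) (k : ℕ) :
    Summable (fun m : ℕ => ((m:ℝ)+1)^k * zP R m * ρ^m) := by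
  set f : ℕ → ℝ := fun m => ((m:ℝ)+1)^k * zP R m * ρ^m with hf
  have hnonneg : ∀ m, 0 ≤ f m := fun m =>
    mul_nonneg (mul_nonneg (by positivity) (zP_nonneg hR m)) (by positivity)
  apply summable_of_ratio_norm_eventually_le (r := (1+ρ)/2) (by linarith)
  have h0 : Tendsto (fun m : ℕ => 1/((m:ℝ)+1)) atTop (𝓝 0) :=
    tendsto_one_div_add_atTop_nhds_zero_nat
  have h1 : Tendsto (fun m : ℕ => ((m:ℝ)+2)/((m:ℝ)+1)) atTop (𝓝 1) := by
    have e : (fun m : ℕ => ((m:ℝ)+2)/((m:ℝ)+1)) = fun m : ℕ => 1 + 1/((m:ℝ)+1) := by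
      funext m
      have : ((m:ℝ)+1) ≠ 0 := by positivity
      field_simp
      ring
    rw [e]
    simpa using tendsto_const_nhds.add h0
  have h2 : Tendsto (fun m : ℕ => (R+(m:ℝ))/((m:ℝ)+1)) atTop (𝓝 1) := by
    have e : (fun m : ℕ => (R+(m:ℝ))/((m:ℝ)+1)) = fun m : ℕ => 1 + (R-1) * (1/((m:ℝ)+1)) := by
      funext m
      have : ((m:ℝ)+1) ≠ 0 := by positivity
      field_simp
      ring
    rw [e]
    simpa using tendsto_const_nhds.add (h0.const_mul (R-1))
  have hten : Tendsto (fun m : ℕ => (((m:ℝ)+2)/((m:ℝ)+1))^k * ((R+(m:ℝ))/((m:ℝ)+1)) * ρ)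
      atTop (𝓝 ρ) := by
    have := ((h1.pow k).mul h2).mul (tendsto_const_nhds (x := ρ))
    simpa using this
  have hev : ∀ᶠ m : ℕ in atTop,
      (((m:ℝ)+2)/((m:ℝ)+1))^k * ((R+(m:ℝ))/((m:ℝ)+1)) * ρ ≤ (1+ρ)/2 :=
    hten.eventually (eventually_le_nhds (by linarith))
  filter_upwards [hev] with m hm
  have hm1 : ((m:ℝ)+1) ≠ 0 := by positivity
  have key : f (m+1) = ((((m:ℝ)+2)/((m:ℝ)+1))^k * ((R+(m:ℝ))/((m:ℝ)+1)) * ρ) * f m := by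
    simp only [hf, zP_succ]
    push_cast
    rw [div_pow]
    field_simp
    ring
  rw [Real.norm_of_nonneg (hnonneg _), Real.norm_of_nonneg (hnonneg _), key]
  exact mul_le_mul_of_nonneg_right hm (hnonneg m)


lemma summable_zA_pow (s : ℂ) {x : ℝ} (hx : |x| < 1) :
    Summable (fun m : ℕ => zA s m * (x:ℂ)^m) := by
  apply Summable.of_norm
  have h := summable_zP_mul (R := ‖s‖) (ρ := |x|) (norm_nonneg s) (abs_nonneg x) hx 0
  simp only [pow_zero, one_mul] at h
  refine h.of_nonneg_of_le (fun m => norm_nonneg _) (fun m => ?_)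
  rw [norm_mul, norm_pow, Complex.norm_real]
  exact mul_le_mul_of_nonneg_right (norm_zA_le le_rfl m) (by positivity)

lemma summable_zA_deriv (s : ℂ) {r : ℝ} (hr : 0 < r) (hr1 : r < 1) :
    Summable (fun m : ℕ => ‖zA s m * ((m:ℂ) * ((r:ℝ):ℂ)^(m-1))‖) := by
  have h := summable_zP_mul (R := ‖s‖) (ρ := r) (norm_nonneg s) hr.le hr1 1
  refine ((h.mul_left (1/r)).of_nonneg_of_le (fun m => norm_nonneg _) (fun m => ?_))
  rw [norm_mul, norm_mul, norm_pow, Complex.norm_natCast, Complex.norm_real,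
    Real.norm_eq_abs, abs_of_pos hr]
  have hm2 : (m:ℝ) * r^(m-1) ≤ (1/r) * (((m:ℝ)+1) * r^m) := by
    rcases Nat.eq_zero_or_pos m with rfl | hm
    · simp
      positivity
    · have hpow : r^(m-1) * r = r^m := by
        rw [← pow_succ]
        congr 1
        omega
      rw [one_div, ← hpow]
      have h1 : (m:ℝ) ≤ (m:ℝ)+1 := by linarith
      have h2 : (0:ℝ) ≤ r^(m-1) := by positivity
      calc (m:ℝ) * r^(m-1) = r⁻¹ * ((m:ℝ) * (r^(m-1) * r)) := by field_simp
        _ ≤ r⁻¹ * (((m:ℝ)+1) * (r^(m-1) * r)) := by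
            have : (0:ℝ) ≤ r⁻¹ := by positivity
            have hq : (0:ℝ) ≤ r^(m-1) * r := by positivity
            gcongr
  calc ‖zA s m‖ * ((m:ℝ) * r^(m-1)) ≤ zP ‖s‖ m * ((1/r) * (((m:ℝ)+1) * r^m)) := by
        refine mul_le_mul (norm_zA_le le_rfl m) hm2 (by positivity) (zP_nonneg (norm_nonneg s) m)
    _ = 1/r * (((m:ℝ)+1)^1 * zP ‖s‖ m * r^m) := by ring

/-- The generalized binomial series: for `0 ≤ t < 1`,
`(1-t)^(-s) = ∑ₘ s(s+1)⋯(s+m-1)/m! · tᵐ`. -/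
lemma hasSum_binom (s : ℂ) {t : ℝ} (h0 : 0 ≤ t) (h1 : t < 1) :
    HasSum (fun m : ℕ => zA s m * (t:ℂ)^m) (((1 - t : ℝ) : ℂ)^(-s)) := by
  set r : ℝ := (1+t)/2 with hr
  have hr0 : 0 < r := by positivity
  have hr1 : r < 1 := by rw [hr]; linarith
  set T : Set ℝ := Set.Ioo (-r) r with hT
  have hTo : IsOpen T := isOpen_Ioo
  have hTc : Convex ℝ T := convex_Ioo _ _
  have htT : t ∈ T := ⟨by simp only [hr]; linarith, by simp only [hr]; linarith⟩
  have h0T : (0:ℝ) ∈ T := ⟨by linarith, by linarith⟩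
  set G : ℝ → ℂ := fun x => ∑' m : ℕ, zA s m * (x:ℂ)^m with hG
  set D : ℝ → ℂ := fun x => ∑' m : ℕ, zA s m * ((m:ℂ) * (x:ℂ)^(m-1)) with hD
  have hmemabs : ∀ x ∈ T, |x| < 1 := fun x hx => by
    rw [abs_lt]; exact ⟨by linarith [hx.1], by linarith [hx.2]⟩
  have hsumG : ∀ x ∈ T, Summable (fun m : ℕ => zA s m * (x:ℂ)^m) :=
    fun x hx => summable_zA_pow s (hmemabs x hx)
  have hderiv : ∀ (m : ℕ), ∀ x ∈ T, HasDerivAt (fun y : ℝ => zA s m * (y:ℂ)^m)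
      (zA s m * ((m:ℂ) * (x:ℂ)^(m-1))) x := by
    intro m x _
    exact (hasDerivAt_pow m ((x:ℝ):ℂ)).comp_ofReal.const_mul (zA s m)
  have hbound : ∀ (m : ℕ), ∀ x ∈ T, ‖zA s m * ((m:ℂ) * (x:ℂ)^(m-1))‖ ≤
      ‖zA s m * ((m:ℂ) * ((r:ℝ):ℂ)^(m-1))‖ := by
    intro m x hx
    simp only [norm_mul, norm_pow, Complex.norm_natCast, Complex.norm_real, Real.norm_eq_abs]
    rw [abs_of_pos hr0]
    have hxr : |x| ≤ r := le_of_lt (abs_lt.mpr ⟨hx.1, hx.2⟩)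
    have : |x|^(m-1) ≤ r^(m-1) := pow_le_pow_left₀ (abs_nonneg x) hxr _
    gcongr
  have husum : Summable (fun m : ℕ => ‖zA s m * ((m:ℂ) * ((r:ℝ):ℂ)^(m-1))‖) :=
    summable_zA_deriv s hr0 hr1
  have hGderiv : ∀ x ∈ T, HasDerivAt G (D x) x := fun x hx =>
    hasDerivAt_tsum_of_isPreconnected husum hTo hTc.isPreconnected
      hderiv hbound h0T (hsumG 0 h0T) hx
  have hsumD : ∀ x ∈ T, Summable (fun m : ℕ => zA s m * ((m:ℂ) * (x:ℂ)^(m-1))) := by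
    intro x hx
    apply Summable.of_norm
    exact husum.of_nonneg_of_le (fun m => norm_nonneg _) (fun m => hbound m x hx)
  -- key algebraic identity: D x = s * G x + x * D x on T
  have hkey : ∀ x ∈ T, D x = s * G x + (x:ℂ) * D x := by
    intro x hx
    have SD : HasSum (fun m : ℕ => zA s m * ((m:ℂ) * (x:ℂ)^(m-1))) (D x) := (hsumD x hx).hasSum
    have SG : HasSum (fun m : ℕ => zA s m * (x:ℂ)^m) (G x) := (hsumG x hx).hasSum
    have S1 : HasSum (fun m : ℕ => zA s m * ((m:ℂ) * (x:ℂ)^m)) ((x:ℂ) * D x) := by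
      have e : (fun m : ℕ => (x:ℂ) * (zA s m * ((m:ℂ) * (x:ℂ)^(m-1)))) =
          (fun m : ℕ => zA s m * ((m:ℂ) * (x:ℂ)^m)) := by
        funext m
        rcases Nat.eq_zero_or_pos m with rfl | hm
        · simp
        · have hp : (x:ℂ) * (x:ℂ)^(m-1) = (x:ℂ)^m := by
            rw [← pow_succ']
            congr 1
            omega
          calc (x:ℂ) * (zA s m * ((m:ℂ) * (x:ℂ)^(m-1)))
              = zA s m * ((m:ℂ) * ((x:ℂ) * (x:ℂ)^(m-1))) := by ring
            _ = zA s m * ((m:ℂ) * (x:ℂ)^m) := by rw [hp]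
      exact e ▸ (SD.mul_left (x:ℂ))
    have S2 : HasSum (fun m : ℕ => zA s m * ((s + (m:ℂ)) * (x:ℂ)^m)) (s * G x + (x:ℂ) * D x) := by
      have e : (fun m : ℕ => s * (zA s m * (x:ℂ)^m) + zA s m * ((m:ℂ) * (x:ℂ)^m)) =
          (fun m : ℕ => zA s m * ((s + (m:ℂ)) * (x:ℂ)^m)) := by
        funext m; ring
      exact e ▸ ((SG.mul_left s).add S1)
    have S3 : HasSum (fun m : ℕ => zA s m * ((m:ℂ) * (x:ℂ)^(m-1))) (s * G x + (x:ℂ) * D x) := by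
      have e : (fun m : ℕ => zA s (m+1) * (((m+1:ℕ):ℂ) * (x:ℂ)^((m+1)-1))) =
          (fun m : ℕ => zA s m * ((s + (m:ℂ)) * (x:ℂ)^m)) := by
        funext m
        have h1 : ((m+1:ℕ):ℂ) = (m:ℂ) + 1 := by push_cast; ring
        have h2 : (m+1) - 1 = m := rfl
        rw [h1, h2]
        calc zA s (m+1) * (((m:ℂ)+1) * (x:ℂ)^m) = (zA s (m+1) * ((m:ℂ)+1)) * (x:ℂ)^m := by ring
          _ = (zA s m * (s + (m:ℂ))) * (x:ℂ)^m := by rw [zA_succ]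
          _ = zA s m * ((s + (m:ℂ)) * (x:ℂ)^m) := by ring
      have h4 : HasSum (fun m : ℕ => zA s (m+1) * (((m+1:ℕ):ℂ) * (x:ℂ)^((m+1)-1)))
          (s * G x + (x:ℂ) * D x) := e ▸ S2
      have h5 := (hasSum_nat_add_iff (f := fun m : ℕ => zA s m * ((m:ℂ) * (x:ℂ)^(m-1)))
        (g := s * G x + (x:ℂ) * D x) 1).mp h4
      simpa using h5
    exact SD.unique S3
  -- the exponential comparison function
  set E : ℝ → ℂ := fun x => Complex.exp (s * ((Real.log (1-x) : ℝ) : ℂ)) with hE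
  have hEderiv : ∀ x ∈ T, HasDerivAt E (E x * (s * (((1-x)⁻¹ * (-1) : ℝ) : ℂ))) x := by
    intro x hx
    have hne : (1:ℝ) - x ≠ 0 := by
      have : x < 1 := lt_trans hx.2 hr1
      intro h; linarith [sub_eq_zero.mp h]
    have hsub : HasDerivAt (fun y : ℝ => 1 - y) (-1) x := by
      simpa using (hasDerivAt_id x).const_sub 1
    have hlog : HasDerivAt (fun y : ℝ => Real.log (1-y)) ((1-x)⁻¹ * (-1)) x :=
      (Real.hasDerivAt_log hne).comp x hsub
    exact (hlog.ofReal_comp.const_mul s).cexp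
  set h : ℝ → ℂ := fun x => G x * E x with hh
  have hhderiv : ∀ x ∈ T, HasDerivAt h 0 x := by
    intro x hx
    have hd := (hGderiv x hx).mul (hEderiv x hx)
    have hxlt : x < 1 := lt_trans hx.2 hr1
    have hne : (1:ℂ) - (x:ℂ) ≠ 0 := by
      have h' : ((1 - x : ℝ) : ℂ) ≠ 0 := Complex.ofReal_ne_zero.mpr (by linarith)
      simpa using h'
    set u : ℂ := (((1-x)⁻¹ : ℝ) : ℂ) with hudef
    have hu : ((1:ℂ) - (x:ℂ)) * u = 1 := by
      rw [hudef]
      push_cast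
      exact mul_inv_cancel₀ hne
    have hcast : (((1-x)⁻¹ * (-1) : ℝ) : ℂ) = u * (-1) := by
      rw [hudef]; push_cast; ring
    have hval : D x * E x + G x * (E x * (s * (((1-x)⁻¹ * (-1) : ℝ) : ℂ))) = 0 := by
      rw [hcast]
      have hk := hkey x hx
      linear_combination (E x * u) * hk + (-(E x * D x)) * hu
    rw [← hval]
    exact hd
  -- h is constant on T, so G t * E t = G 0 * E 0 = 1
  have hconst : h t = h 0 := by
    have hb := Convex.norm_image_sub_le_of_norm_hasDerivWithin_le
      (f := h) (f' := fun _ => (0:ℂ)) (s := T) (C := 0)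
      (fun x hx => (hhderiv x hx).hasDerivWithinAt) (fun x _ => by simp) hTc htT h0T
    have : ‖h 0 - h t‖ ≤ 0 := by simpa using hb
    have := norm_le_zero_iff.mp this
    exact (sub_eq_zero.mp this).symm
  have hG0 : G 0 = 1 := by
    have h1 : (∑' m : ℕ, zA s m * (((0:ℝ)):ℂ)^m) = zA s 0 * (((0:ℝ)):ℂ)^0 :=
      tsum_eq_single 0 (fun m hm => by simp [zero_pow hm])
    have h2 : G 0 = ∑' m : ℕ, zA s m * (((0:ℝ)):ℂ)^m := rfl
    rw [h2, h1, zA_zero]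
    simp
  have hE0 : E 0 = 1 := by simp [hE]
  have hprod : G t * E t = 1 := by
    have h2 : h t = 1 := by
      rw [hconst]
      show G 0 * E 0 = 1
      rw [hG0, hE0]; ring
    exact h2
  have hGt : G t = (((1 - t:ℝ)):ℂ)^(-s) := by
    have hEne : E t ≠ 0 := Complex.exp_ne_zero _
    have h2 : G t = (E t)⁻¹ := eq_inv_of_mul_eq_one_left ?_
    · rw [h2, hE]
      rw [← Complex.exp_neg]
      have hpos : (0:ℝ) < 1 - t := by linarith
      rw [Complex.cpow_def_of_ne_zero (by exact_mod_cast ne_of_gt hpos), ← Complex.ofReal_log hpos.le]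
      ring_nf
    · exact hprod
  have hfin : (∑' m : ℕ, zA s m * (t:ℂ)^m) = ((1 - t:ℝ):ℂ)^(-s) := hGt
  rw [← hfin]
  exact (hsumG t htT).hasSum


noncomputable def VV : ℝ := ∑' n : ℕ, 1/((n:ℝ)+1)^2

lemma summable_VV : Summable (fun n : ℕ => 1/((n:ℝ)+1)^2) := by
  have h : Summable (fun n : ℕ => 1/(n:ℝ)^2) := by
    rw [Real.summable_one_div_nat_pow]
    norm_num
  have := (summable_nat_add_iff 1).mpr h
  simpa using this

lemma VV_nonneg : 0 ≤ VV := tsum_nonneg (fun n => by positivity)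

noncomputable def zH (a : ℝ) (q : ℕ) (w : ℂ) : ℂ :=
  HurwitzZeta.hurwitzZeta a w - ∑ j ∈ Finset.range q, 1 / ((j:ℂ) + (a:ℂ))^w

lemma base_ne_zero {a : ℝ} (ha0 : 0 < a) (j : ℕ) : ((j:ℂ) + (a:ℂ)) ≠ 0 := by
  have : ((j + a : ℝ) : ℂ) ≠ 0 := Complex.ofReal_ne_zero.mpr (by positivity)
  simpa using this

lemma zH_finsum_diff {a : ℝ} (ha0 : 0 < a) (q : ℕ) (w : ℂ) :
    DifferentiableAt ℂ (fun w => ∑ j ∈ Finset.range q, 1 / ((j:ℂ) + (a:ℂ))^w) w := by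
  apply DifferentiableAt.fun_sum
  intro j _
  have hne : ((j:ℂ) + (a:ℂ)) ≠ 0 := base_ne_zero ha0 j
  have hcp : DifferentiableAt ℂ (fun w : ℂ => ((j:ℂ) + (a:ℂ)) ^ w) w :=
    differentiableAt_id.const_cpow (Or.inl hne)
  have hpe : ((j:ℂ) + (a:ℂ)) ^ w ≠ 0 := by
    intro hcon
    exact hne ((Complex.cpow_eq_zero_iff _ _).mp hcon).1
  exact (differentiableAt_const 1).div hcp hpe

lemma zH_diff {a : ℝ} (ha0 : 0 < a) (q : ℕ) {w : ℂ} (hw : w ≠ 1) :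
    DifferentiableAt ℂ (zH a q) w := by
  have h1 : DifferentiableAt ℂ (fun w => HurwitzZeta.hurwitzZeta a w -
      ∑ j ∈ Finset.range q, 1 / ((j:ℂ) + (a:ℂ))^w) w :=
    (HurwitzZeta.differentiableAt_hurwitzZeta _ hw).sub (zH_finsum_diff ha0 q w)
  exact h1

lemma zH_hasSum {d a : ℝ} {q : ℕ} (hqa : (q:ℝ) + a = 1 + d) (ha0 : 0 < a) (ha1 : a ≤ 1)
    {w : ℂ} (hw : 1 < w.re) :
    HasSum (fun n : ℕ => (((n:ℝ)+1+d : ℝ) : ℂ)^(-w)) (zH a q w) := by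
  have h := HurwitzZeta.hasSum_hurwitzZeta_of_one_lt_re ⟨ha0.le, ha1⟩ hw
  have h2 : HasSum (fun n : ℕ => 1/((((n+q:ℕ)):ℂ) + (a:ℂ))^w) (zH a q w) := by
    rw [zH, hasSum_nat_add_iff (f := fun n : ℕ => 1/((n:ℂ) + (a:ℂ))^w) q, sub_add_cancel]
    exact h
  have e : (fun n : ℕ => 1/((((n+q:ℕ)):ℂ) + (a:ℂ))^w) =
      (fun n : ℕ => (((n:ℝ)+1+d : ℝ) : ℂ)^(-w)) := by
    funext n
    have hr : ((n:ℝ) + q + a) = ((n:ℝ)+1+d) := by linarith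
    have hx : (((n+q:ℕ)):ℂ) + (a:ℂ) = (((n:ℝ)+1+d : ℝ) : ℂ) := by
      push_cast
      exact_mod_cast hr
    rw [hx, Complex.cpow_neg, one_div]
  exact e ▸ h2

lemma zH_residue {a : ℝ} (ha0 : 0 < a) (q : ℕ) :
    Filter.Tendsto (fun w => (w-1) * zH a q w) (nhdsWithin 1 {(1:ℂ)}ᶜ) (𝓝 1) := by
  have t1 := HurwitzZeta.hurwitzZeta_residue_one (a : UnitAddCircle)
  have hcont : ContinuousAt (fun w : ℂ => ∑ j ∈ Finset.range q, 1 / ((j:ℂ) + (a:ℂ))^w) 1 :=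
    (zH_finsum_diff ha0 q 1).continuousAt
  have t2 : Filter.Tendsto (fun w : ℂ => (w-1) * ∑ j ∈ Finset.range q, 1 / ((j:ℂ) + (a:ℂ))^w)
      (nhdsWithin 1 {(1:ℂ)}ᶜ) (𝓝 0) := by
    have := ((tendsto_id.sub_const 1).mul hcont.tendsto).mono_left
      (nhdsWithin_le_nhds (s := {(1:ℂ)}ᶜ))
    simpa using this
  have := t1.sub t2
  simp only [sub_zero] at this
  have e : (fun w => (w-1) * HurwitzZeta.hurwitzZeta (a : UnitAddCircle) w -
      (w-1) * ∑ j ∈ Finset.range q, 1 / ((j:ℂ) + (a:ℂ))^w) =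
      (fun w => (w-1) * zH a q w) := by
    funext w
    rw [zH]
    ring
  rwa [e] at this

lemma zH_bound {d a : ℝ} {q : ℕ} (hd : 0 < d) (hqa : (q:ℝ) + a = 1 + d) (ha0 : 0 < a)
    (ha1 : a ≤ 1) {w : ℂ} (hw : 2 ≤ w.re) :
    ‖zH a q w‖ ≤ (1+d)^((2:ℝ) - w.re) * VV := by
  have hw1 : 1 < w.re := by linarith
  have hs := zH_hasSum hqa ha0 ha1 hw1
  have hnorm : ∀ n : ℕ, ‖(((n:ℝ)+1+d : ℝ) : ℂ)^(-w)‖ = ((n:ℝ)+1+d) ^ (-(w.re)) := by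
    intro n
    have hpos : (0:ℝ) < (n:ℝ)+1+d := by positivity
    rw [Complex.norm_cpow_eq_rpow_re_of_pos hpos, Complex.neg_re]
  have hterm : ∀ n : ℕ, ((n:ℝ)+1+d) ^ (-(w.re)) ≤ (1+d)^((2:ℝ) - w.re) * (1/((n:ℝ)+1)^2) := by
    intro n
    have hpos : (0:ℝ) < (n:ℝ)+1+d := by positivity
    have h1 : ((n:ℝ)+1+d) ^ (-(w.re)) =
        ((n:ℝ)+1+d) ^ ((2:ℝ) - w.re) * ((n:ℝ)+1+d) ^ (-(2:ℝ)) := by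
      rw [← Real.rpow_add hpos]
      congr 1
      ring
    rw [h1]
    have h2 : ((n:ℝ)+1+d) ^ ((2:ℝ) - w.re) ≤ (1+d) ^ ((2:ℝ) - w.re) :=
      Real.rpow_le_rpow_of_nonpos (by positivity) (by linarith) (by linarith)
    have h3 : ((n:ℝ)+1+d) ^ (-(2:ℝ)) ≤ ((n:ℝ)+1) ^ (-(2:ℝ)) :=
      Real.rpow_le_rpow_of_nonpos (by positivity) (by linarith) (by norm_num)
    have h4 : ((n:ℝ)+1) ^ (-(2:ℝ)) = 1/((n:ℝ)+1)^2 := by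
      rw [Real.rpow_neg (by positivity), one_div]
      congr 1
      rw [show ((2:ℝ)) = ((2:ℕ):ℝ) by norm_num, Real.rpow_natCast]
    rw [h4] at h3
    exact mul_le_mul h2 h3 (Real.rpow_nonneg (by positivity) _) (Real.rpow_nonneg (by positivity) _)
  have hsumnorm : Summable (fun n : ℕ => ‖(((n:ℝ)+1+d : ℝ) : ℂ)^(-w)‖) := by
    apply Summable.of_nonneg_of_le (fun n => norm_nonneg _)
      (fun n => (le_of_eq (hnorm n)).trans (hterm n))
    exact (summable_VV.mul_left _)
  rw [← hs.tsum_eq]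
  refine (norm_tsum_le_tsum_norm hsumnorm).trans ?_
  have := Summable.tsum_le_tsum (fun n => (le_of_eq (hnorm n)).trans (hterm n)) hsumnorm
    (summable_VV.mul_left ((1+d)^((2:ℝ) - w.re)))
  refine this.trans ?_
  rw [tsum_mul_left, VV]


noncomputable def zterm (d a : ℝ) (q : ℕ) (s : ℂ) (m : ℕ) : ℂ :=
  zA s m * ((d:ℝ):ℂ)^(2*m) * zH a q (2*s + 2*(m:ℂ))

noncomputable def zZ (c d a : ℝ) (q : ℕ) (s : ℂ) : ℂ :=
  ((c^2 : ℝ) : ℂ)^(-s) * ∑' m : ℕ, zterm d a q s m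

lemma zA_diff (m : ℕ) : Differentiable ℂ (fun s => zA s m) :=
  (Differentiable.fun_finsetProd fun i _ => differentiable_id.add_const _).div_const _

lemma pole_iff (s : ℂ) (m : ℕ) : 2*s + 2*(m:ℂ) = 1 ↔ s = 1/2 - (m:ℂ) := by
  constructor
  · intro h; linear_combination h/2
  · intro h; linear_combination 2*h

lemma zterm_diffAt {d a : ℝ} {q : ℕ} (ha0 : 0 < a) {s : ℂ} {m : ℕ}
    (hne : 2*s + 2*(m:ℂ) ≠ 1) :
    DifferentiableAt ℂ (fun s => zterm d a q s m) s := by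
  have h2 : DifferentiableAt ℂ (fun s => zH a q (2*s + 2*(m:ℂ))) s :=
    DifferentiableAt.comp s (zH_diff ha0 q hne)
      ((differentiableAt_id.const_mul (2:ℂ)).add_const (2*(m:ℂ)))
  exact (((zA_diff m).differentiableAt).mul_const _).mul h2

lemma re_2s2m (s : ℂ) (m : ℕ) : (2*s + 2*(m:ℂ)).re = 2*s.re + 2*(m:ℝ) := by
  simp [Complex.add_re, Complex.mul_re]

lemma zterm_bound {d a : ℝ} {q : ℕ} (hd : 0 < d) (hqa : (q:ℝ) + a = 1 + d) (ha0 : 0 < a)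
    (ha1 : a ≤ 1) {R : ℝ} {s : ℂ} {m : ℕ} (hsR : ‖s‖ ≤ R) (hm : R + 1 ≤ (m:ℝ)) :
    ‖zterm d a q s m‖ ≤ ((1+d)^((2:ℝ)+2*R) * VV) * (zP R m * (d/(1+d))^(2*m)) := by
  have hR0 : 0 ≤ R := le_trans (norm_nonneg s) hsR
  have hsre : -R ≤ s.re := by
    have h1 : |s.re| ≤ ‖s‖ := Complex.abs_re_le_norm s
    have h2 : ‖s‖ = ‖s‖ := rfl
    have := (abs_le.mp (h1.trans (h2.le.trans hsR))).1
    linarith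
  have hre := re_2s2m s m
  have hw : 2 ≤ (2*s + 2*(m:ℂ)).re := by rw [hre]; linarith
  have h1 := norm_zA_le hsR m
  have h2 : ‖((d:ℝ):ℂ)^(2*m)‖ = d^(2*m) := by
    rw [norm_pow, Complex.norm_real, Real.norm_eq_abs, abs_of_pos hd]
  have h3 := zH_bound hd hqa ha0 ha1 hw
  have h1d : (0:ℝ) < 1 + d := by linarith
  have h4 : (1+d)^((2:ℝ) - (2*s + 2*(m:ℂ)).re) ≤ (1+d)^((2:ℝ)+2*R) * ((1+d)^(2*m))⁻¹ := by
    have e : (1+d)^((2:ℝ)+2*R - 2*(m:ℝ)) = (1+d)^((2:ℝ)+2*R) * ((1+d)^(2*m))⁻¹ := by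
      rw [Real.rpow_sub h1d, div_eq_mul_inv]
      congr 1
      rw [show (2*(m:ℝ)) = ((2*m : ℕ):ℝ) by push_cast; ring, Real.rpow_natCast]
    rw [← e]
    apply Real.rpow_le_rpow_of_exponent_le (by linarith)
    rw [hre]
    linarith
  have hnn1 : (0:ℝ) ≤ zP R m * d^(2*m) :=
    mul_nonneg (zP_nonneg hR0 m) (pow_nonneg hd.le _)
  calc ‖zA s m * ((d:ℝ):ℂ)^(2*m) * zH a q (2*s + 2*(m:ℂ))‖
      = ‖zA s m‖ * ‖((d:ℝ):ℂ)^(2*m)‖ * ‖zH a q (2*s + 2*(m:ℂ))‖ := by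
        rw [norm_mul, norm_mul]
    _ ≤ zP R m * d^(2*m) * ((1+d)^((2:ℝ) - (2*s + 2*(m:ℂ)).re) * VV) := by
        apply mul_le_mul (mul_le_mul h1 h2.le (norm_nonneg _) (zP_nonneg hR0 m)) h3
          (norm_nonneg _) hnn1
    _ ≤ zP R m * d^(2*m) * (((1+d)^((2:ℝ)+2*R) * ((1+d)^(2*m))⁻¹) * VV) := by
        exact mul_le_mul_of_nonneg_left (mul_le_mul_of_nonneg_right h4 VV_nonneg) hnn1
    _ = ((1+d)^((2:ℝ)+2*R) * VV) * (zP R m * (d/(1+d))^(2*m)) := by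
        rw [div_pow, div_eq_mul_inv]
        ring

lemma summable_u {d : ℝ} (hd : 0 < d) {R : ℝ} (hR0 : 0 ≤ R) (C : ℝ) :
    Summable (fun m : ℕ => C * (zP R m * (d/(1+d))^(2*m))) := by
  have h1d : (0:ℝ) < 1 + d := by linarith
  have hρ0 : 0 ≤ d/(1+d) := div_nonneg hd.le h1d.le
  have hρ1 : d/(1+d) < 1 := (div_lt_one h1d).mpr (by linarith)
  have h := summable_zP_mul hR0 (mul_nonneg hρ0 hρ0) (by nlinarith : d/(1+d) * (d/(1+d)) < 1) 0
  have h2 : (fun m : ℕ => ((m:ℝ)+1)^0 * zP R m * (d/(1+d) * (d/(1+d)))^m) =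
      (fun m : ℕ => zP R m * (d/(1+d))^(2*m)) := by
    funext m
    rw [pow_zero, one_mul, ← pow_two, ← pow_mul]
  rw [h2] at h
  exact h.mul_left C

lemma norm_mem_ball {s₀ s : ℂ} {ε : ℝ} (hε1 : ε ≤ 1) (hs : s ∈ Metric.ball s₀ ε) :
    ‖s‖ ≤ ‖s₀‖ + 1 := by
  have := Metric.mem_ball.mp hs
  rw [dist_eq_norm] at this
  calc ‖s‖ = ‖s₀ + (s - s₀)‖ := by ring_nf
    _ ≤ ‖s₀‖ + ‖s - s₀‖ := norm_add_le _ _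
    _ ≤ ‖s₀‖ + 1 := by linarith

lemma tail_ne_one {R : ℝ} {s : ℂ} {m : ℕ} (hsR : ‖s‖ ≤ R) (hm : R + 1 ≤ (m:ℝ)) :
    2*s + 2*(m:ℂ) ≠ 1 := by
  intro hcon
  have hs : s = 1/2 - (m:ℂ) := (pole_iff s m).mp hcon
  have : ‖s‖ = |1/2 - (m:ℝ)| := by
    rw [hs, show (1/2 - (m:ℂ)) = ((1/2 - (m:ℝ) : ℝ) : ℂ) by push_cast; ring,
      Complex.norm_real, Real.norm_eq_abs]
  have hR0 : 0 ≤ R := le_trans (norm_nonneg s) hsR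
  have habs : |1/2 - (m:ℝ)| = (m:ℝ) - 1/2 := by
    rw [abs_of_nonpos (by linarith)]
    ring
  rw [this, habs] at hsR
  linarith

lemma summable_zterm {d a : ℝ} {q : ℕ} (hd : 0 < d) (hqa : (q:ℝ) + a = 1 + d) (ha0 : 0 < a)
    (ha1 : a ≤ 1) (s : ℂ) {R : ℝ} (hsR : ‖s‖ ≤ R) :
    Summable (fun m : ℕ => zterm d a q s m) := by
  have hR0 : 0 ≤ R := le_trans (norm_nonneg s) hsR
  set K : ℕ := ⌈R⌉₊ + 1 with hK
  rw [← summable_nat_add_iff K]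
  apply Summable.of_norm
  have hu := (summable_nat_add_iff (f := fun m : ℕ =>
    ((1+d)^((2:ℝ)+2*R) * VV) * (zP R m * (d/(1+d))^(2*m))) K).mpr (summable_u hd hR0 _)
  refine hu.of_nonneg_of_le (fun m => norm_nonneg _) (fun m => ?_)
  apply zterm_bound hd hqa ha0 ha1 hsR
  have : R ≤ (⌈R⌉₊ : ℝ) := Nat.le_ceil R
  rw [hK]
  push_cast
  linarith [Nat.cast_nonneg (α := ℝ) m]

lemma tail_diff {d a : ℝ} {q : ℕ} (hd : 0 < d) (hqa : (q:ℝ) + a = 1 + d) (ha0 : 0 < a)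
    (ha1 : a ≤ 1) (s₀ : ℂ) {ε R : ℝ} (hRε : ∀ s ∈ Metric.ball s₀ ε, ‖s‖ ≤ R)
    (hR0 : 0 ≤ R) {K : ℕ} (hK : R + 1 ≤ (K:ℝ)) :
    DifferentiableOn ℂ (fun s => ∑' j : ℕ, zterm d a q s (j+K)) (Metric.ball s₀ ε) := by
  have hu := (summable_nat_add_iff (f := fun m : ℕ =>
    ((1+d)^((2:ℝ)+2*R) * VV) * (zP R m * (d/(1+d))^(2*m))) K).mpr (summable_u hd hR0 _)
  apply Complex.differentiableOn_tsum_of_summable_norm hu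
  · intro j
    intro s hs
    have hne : 2*s + 2*((j+K : ℕ):ℂ) ≠ 1 := by
      apply tail_ne_one (hRε s hs)
      push_cast
      linarith [Nat.cast_nonneg (α := ℝ) j]
    exact (zterm_diffAt ha0 hne).differentiableWithinAt
  · exact Metric.isOpen_ball
  · intro j s hs
    apply zterm_bound hd hqa ha0 ha1 (hRε s hs)
    push_cast
    linarith [Nat.cast_nonneg (α := ℝ) j]


lemma zZ_diffOn {c d a : ℝ} {q : ℕ} (hc : 0 < c) (hd : 0 < d) (hqa : (q:ℝ) + a = 1 + d)
    (ha0 : 0 < a) (ha1 : a ≤ 1) :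
    DifferentiableOn ℂ (zZ c d a q) {s : ℂ | ∀ m : ℕ, s ≠ 1/2 - (m:ℂ)} := by
  intro s₀ hs₀
  apply DifferentiableAt.differentiableWithinAt
  set K' : ℕ := ⌈‖s₀‖⌉₊ + 2 with hK'
  have hK'ne : (Finset.range K').Nonempty := ⟨0, by simp [hK']⟩
  set δ : ℝ := (Finset.range K').inf' hK'ne (fun m => dist s₀ (1/2 - (m:ℂ))) with hδ
  have hδpos : 0 < δ := by
    rw [hδ, Finset.lt_inf'_iff]
    intro m _
    exact dist_pos.mpr (hs₀ m)
  set ε : ℝ := min 1 δ with hε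
  have hεpos : 0 < ε := lt_min one_pos hδpos
  have hε1 : ε ≤ 1 := min_le_left _ _
  set B := Metric.ball s₀ ε with hB
  have hball : ∀ s ∈ B, ∀ m : ℕ, s ≠ 1/2 - (m:ℂ) := by
    intro s hs m hcon
    have hdist : dist s₀ s < ε := by rw [dist_comm]; exact Metric.mem_ball.mp hs
    by_cases hm : m < K'
    · have h1 : δ ≤ dist s₀ (1/2 - (m:ℂ)) := Finset.inf'_le _ (Finset.mem_range.mpr hm)
      rw [hcon] at hdist
      have h3 : ε ≤ δ := min_le_right _ _
      linarith
    · push_neg at hm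
      have hm2 : (2:ℝ) ≤ (m:ℝ) := by
        have : (K' : ℝ) ≤ (m:ℝ) := by exact_mod_cast hm
        have h0 : (0:ℝ) ≤ (⌈‖s₀‖⌉₊ : ℝ) := by positivity
        rw [hK'] at this
        push_cast at this
        linarith
      have hnm : ‖(1/2 - (m:ℂ))‖ = (m:ℝ) - 1/2 := by
        rw [show (1/2 - (m:ℂ)) = ((1/2 - (m:ℝ) : ℝ):ℂ) by push_cast; ring, Complex.norm_real,
          Real.norm_eq_abs, abs_of_nonpos (by linarith)]
        ring
      have hlow : (m:ℝ) - 1/2 - ‖s₀‖ ≤ dist s₀ (1/2 - (m:ℂ)) := by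
        rw [dist_eq_norm, norm_sub_rev]
        calc (m:ℝ) - 1/2 - ‖s₀‖ = ‖(1/2 - (m:ℂ))‖ - ‖s₀‖ := by rw [hnm]
          _ ≤ ‖(1/2 - (m:ℂ)) - s₀‖ := norm_sub_norm_le _ _
      have hceil : ‖s₀‖ ≤ (⌈‖s₀‖⌉₊ : ℝ) := Nat.le_ceil _
      have hK'm : (⌈‖s₀‖⌉₊ : ℝ) + 2 ≤ (m:ℝ) := by
        have : (K' : ℝ) ≤ (m:ℝ) := by exact_mod_cast hm
        rw [hK'] at this
        push_cast at this
        linarith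
      rw [hcon] at hdist
      linarith
  set R : ℝ := ‖s₀‖ + 1 with hR
  have hR0 : (0:ℝ) ≤ R := by positivity
  have hRball : ∀ s ∈ B, ‖s‖ ≤ R := fun s hs => norm_mem_ball hε1 hs
  set K : ℕ := ⌈R⌉₊ + 1 with hK
  have hKR : R + 1 ≤ (K:ℝ) := by
    have := Nat.le_ceil R
    rw [hK]
    push_cast
    linarith
  have heq : ∀ s ∈ B, (∑ m ∈ Finset.range K, zterm d a q s m + ∑' j : ℕ, zterm d a q s (j+K))
      = ∑' m : ℕ, zterm d a q s m :=
    fun s hs => Summable.sum_add_tsum_nat_add K (summable_zterm hd hqa ha0 ha1 s (hRball s hs))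
  have hfin : DifferentiableOn ℂ (fun s => ∑ m ∈ Finset.range K, zterm d a q s m) B := by
    apply DifferentiableOn.fun_sum
    intro m _
    intro s hs
    have hne : 2*s + 2*(m:ℂ) ≠ 1 := fun hcon => hball s hs m ((pole_iff s m).mp hcon)
    exact (zterm_diffAt ha0 hne).differentiableWithinAt
  have htail := tail_diff hd hqa ha0 ha1 s₀ hRball hR0 hKR
  have hΦ : DifferentiableOn ℂ (fun s => ∑' m : ℕ, zterm d a q s m) B :=
    (hfin.add htail).congr (fun s hs => (heq s hs).symm)
  have hΦat : DifferentiableAt ℂ (fun s => ∑' m : ℕ, zterm d a q s m) s₀ :=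
    hΦ.differentiableAt (Metric.isOpen_ball.mem_nhds (Metric.mem_ball_self hεpos))
  have hcpow : DifferentiableAt ℂ (fun s : ℂ => ((c^2:ℝ):ℂ)^(-s)) s₀ :=
    differentiableAt_id.neg.const_cpow (Or.inl (Complex.ofReal_ne_zero.mpr (by positivity)))
  exact hcpow.mul hΦat

lemma prod_odd (m : ℕ) : (∏ j ∈ Finset.range m, (2*(j:ℂ)+1)) = ((2*m-1).doubleFactorial : ℂ) := by
  induction m with
  | zero => simp
  | succ n ih =>
    rw [Finset.prod_range_succ, ih]
    have h1 : 2*(n+1)-1 = 2*n+1 := by omega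
    rw [h1]
    rcases Nat.eq_zero_or_pos n with rfl | hn
    · norm_num [Nat.doubleFactorial]
    · have h2 : 2*n+1 = (2*n-1)+2 := by omega
      rw [h2, Nat.doubleFactorial_add_two, Nat.cast_mul]
      rw [mul_comm]
      congr 1
      have : ((2*n-1+2 : ℕ):ℂ) = ((2*n-1 : ℕ):ℂ) + 2 := by push_cast; ring
      rw [this, Nat.cast_sub (by omega : 1 ≤ 2*n)]
      push_cast
      ring

lemma zA_at_pole (m : ℕ) :
    zA (1/2 - (m:ℂ)) m = (-1)^m * ((2*m-1).doubleFactorial : ℂ) / (2^m * (Nat.factorial m : ℂ)) := by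
  rw [zA]
  have h := Finset.prod_range_reflect (fun j : ℕ => (1/2 - (m:ℂ) + j)) m
  rw [← h]
  have e : ∀ j ∈ Finset.range m, (1/2 - (m:ℂ) + ((m-1-j : ℕ):ℂ)) = (-1) * ((2*(j:ℂ)+1) * (1/2)) := by
    intro j hj
    have hj' := Finset.mem_range.mp hj
    have hcast : ((m-1-j : ℕ):ℂ) = (m:ℂ) - 1 - j := by
      have h3 : m-1-j = m - (1+j) := by omega
      rw [h3, Nat.cast_sub (by omega)]
      push_cast
      ring
    rw [hcast]
    ring
  rw [Finset.prod_congr rfl e, Finset.prod_mul_distrib, Finset.prod_mul_distrib,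
    Finset.prod_const, Finset.prod_const, prod_odd]
  have h2 : ((2:ℂ))^m ≠ 0 := pow_ne_zero _ two_ne_zero
  rw [Finset.card_range]
  field_simp
  rw [mul_assoc, ← mul_pow]
  norm_num

lemma const_eval {b c d : ℝ} (hc : 0 < c) (hd : 0 < d) (hbd : b = 2*c*d) (m : ℕ) :
    ((c^2:ℝ):ℂ)^(-(1/2 - (m:ℂ))) * (zA (1/2 - (m:ℂ)) m * ((d:ℝ):ℂ)^(2*m) * (1/2))
    = ((((-1:ℝ)^m / 2^(m+1)) * (((2*m-1).doubleFactorial : ℝ) / (Nat.factorial m : ℝ)) *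
        (1/c) * (b/2)^(2*m) : ℝ) : ℂ) := by
  have hcexp : ((c^2:ℝ):ℂ)^(-(1/2 - (m:ℂ))) = ((c^(2*m) * c⁻¹ : ℝ):ℂ) := by
    have h1 : -(1/2 - (m:ℂ)) = (((m:ℝ) - 1/2 : ℝ) : ℂ) := by push_cast; ring
    rw [h1, ← Complex.ofReal_cpow (by positivity) ((m:ℝ) - 1/2)]
    congr 1
    rw [← Real.rpow_natCast c 2, ← Real.rpow_mul hc.le]
    rw [show ((2:ℕ):ℝ) * ((m:ℝ)-1/2) = ((2*m : ℕ):ℝ) + (-1) by push_cast; ring]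
    rw [Real.rpow_add hc, Real.rpow_natCast, Real.rpow_neg_one]
  rw [hcexp, zA_at_pole, hbd]
  have h2 : ((2:ℂ))^m ≠ 0 := pow_ne_zero _ two_ne_zero
  have hm! : ((Nat.factorial m : ℂ)) ≠ 0 := Nat.cast_ne_zero.mpr (Nat.factorial_ne_zero m)
  have hcc : (c:ℂ) ≠ 0 := Complex.ofReal_ne_zero.mpr (ne_of_gt hc)
  push_cast
  field_simp
  ring

lemma zZ_residue {c d a : ℝ} {q : ℕ} (hc : 0 < c) (hd : 0 < d) (hqa : (q:ℝ) + a = 1 + d)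
    (ha0 : 0 < a) (ha1 : a ≤ 1) (m₀ : ℕ) :
    Filter.Tendsto (fun s : ℂ => (s - (1/2 - (m₀:ℂ))) * zZ c d a q s)
      (nhdsWithin (1/2 - (m₀:ℂ)) {(1/2 - (m₀:ℂ))}ᶜ)
      (𝓝 (((c^2:ℝ):ℂ)^(-(1/2 - (m₀:ℂ))) * (zA (1/2 - (m₀:ℂ)) m₀ * ((d:ℝ):ℂ)^(2*m₀) * (1/2)))) := by
  set s₀ : ℂ := 1/2 - (m₀:ℂ) with hs₀
  set B := Metric.ball s₀ (1/2 : ℝ) with hB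
  set R : ℝ := ‖s₀‖ + 1 with hR
  have hR0 : (0:ℝ) ≤ R := by positivity
  have hRball : ∀ s ∈ B, ‖s‖ ≤ R := fun s hs => norm_mem_ball (by norm_num) hs
  set K : ℕ := max (m₀+1) (⌈R⌉₊+1) with hK
  have hKm : m₀ < K := lt_of_lt_of_le (Nat.lt_succ_self m₀) (le_max_left _ _)
  have hKR : R + 1 ≤ (K:ℝ) := by
    have h1 : (⌈R⌉₊+1 : ℕ) ≤ K := le_max_right _ _
    have h2 : ((⌈R⌉₊+1 : ℕ):ℝ) ≤ (K:ℝ) := by exact_mod_cast h1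
    have := Nat.le_ceil R
    push_cast at h2
    linarith
  -- poles other than m₀ are away from B
  have hother : ∀ s ∈ B, ∀ m : ℕ, m ≠ m₀ → 2*s + 2*(m:ℂ) ≠ 1 := by
    intro s hs m hm hcon
    have hseq : s = 1/2 - (m:ℂ) := (pole_iff s m).mp hcon
    have hdist : dist s s₀ < 1/2 := Metric.mem_ball.mp hs
    have : dist s s₀ = |(m₀:ℝ) - (m:ℝ)| := by
      rw [hseq, hs₀, dist_eq_norm]
      rw [show (1/2 - (m:ℂ) - (1/2 - (m₀:ℂ))) = (((m₀:ℝ) - (m:ℝ) : ℝ):ℂ) by push_cast; ring]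
      rw [Complex.norm_real, Real.norm_eq_abs]
    have hge : (1:ℝ) ≤ |(m₀:ℝ) - (m:ℝ)| := by
      have hne : (m₀:ℤ) - (m:ℤ) ≠ 0 := sub_ne_zero.mpr (by exact_mod_cast (Ne.symm hm))
      have := Int.one_le_abs hne
      have hcast : |(m₀:ℝ) - (m:ℝ)| = ((|(m₀:ℤ) - (m:ℤ)| : ℤ) : ℝ) := by
        push_cast
        ring_nf
      rw [hcast]
      exact_mod_cast this
    rw [this] at hdist
    linarith
  -- decomposition of zZ on B
  have heqB : ∀ s ∈ B, zZ c d a q s = ((c^2:ℝ):ℂ)^(-s) *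
      ((∑ m ∈ (Finset.range K).erase m₀, zterm d a q s m + ∑' j : ℕ, zterm d a q s (j+K))
        + zterm d a q s m₀) := by
    intro s hs
    rw [zZ]
    congr 1
    rw [← Summable.sum_add_tsum_nat_add K (summable_zterm hd hqa ha0 ha1 s (hRball s hs))]
    rw [← Finset.add_sum_erase _ _ (Finset.mem_range.mpr hKm)]
    ring
  -- continuity of the regular part at s₀
  have hAcont : ContinuousAt (fun s => ∑ m ∈ (Finset.range K).erase m₀, zterm d a q s m
      + ∑' j : ℕ, zterm d a q s (j+K)) s₀ := by
    have hs₀B : s₀ ∈ B := Metric.mem_ball_self (by norm_num)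
    apply ContinuousAt.add
    · have : DifferentiableAt ℂ (fun s => ∑ m ∈ (Finset.range K).erase m₀, zterm d a q s m) s₀ := by
        apply DifferentiableAt.fun_sum
        intro m hmem
        have hm : m ≠ m₀ := Finset.ne_of_mem_erase hmem
        exact zterm_diffAt ha0 (hother s₀ hs₀B m hm)
      exact this.continuousAt
    · have := tail_diff hd hqa ha0 ha1 s₀ hRball hR0 hKR
      exact (this.continuousOn).continuousAt (Metric.isOpen_ball.mem_nhds hs₀B)
  -- limit of the singular term
  have hφ : Filter.Tendsto (fun s : ℂ => 2*s + 2*(m₀:ℂ)) (nhdsWithin s₀ {s₀}ᶜ)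
      (nhdsWithin 1 {(1:ℂ)}ᶜ) := by
    rw [tendsto_nhdsWithin_iff]
    constructor
    · have hcont : Filter.Tendsto (fun s : ℂ => 2*s + 2*(m₀:ℂ)) (𝓝 s₀) (𝓝 (2*s₀ + 2*(m₀:ℂ))) :=
        ((continuous_const.mul continuous_id).add continuous_const).tendsto s₀
      have hval : 2*s₀ + 2*(m₀:ℂ) = 1 := by rw [hs₀]; ring
      rw [hval] at hcont
      exact hcont.mono_left nhdsWithin_le_nhds
    · filter_upwards [self_mem_nhdsWithin] with s hs
      intro hcon
      have : s = s₀ := by rw [hs₀]; exact (pole_iff s m₀).mp hcon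
      exact hs this
  have hres := (zH_residue ha0 q).comp hφ
  have tzh : Filter.Tendsto (fun s : ℂ => (s - s₀) * zH a q (2*s + 2*(m₀:ℂ)))
      (nhdsWithin s₀ {s₀}ᶜ) (𝓝 (1/2 : ℂ)) := by
    have e : (fun s : ℂ => (s - s₀) * zH a q (2*s + 2*(m₀:ℂ)))
        = fun s : ℂ => (1/2 : ℂ) * ((2*s + 2*(m₀:ℂ) - 1) * zH a q (2*s + 2*(m₀:ℂ))) := by
      funext s
      rw [hs₀]
      ring
    rw [e]
    have := hres.const_mul (1/2 : ℂ)
    simpa using this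
  have tzA : Filter.Tendsto (fun s : ℂ => zA s m₀ * ((d:ℝ):ℂ)^(2*m₀)) (nhdsWithin s₀ {s₀}ᶜ)
      (𝓝 (zA s₀ m₀ * ((d:ℝ):ℂ)^(2*m₀))) :=
    ((((zA_diff m₀).continuous.tendsto s₀).mono_left nhdsWithin_le_nhds).mul_const _)
  have tm₀ : Filter.Tendsto (fun s : ℂ => (s - s₀) * zterm d a q s m₀) (nhdsWithin s₀ {s₀}ᶜ)
      (𝓝 (zA s₀ m₀ * ((d:ℝ):ℂ)^(2*m₀) * (1/2))) := by
    have e : ∀ s : ℂ, (s - s₀) * zterm d a q s m₀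
        = (zA s m₀ * ((d:ℝ):ℂ)^(2*m₀)) * ((s - s₀) * zH a q (2*s + 2*(m₀:ℂ))) := by
      intro s
      rw [zterm]
      ring
    have := tzA.mul tzh
    refine Filter.Tendsto.congr (fun s => (e s).symm) ?_
    convert this using 2
  have tA : Filter.Tendsto (fun s : ℂ => (s - s₀) * (∑ m ∈ (Finset.range K).erase m₀,
      zterm d a q s m + ∑' j : ℕ, zterm d a q s (j+K))) (nhdsWithin s₀ {s₀}ᶜ) (𝓝 0) := by
    have h1 : Filter.Tendsto (fun s : ℂ => s - s₀) (𝓝 s₀) (𝓝 0) := by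
      have h2 : Filter.Tendsto (fun s : ℂ => s - s₀) (𝓝 s₀) (𝓝 (s₀ - s₀)) :=
        Filter.tendsto_id.sub_const s₀
      simpa using h2
    have := (h1.mono_left (nhdsWithin_le_nhds (s := {s₀}ᶜ))).mul
      (hAcont.tendsto.mono_left nhdsWithin_le_nhds)
    simpa using this
  have tc : Filter.Tendsto (fun s : ℂ => ((c^2:ℝ):ℂ)^(-s)) (nhdsWithin s₀ {s₀}ᶜ)
      (𝓝 (((c^2:ℝ):ℂ)^(-s₀))) := by
    have hdiff : DifferentiableAt ℂ (fun s : ℂ => ((c^2:ℝ):ℂ)^(-s)) s₀ :=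
      differentiableAt_id.neg.const_cpow (Or.inl (Complex.ofReal_ne_zero.mpr (by positivity)))
    exact hdiff.continuousAt.tendsto.mono_left nhdsWithin_le_nhds
  have total := tc.mul (tA.add tm₀)
  have hBn : ∀ᶠ s in nhdsWithin s₀ {s₀}ᶜ, s ∈ B :=
    mem_nhdsWithin_of_mem_nhds (Metric.ball_mem_nhds _ (by norm_num))
  have total' : Filter.Tendsto (fun x : ℂ => ((c^2:ℝ):ℂ)^(-x) *
      ((x - s₀) * (∑ m ∈ (Finset.range K).erase m₀, zterm d a q x m +
        ∑' j : ℕ, zterm d a q x (j+K)) + (x - s₀) * zterm d a q x m₀))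
      (nhdsWithin s₀ {s₀}ᶜ)
      (𝓝 (((c^2:ℝ):ℂ)^(-s₀) * (zA s₀ m₀ * ((d:ℝ):ℂ)^(2*m₀) * (1/2)))) := by
    convert total using 2
    ring
  refine Filter.Tendsto.congr' ?_ total'
  filter_upwards [hBn] with s hs
  rw [heqB s hs]
  ring

lemma re_neg2s2m (s : ℂ) (m : ℕ) : (-(2*s) - 2*(m:ℂ)).re = -(2*s.re) - 2*(m:ℝ) := by
  simp [Complex.sub_re, Complex.mul_re]

lemma zZ_eq {b c d a : ℝ} {q : ℕ} (hc : 0 < c) (hd : 0 < d) (hbd : b = 2*c*d)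
    (hqa : (q:ℝ) + a = 1 + d) (ha0 : 0 < a) (ha1 : a ≤ 1) {s : ℂ} (hs : 1/2 < s.re) :
    zZ c d a q s = ∑' n : ℕ, 1 / ((c * ((n:ℝ) + 1) * (c * ((n:ℝ) + 1) + b) : ℝ) : ℂ) ^ s := by
  set F : ℕ → ℕ → ℂ := fun n m => ((c^2:ℝ):ℂ)^(-s) *
    (zA s m * ((d:ℝ):ℂ)^(2*m) * ((((n:ℝ)+1+d : ℝ)):ℂ)^(-(2*s) - 2*(m:ℂ))) with hF
  have hupos : ∀ n : ℕ, (0:ℝ) < (n:ℝ)+1+d := fun n => by positivity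
  have hune : ∀ n : ℕ, (((n:ℝ)+1+d : ℝ):ℂ) ≠ 0 :=
    fun n => Complex.ofReal_ne_zero.mpr (ne_of_gt (hupos n))
  have h1d : (0:ℝ) < 1+d := by linarith
  -- rows
  have hrow : ∀ n : ℕ, HasSum (fun m => F n m)
      (1 / ((c * ((n:ℝ) + 1) * (c * ((n:ℝ) + 1) + b) : ℝ) : ℂ) ^ s) := by
    intro n
    set u : ℝ := (n:ℝ)+1+d with hu
    have hu0 : 0 < u := hupos n
    set t : ℝ := d^2/u^2 with ht
    have ht0 : 0 ≤ t := by positivity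
    have hdu : d < u := by rw [hu]; linarith [Nat.cast_nonneg (α := ℝ) n]
    have ht1 : t < 1 := by
      rw [ht, div_lt_one (by positivity)]
      nlinarith
    have hbinom := hasSum_binom s ht0 ht1
    have hmul := hbinom.mul_left (((c^2:ℝ):ℂ)^(-s) * ((u^2:ℝ):ℂ)^(-s))
    -- rewrite the terms
    have hu2 : ((u^2:ℝ):ℂ)^(-s) = ((u:ℝ):ℂ)^(-s + -s) := by
      rw [show (u^2 : ℝ) = u * u by ring, Complex.ofReal_mul,
        Complex.mul_cpow_ofReal_nonneg hu0.le hu0.le, ← Complex.cpow_add _ _ (hune n)]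
    have hterm : ∀ m : ℕ, (((c^2:ℝ):ℂ)^(-s) * ((u^2:ℝ):ℂ)^(-s)) * (zA s m * ((t:ℝ):ℂ)^m)
        = F n m := by
      intro m
      rw [hF]
      simp only
      have htc : ((t:ℝ):ℂ) = ((d:ℝ):ℂ)^2 / ((u:ℝ):ℂ)^2 := by
        rw [ht]; push_cast; ring
      have htm : ((t:ℝ):ℂ)^m = ((d:ℝ):ℂ)^(2*m) / ((u:ℝ):ℂ)^(2*m) := by
        rw [htc, div_pow, ← pow_mul, ← pow_mul]
      have hexp : ((u:ℝ):ℂ)^(-(2*s) - 2*(m:ℂ))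
          = ((u:ℝ):ℂ)^(-s + -s) * (((u:ℝ):ℂ)^(2*m))⁻¹ := by
        rw [show (-(2*s) - 2*(m:ℂ)) = (-s + -s) + (-(((2*m : ℕ):ℂ))) by push_cast; ring,
          Complex.cpow_add _ _ (hune n), Complex.cpow_neg, Complex.cpow_natCast]
      rw [htm, hu2, hexp]
      have hup : (((u:ℝ):ℂ))^(2*m) ≠ 0 := pow_ne_zero _ (hune n)
      field_simp
    have hval : (((c^2:ℝ):ℂ)^(-s) * ((u^2:ℝ):ℂ)^(-s)) * (((1 - t : ℝ)):ℂ)^(-s)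
        = 1 / ((c * ((n:ℝ) + 1) * (c * ((n:ℝ) + 1) + b) : ℝ) : ℂ) ^ s := by
      have hXfact : c * ((n:ℝ) + 1) * (c * ((n:ℝ) + 1) + b) = c^2 * (u^2 * (1-t)) := by
        rw [hbd, ht, hu]
        have : ((n:ℝ)+1+d) ≠ 0 := ne_of_gt hu0
        field_simp
        ring
      rw [hXfact, one_div, ← Complex.cpow_neg]
      rw [Complex.ofReal_mul, Complex.mul_cpow_ofReal_nonneg (by positivity)
        (by nlinarith [sq_nonneg u] : (0:ℝ) ≤ u^2 * (1-t)),
        Complex.ofReal_mul, Complex.mul_cpow_ofReal_nonneg (by positivity)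
        (by nlinarith : (0:ℝ) ≤ 1 - t)]
      ring
    rw [← hval]
    exact (funext hterm : _ = F n) ▸ hmul
  -- columns
  have hw : ∀ m : ℕ, 1 < (2*s + 2*(m:ℂ)).re := by
    intro m
    rw [re_2s2m]
    have : (0:ℝ) ≤ (m:ℝ) := Nat.cast_nonneg m
    linarith
  have hcol : ∀ m : ℕ, HasSum (fun n => F n m) (((c^2:ℝ):ℂ)^(-s) * zterm d a q s m) := by
    intro m
    have hzh := zH_hasSum hqa ha0 ha1 (hw m)
    have hmul := hzh.mul_left (((c^2:ℝ):ℂ)^(-s) * (zA s m * ((d:ℝ):ℂ)^(2*m)))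
    have hterm : ∀ n : ℕ, (((c^2:ℝ):ℂ)^(-s) * (zA s m * ((d:ℝ):ℂ)^(2*m))) *
        ((((n:ℝ)+1+d : ℝ)):ℂ)^(-(2*s + 2*(m:ℂ))) = F n m := by
      intro n
      rw [hF]
      simp only
      rw [show (-(2*s + 2*(m:ℂ))) = (-(2*s) - 2*(m:ℂ)) by ring]
      ring
    have hval : (((c^2:ℝ):ℂ)^(-s) * (zA s m * ((d:ℝ):ℂ)^(2*m))) * zH a q (2*s + 2*(m:ℂ))
        = ((c^2:ℝ):ℂ)^(-s) * zterm d a q s m := by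
      rw [zterm]; ring
    rw [← hval]
    exact (funext hterm : _ = fun n => F n m) ▸ hmul
  -- summability of the double sum
  set R : ℝ := ‖s‖ with hRdef
  have hR0 : (0:ℝ) ≤ R := norm_nonneg s
  set Kc : ℝ := ‖((c^2:ℝ):ℂ)^(-s)‖ with hKc
  have hKc0 : 0 ≤ Kc := norm_nonneg _
  have hnormF : ∀ n m : ℕ, ‖F n m‖ =
      Kc * (‖zA s m‖ * d^(2*m) * ((n:ℝ)+1+d)^(-(2*s.re) - 2*(m:ℝ))) := by
    intro n m
    rw [hF]
    simp only
    rw [norm_mul, norm_mul, norm_mul]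
    congr 2
    · rw [norm_pow, Complex.norm_real, Real.norm_eq_abs, abs_of_pos hd]
    · rw [Complex.norm_cpow_eq_rpow_re_of_pos (hupos n), re_neg2s2m]
  have hFle : ∀ n m : ℕ, ‖F n m‖ ≤
      (Kc * ((n:ℝ)+1+d)^(-(2*s.re))) * (zP R m * (d/(1+d))^(2*m)) := by
    intro n m
    rw [hnormF n m]
    have hu0 := hupos n
    have hsplit : ((n:ℝ)+1+d)^(-(2*s.re) - 2*(m:ℝ)) =
        ((n:ℝ)+1+d)^(-(2*s.re)) * (((n:ℝ)+1+d)^(2*m))⁻¹ := by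
      rw [Real.rpow_sub hu0, div_eq_mul_inv]
      congr 1
      rw [show (2*(m:ℝ)) = ((2*m : ℕ):ℝ) by push_cast; ring, Real.rpow_natCast]
    rw [hsplit]
    have hdd : d^(2*m) * (((n:ℝ)+1+d)^(2*m))⁻¹ = (d/((n:ℝ)+1+d))^(2*m) := by
      rw [div_pow, div_eq_mul_inv]
    have hρ : (d/((n:ℝ)+1+d))^(2*m) ≤ (d/(1+d))^(2*m) := by
      apply pow_le_pow_left₀ (by positivity)
      apply div_le_div_of_nonneg_left hd.le h1d
      linarith [Nat.cast_nonneg (α := ℝ) n]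
    calc Kc * (‖zA s m‖ * d^(2*m) * (((n:ℝ)+1+d)^(-(2*s.re)) * (((n:ℝ)+1+d)^(2*m))⁻¹))
        = (Kc * ((n:ℝ)+1+d)^(-(2*s.re))) * (‖zA s m‖ * (d/((n:ℝ)+1+d))^(2*m)) := by
          rw [← hdd]; ring
      _ ≤ (Kc * ((n:ℝ)+1+d)^(-(2*s.re))) * (zP R m * (d/(1+d))^(2*m)) := by
          apply mul_le_mul_of_nonneg_left _ (by positivity)
          exact mul_le_mul (norm_zA_le le_rfl m) hρ (by positivity) (zP_nonneg hR0 m)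
  have hsumW : Summable (fun m : ℕ => zP R m * (d/(1+d))^(2*m)) := by
    simpa using summable_u hd hR0 1
  set W : ℝ := ∑' m : ℕ, (zP R m * (d/(1+d))^(2*m)) with hW
  have hW0 : 0 ≤ W := tsum_nonneg (fun m => mul_nonneg (zP_nonneg hR0 m) (by positivity))
  have hrowsum : ∀ n : ℕ, Summable (fun m => ‖F n m‖) := by
    intro n
    refine (summable_u hd hR0 (Kc * ((n:ℝ)+1+d)^(-(2*s.re)))).of_nonneg_of_le
      (fun m => norm_nonneg _) (fun m => hFle n m)
  have hrowtsum : ∀ n : ℕ, (∑' m, ‖F n m‖) ≤ (Kc * ((n:ℝ)+1+d)^(-(2*s.re))) * W := by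
    intro n
    have := Summable.tsum_le_tsum (hFle n) (hrowsum n)
      ((summable_u hd hR0 (Kc * ((n:ℝ)+1+d)^(-(2*s.re)))))
    rwa [tsum_mul_left] at this
  have hcolsummable : Summable (fun n : ℕ => ((n:ℝ)+1+d)^(-(2*s.re))) := by
    have h2σ : 1 < 2*s.re := by linarith
    have hbase := Real.summable_nat_rpow_inv.mpr h2σ
    have hshift := (summable_nat_add_iff 1).mpr hbase
    refine hshift.of_nonneg_of_le (fun n => Real.rpow_nonneg (hupos n).le _) (fun n => ?_)
    have h1 : ((n:ℝ)+1+d)^(-(2*s.re)) ≤ ((n:ℝ)+1)^(-(2*s.re)) :=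
      Real.rpow_le_rpow_of_nonpos (by positivity) (by linarith) (by linarith)
    have h2 : ((n:ℝ)+1)^(-(2*s.re)) = (((n+1 : ℕ):ℝ)^(2*s.re))⁻¹ := by
      rw [Real.rpow_neg (by positivity)]
      push_cast
      ring_nf
    rw [← h2] at *
    exact h1.trans (le_of_eq h2)
  have husumm : Summable (Function.uncurry F) := by
    apply Summable.of_norm
    rw [summable_prod_of_nonneg (fun p => norm_nonneg _)]
    constructor
    · intro n
      exact hrowsum n
    · refine ((hcolsummable.mul_left (Kc * W)).of_nonneg_of_le
        (fun n => tsum_nonneg (fun m => norm_nonneg _)) (fun n => ?_))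
      refine (hrowtsum n).trans (le_of_eq ?_)
      ring
  -- put it together
  calc zZ c d a q s = ∑' m : ℕ, ((c^2:ℝ):ℂ)^(-s) * zterm d a q s m := by
        rw [zZ, ← tsum_mul_left]
    _ = ∑' m : ℕ, ∑' n : ℕ, F n m := tsum_congr (fun m => (hcol m).tsum_eq.symm)
    _ = ∑' n : ℕ, ∑' m : ℕ, F n m :=
        Summable.tsum_comm' husumm (fun n => (hrow n).summable) (fun m => (hcol m).summable)
    _ = ∑' n : ℕ, 1 / ((c * ((n:ℝ) + 1) * (c * ((n:ℝ) + 1) + b) : ℝ) : ℂ) ^ s :=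
        tsum_congr (fun n => (hrow n).tsum_eq)
end ZoddAux

open Filter

/-- Lemma 5, pole part: `z_odd(s,0,b,c)` extends analytically to the complement
of `{1/2 - m : m ∈ ℕ}` with simple poles at `s = 1/2 - m` and the stated residua. -/
theorem z_odd_continuation (b c : ℝ) (hb : 0 < b) (hc : 0 < c) :
    ∃ Z : ℂ → ℂ,
      DifferentiableOn ℂ Z {s : ℂ | ∀ m : ℕ, s ≠ 1 / 2 - (m : ℂ)} ∧
      (∀ s : ℂ, 1 / 2 < s.re →
        Z s = ∑' n : ℕ,
          1 / ((c * (n + 1) * (c * (n + 1) + b) : ℝ) : ℂ) ^ s) ∧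
      ∀ m : ℕ,
        Tendsto (fun s : ℂ => (s - (1 / 2 - (m : ℂ))) * Z s)
          (nhdsWithin (1 / 2 - (m : ℂ)) {(1 / 2 - (m : ℂ))}ᶜ)
          (nhds ((((-1 : ℝ) ^ m / 2 ^ (m + 1)) *
            ((Nat.doubleFactorial (2 * m - 1) : ℝ) / (Nat.factorial m : ℝ)) * (1 / c) * (b / 2) ^ (2 * m) : ℝ) : ℂ)) := by
  have hd : 0 < b/(2*c) := by positivity
  set d : ℝ := b/(2*c) with hddef
  have hbd : b = 2*c*d := by rw [hddef]; field_simp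
  set q : ℕ := ⌈d⌉₊ with hqdef
  set a : ℝ := 1 + d - (q:ℝ) with hadef
  have hqa : (q:ℝ) + a = 1 + d := by rw [hadef]; ring
  have ha0 : 0 < a := by
    have := Nat.ceil_lt_add_one hd.le
    rw [hadef, hqdef]
    linarith
  have ha1 : a ≤ 1 := by
    have := Nat.le_ceil d
    rw [hadef]
    linarith
  refine ⟨ZoddAux.zZ c d a q, ?_, ?_, ?_⟩
  · exact ZoddAux.zZ_diffOn hc hd hqa ha0 ha1
  · intro s hs
    exact ZoddAux.zZ_eq hc hd hbd hqa ha0 ha1 hs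
  · intro m
    have h := ZoddAux.zZ_residue hc hd hqa ha0 ha1 m
    rwa [ZoddAux.const_eval hc hd hbd m] at h
end

section
/- For every integer k ≥ 1 there exist unique real numbers a_{k,0}, a_{k,1}, …, a_{k,k−1} such that ∏_{i=1}^{k−1}(x+i)² = Σ_{l=0}^{k−1} a_{k,l}·(x²+kx)^l holds as an identity of polynomials in x. Moreover a_{k,k−1} = 1 and a_{k,0} = ((k−1)!)². -/
open Polynomial

/-- Definition 2: existence and uniqueness of the coefficients `a_{k,l}`,
together with `a_{k,k-1} = 1` and `a_{k,0} = ((k-1)!)²`. -/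
theorem a_coeffs (k : ℕ) (hk : 1 ≤ k) :
    (∃ a : ℕ → ℝ,
        (∏ i ∈ Finset.Icc 1 (k - 1), (X + C (i : ℝ)) ^ 2) =
          ∑ l ∈ Finset.range k, C (a l) * (X ^ 2 + C ((k : ℕ) : ℝ) * X) ^ l ∧
        a (k - 1) = 1 ∧ a 0 = ((Nat.factorial (k - 1) : ℝ)) ^ 2) ∧
      ∀ a a' : ℕ → ℝ,
        (∏ i ∈ Finset.Icc 1 (k - 1), (X + C (i : ℝ)) ^ 2) =
            ∑ l ∈ Finset.range k, C (a l) * (X ^ 2 + C ((k : ℕ) : ℝ) * X) ^ l →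
        (∏ i ∈ Finset.Icc 1 (k - 1), (X + C (i : ℝ)) ^ 2) =
            ∑ l ∈ Finset.range k, C (a' l) * (X ^ 2 + C ((k : ℕ) : ℝ) * X) ^ l →
        ∀ l < k, a l = a' l := by
  set q : ℝ[X] := X ^ 2 + C ((k : ℕ) : ℝ) * X with hq
  -- q is not constant
  have hqc : q ≠ C (q.coeff 0) := by
    intro h
    have := congrArg (fun p => Polynomial.coeff p 2) h
    simp [hq, coeff_X_pow, Polynomial.coeff_C] at this
  constructor
  · -- existence
    set P : ℝ[X] := ∏ i ∈ Finset.Icc 1 (k - 1), (X + C ((i * (k - i) : ℕ) : ℝ)) with hP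
    have hPmonic : P.Monic := monic_prod_of_monic _ _ fun i _ => monic_X_add_C _
    have hPdeg : P.natDegree = k - 1 := by
      rw [hP, Polynomial.natDegree_prod _ _ (fun i _ => (monic_X_add_C _).ne_zero),
        Finset.sum_congr rfl (fun i _ => Polynomial.natDegree_X_add_C _),
        Finset.sum_const, smul_eq_mul, mul_one, Nat.card_Icc]
      omega
    -- the key product identity
    have key : (∏ i ∈ Finset.Icc 1 (k - 1), (X + C (i : ℝ)) ^ 2) = P.comp q := by
      have reindex : (∏ i ∈ Finset.Icc 1 (k - 1), (X + C (i : ℝ)))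
          = ∏ i ∈ Finset.Icc 1 (k - 1), (X + C (((k - i : ℕ) : ℝ))) := by
        refine Finset.prod_nbij' (fun i => k - i) (fun i => k - i) ?_ ?_ ?_ ?_ ?_ <;>
          intro i hi <;> rw [Finset.mem_Icc] at hi
        · rw [Finset.mem_Icc]; omega
        · rw [Finset.mem_Icc]; omega
        · omega
        · omega
        · have h : k - (k - i) = i := by omega
          rw [h]
      have step : (∏ i ∈ Finset.Icc 1 (k - 1), (X + C (i : ℝ)) ^ 2)
          = ∏ i ∈ Finset.Icc 1 (k - 1), (q + C ((i * (k - i) : ℕ) : ℝ)) := by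
        calc (∏ i ∈ Finset.Icc 1 (k - 1), (X + C (i : ℝ)) ^ 2)
            = (∏ i ∈ Finset.Icc 1 (k - 1), (X + C (i : ℝ))) *
              (∏ i ∈ Finset.Icc 1 (k - 1), (X + C (i : ℝ))) := by
              rw [← Finset.prod_mul_distrib]; simp [sq]
          _ = (∏ i ∈ Finset.Icc 1 (k - 1), (X + C (i : ℝ))) *
              (∏ i ∈ Finset.Icc 1 (k - 1), (X + C (((k - i : ℕ) : ℝ)))) := by
              rw [← reindex]
          _ = ∏ i ∈ Finset.Icc 1 (k - 1),
              ((X + C (i : ℝ)) * (X + C (((k - i : ℕ) : ℝ)))) :=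
              (Finset.prod_mul_distrib).symm
          _ = ∏ i ∈ Finset.Icc 1 (k - 1), (q + C ((i * (k - i) : ℕ) : ℝ)) := by
              apply Finset.prod_congr rfl
              intro i hi
              rw [Finset.mem_Icc] at hi
              have h1 : ((k - i : ℕ) : ℝ) = (k : ℝ) - (i : ℝ) := by
                push_cast [Nat.cast_sub (by omega : i ≤ k)]; ring
              have h2 : ((i * (k - i) : ℕ) : ℝ) = (i : ℝ) * ((k : ℝ) - (i : ℝ)) := by
                push_cast [Nat.cast_sub (by omega : i ≤ k)]; ring
              rw [h1, h2, hq]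
              simp only [Polynomial.C_sub, Polynomial.C_mul]
              ring
      rw [step, hP, Polynomial.comp, Polynomial.eval₂_finset_prod]
      apply Finset.prod_congr rfl
      intro i _
      simp [add_comm]
    refine ⟨fun l => P.coeff l, ?_, ?_, ?_⟩
    · rw [key, Polynomial.comp_eq_sum_left,
        Polynomial.sum_over_range' P (by simp) k (by omega)]
    · show P.coeff (k - 1) = 1
      have := hPmonic.coeff_natDegree
      rwa [hPdeg] at this
    · show P.coeff 0 = _
      rw [Polynomial.coeff_zero_eq_eval_zero, hP, Polynomial.eval_prod]
      have : (∏ i ∈ Finset.Icc 1 (k - 1),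
          Polynomial.eval 0 (X + C ((i * (k - i) : ℕ) : ℝ)))
          = ((∏ i ∈ Finset.Icc 1 (k - 1), i * (k - i) : ℕ) : ℝ) := by
        push_cast
        apply Finset.prod_congr rfl
        intro i _; simp
      rw [this]
      have hnat : (∏ i ∈ Finset.Icc 1 (k - 1), i * (k - i)) =
          Nat.factorial (k - 1) ^ 2 := by
        rw [Finset.prod_mul_distrib]
        have h2 : (∏ i ∈ Finset.Icc 1 (k - 1), (k - i))
            = ∏ i ∈ Finset.Icc 1 (k - 1), i := by
          refine Finset.prod_nbij' (fun i => k - i) (fun i => k - i) ?_ ?_ ?_ ?_ ?_ <;>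
            intro i hi <;> rw [Finset.mem_Icc] at hi
          · rw [Finset.mem_Icc]; omega
          · rw [Finset.mem_Icc]; omega
          · omega
          · omega
        have h1 : (∏ i ∈ Finset.Icc 1 (k - 1), i) = Nat.factorial (k - 1) := by
          have := Finset.prod_Ico_id_eq_factorial (k - 1)
          rwa [← Finset.Ico_add_one_right_eq_Icc]
        rw [h2, h1, sq]
      rw [hnat]
      push_cast
      ring
  · -- uniqueness
    intro a a' h1 h2 l hl
    have hsum : (∑ m ∈ Finset.range k, C (a m) * q ^ m)
        = ∑ m ∈ Finset.range k, C (a' m) * q ^ m := by rw [← h1, ← h2]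
    set D : ℝ[X] := ∑ m ∈ Finset.range k, C (a m - a' m) * X ^ m with hD
    have hDcomp : D.comp q = 0 := by
      rw [hD, Polynomial.comp, Polynomial.eval₂_finset_sum]
      have : ∀ m ∈ Finset.range k,
          Polynomial.eval₂ C q (C (a m - a' m) * X ^ m)
            = C (a m) * q ^ m - C (a' m) * q ^ m := by
        intro m _
        simp [sub_mul, Polynomial.C_sub]
      rw [Finset.sum_congr rfl this, Finset.sum_sub_distrib, hsum, sub_self]
    have hD0 : D = 0 := by
      rcases Polynomial.comp_eq_zero_iff.mp hDcomp with h | ⟨_, h⟩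
      · exact h
      · exact absurd h hqc
    have hcoeff : D.coeff l = a l - a' l := by
      rw [hD, Polynomial.finset_sum_coeff]
      have : ∀ m ∈ Finset.range k,
          (C (a m - a' m) * X ^ m).coeff l = if m = l then a m - a' m else 0 := by
        intro m _
        rw [Polynomial.coeff_C_mul, Polynomial.coeff_X_pow]
        rcases eq_or_ne m l with h | h
        · subst h; simp
        · simp [h, Ne.symm h]
      rw [Finset.sum_congr rfl this, Finset.sum_ite_eq' (Finset.range k) l]
      simp [hl]
    rw [hD0] at hcoeff
    simp at hcoeff
    linarith
end

section
/- Let k ≥ 2 be an integer and let s be a complex number with Re(s) > k. Then ζ(s, ℂP^k) = 4^{−s} · (k/((k−1)!)²) · Σ_{l=0}^{k−1} a_{k,l} · z_even(s−l, 0, k, 1), where both sides are given by absolutely convergent series. -/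
open Polynomial

/-- Lemma 6: decomposition of `ζ(s,ℂP^k)` in terms of `z_even(s-l,0,k,1)`. -/
theorem zeta_CPk_decomposition (k : ℕ) (hk : 2 ≤ k) (a : ℕ → ℝ)
    (ha : (∏ i ∈ Finset.Icc 1 (k - 1), (X + C (i : ℝ)) ^ 2) =
      ∑ l ∈ Finset.range k, C (a l) * (X ^ 2 + C ((k : ℕ) : ℝ) * X) ^ l)
    (s : ℂ) (hs : (k : ℝ) < s.re) :
    Summable (fun n : ℕ =>
        (((k : ℝ) * (2 * ((n : ℝ) + 1) + k) / (Nat.factorial (k - 1) : ℝ) ^ 2 *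
            ∏ i ∈ Finset.Icc 1 (k - 1), ((n : ℝ) + 1 + i) ^ 2 : ℝ) : ℂ) /
          ((((n : ℝ) + 1) * ((n : ℝ) + 1 + k) : ℝ) : ℂ) ^ s) ∧
      (∀ l < k, Summable (fun n : ℕ =>
        ((2 * ((n : ℝ) + 1) + (k : ℝ) : ℝ) : ℂ) /
          ((((n : ℝ) + 1) * ((n : ℝ) + 1 + k) : ℝ) : ℂ) ^ (s - l))) ∧
      (4 : ℂ) ^ (-s) * (∑' n : ℕ,
          (((k : ℝ) * (2 * ((n : ℝ) + 1) + k) / (Nat.factorial (k - 1) : ℝ) ^ 2 *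
              ∏ i ∈ Finset.Icc 1 (k - 1), ((n : ℝ) + 1 + i) ^ 2 : ℝ) : ℂ) /
            ((((n : ℝ) + 1) * ((n : ℝ) + 1 + k) : ℝ) : ℂ) ^ s) =
        (4 : ℂ) ^ (-s) * ((k : ℂ) / (Nat.factorial (k - 1) : ℂ) ^ 2) *
          ∑ l ∈ Finset.range k, (a l : ℂ) *
            ∑' n : ℕ,
              ((2 * ((n : ℝ) + 1) + (k : ℝ) : ℝ) : ℂ) /
                ((((n : ℝ) + 1) * ((n : ℝ) + 1 + k) : ℝ) : ℂ) ^ (s - l) := by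
  classical
  -- notation
  set w : ℕ → ℝ := fun n => ((n : ℝ) + 1) * ((n : ℝ) + 1 + k) with hw
  have hkR : (0:ℝ) ≤ (k:ℝ) := Nat.cast_nonneg k
  have hwpos : ∀ n : ℕ, 0 < w n := by
    intro n; have hn : (0:ℝ) ≤ (n:ℝ) := Nat.cast_nonneg n
    simp only [hw]; positivity
  have hwge : ∀ n : ℕ, ((n:ℝ)+1)^2 ≤ w n := by
    intro n; have hn : (0:ℝ) ≤ (n:ℝ) := Nat.cast_nonneg n
    simp only [hw]; nlinarith
  -- the simple series
  set g : ℕ → ℕ → ℂ := fun l n =>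
    ((2 * ((n : ℝ) + 1) + (k : ℝ) : ℝ) : ℂ) / ((w n : ℝ) : ℂ) ^ (s - l) with hg
  -- summability of g l for l < k
  have hsumg : ∀ l < k, Summable (g l) := by
    intro l hl
    have he1 : (1:ℝ) < s.re - l := by
      have : (l:ℝ) + 1 ≤ k := by exact_mod_cast hl
      linarith
    set e : ℝ := s.re - l with he
    have hepos : (0:ℝ) ≤ e := by linarith
    have hmain : Summable (fun n : ℕ => ((k:ℝ)+2) * ((n:ℝ)+1) ^ (1 - 2*e)) := by
      apply Summable.mul_left
      have h0 : Summable (fun n : ℕ => ((n:ℝ)) ^ (1 - 2*e)) :=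
        Real.summable_nat_rpow.2 (by linarith)
      have h2 := (summable_nat_add_iff 1).2 h0
      refine h2.congr fun n => by push_cast; ring_nf
    apply Summable.of_norm_bounded hmain
    intro n
    have hn1 : (0:ℝ) < (n:ℝ)+1 := by positivity
    have hcpos : (0:ℝ) ≤ 2 * ((n:ℝ)+1) + k := by positivity
    have hnorm : ‖g l n‖ = (2 * ((n:ℝ)+1) + k) / (w n) ^ e := by
      simp only [hg, norm_div, Complex.norm_real]
      rw [Complex.norm_cpow_eq_rpow_re_of_pos (hwpos n)]
      simp [abs_of_nonneg hcpos, he]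
    rw [hnorm]
    have h1 : ((n:ℝ)+1) ^ (2*e) ≤ (w n) ^ e := by
      calc ((n:ℝ)+1)^(2*e) = (((n:ℝ)+1)^(2:ℝ))^e := by rw [← Real.rpow_mul hn1.le]
        _ = (((n:ℝ)+1)^2)^e := by rw [Real.rpow_two]
        _ ≤ (w n)^e := Real.rpow_le_rpow (by positivity) (hwge n) hepos
    have h2 : 2 * ((n:ℝ)+1) + k ≤ ((k:ℝ)+2) * ((n:ℝ)+1) := by
      have : (1:ℝ) ≤ (n:ℝ)+1 := by
        have : (0:ℝ) ≤ (n:ℝ) := Nat.cast_nonneg n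
        linarith
      nlinarith
    have hrw : ((k:ℝ)+2) * ((n:ℝ)+1)^(1-2*e) = (((k:ℝ)+2)*((n:ℝ)+1))/((n:ℝ)+1)^(2*e) := by
      rw [Real.rpow_sub hn1, Real.rpow_one, mul_div_assoc]
    rw [hrw]
    exact div_le_div₀ (by positivity) h2 (Real.rpow_pos_of_pos hn1 _) h1
  -- pointwise identity
  have key : ∀ n : ℕ,
      (((k : ℝ) * (2 * ((n : ℝ) + 1) + k) / (Nat.factorial (k - 1) : ℝ) ^ 2 *
          ∏ i ∈ Finset.Icc 1 (k - 1), ((n : ℝ) + 1 + i) ^ 2 : ℝ) : ℂ) /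
        ((w n : ℝ) : ℂ) ^ s =
      ((k : ℂ) / (Nat.factorial (k - 1) : ℂ) ^ 2) *
        ∑ l ∈ Finset.range k, (a l : ℂ) * g l n := by
    intro n
    have hP : (∏ i ∈ Finset.Icc 1 (k - 1), ((n : ℝ) + 1 + i) ^ 2) =
        ∑ l ∈ Finset.range k, a l * (((n:ℝ)+1)^2 + k * ((n:ℝ)+1)) ^ l := by
      have h := congrArg (Polynomial.eval ((n:ℝ)+1)) ha
      simp [eval_prod, eval_finset_sum] at h
      exact h
    have hwn : (((n:ℝ)+1)^2 + (k:ℝ) * ((n:ℝ)+1)) = w n := by simp only [hw]; ring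
    rw [hP, hwn] at *
    have hWne : ((w n : ℝ) : ℂ) ≠ 0 := by
      exact_mod_cast (hwpos n).ne'
    have hcl : ∀ l : ℕ, ((2 * ((n : ℝ) + 1) + (k : ℝ) : ℝ) : ℂ) / ((w n : ℝ) : ℂ) ^ (s - l)
        = ((2 * ((n : ℝ) + 1) + (k : ℝ) : ℝ) : ℂ) * ((w n : ℝ) : ℂ) ^ (l:ℕ) / ((w n : ℝ) : ℂ) ^ s := by
      intro l
      rw [Complex.cpow_sub _ _ hWne, Complex.cpow_natCast, div_div_eq_mul_div]
    simp only [hg, hcl]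
    push_cast
    rw [Finset.mul_sum, Finset.sum_div, Finset.mul_sum]
    refine Finset.sum_congr rfl fun l _ => ?_
    ring
  refine ⟨?_, fun l hl => hsumg l hl, ?_⟩
  · exact (((summable_sum (fun l hl => (hsumg l (Finset.mem_range.1 hl)).mul_left
      ((a l : ℂ)))).mul_left ((k : ℂ) / (Nat.factorial (k - 1) : ℂ) ^ 2)).congr
      fun n => (key n).symm)
  · have h1 : (∑' n : ℕ,
        (((k : ℝ) * (2 * ((n : ℝ) + 1) + k) / (Nat.factorial (k - 1) : ℝ) ^ 2 *
            ∏ i ∈ Finset.Icc 1 (k - 1), ((n : ℝ) + 1 + i) ^ 2 : ℝ) : ℂ) /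
          ((w n : ℝ) : ℂ) ^ s) =
        ((k : ℂ) / (Nat.factorial (k - 1) : ℂ) ^ 2) *
          ∑ l ∈ Finset.range k, (a l : ℂ) * ∑' n : ℕ, g l n := by
      rw [tsum_congr key, tsum_mul_left]
      congr 1
      rw [Summable.tsum_finsetSum (fun l hl => (hsumg l (Finset.mem_range.1 hl)).mul_left _)]
      exact Finset.sum_congr rfl fun l _ => tsum_mul_left
    rw [h1, mul_assoc]
end

section
/- Let k ≥ 2 be an integer. There exists a function Z : ℂ → ℂ, complex analytic on ℂ ∖ {1, 2, …, k}, such that Z(s) = ζ(s, ℂP^k) (the convergent series) for all s with Re(s) > k, and for every integer n with 1 ≤ n ≤ k, Z has a simple pole at s = n with lim_{s→n} (s−n)·Z(s) = 4^{−n} · k · a_{k,n−1} / ((k−1)!)². -/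
open Polynomial Filter Topology

namespace ZCPkAux

open Complex Finset Set Topology

noncomputable section

/-- generalized binomial coefficient `binom(-s, j)` -/
def pb (j : ℕ) (s : ℂ) : ℂ := (∏ i ∈ Finset.range j, (-s - i)) / (j.factorial : ℂ)

lemma pb_zero (s : ℂ) : pb 0 s = 1 := by simp [pb]

lemma pb_succ (j : ℕ) (s : ℂ) : pb (j+1) s = pb j s * (-s - j) / ((j:ℂ)+1) := by
  have h1 : ((j+1).factorial : ℂ) = (j.factorial : ℂ) * ((j:ℂ)+1) := by
    rw [Nat.factorial_succ]; push_cast; ring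
  have h2 : (j.factorial : ℂ) ≠ 0 := Nat.cast_ne_zero.2 (Nat.factorial_ne_zero j)
  have h3 : ((j:ℂ)+1) ≠ 0 := Nat.cast_add_one_ne_zero j
  field_simp [pb, Finset.prod_range_succ, h1]
  rw [pb, pb, Finset.prod_range_succ, h1]
  field_simp

lemma succ_mul_pb (j : ℕ) (s : ℂ) : ((j:ℂ)+1) * pb (j+1) s = -s * pb j (s+1) := by
  have h1 : ∏ i ∈ Finset.range (j+1), (-s - i) = (-s) * ∏ i ∈ Finset.range j, (-(s+1) - i) := by
    rw [Finset.prod_range_succ']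
    simp only [Nat.cast_zero, sub_zero]
    rw [mul_comm]
    congr 1
    refine Finset.prod_congr rfl fun i _ => ?_
    push_cast; ring
  have h2 : ((j+1).factorial : ℂ) = ((j:ℂ)+1) * (j.factorial : ℂ) := by
    rw [Nat.factorial_succ]; push_cast; ring
  have h3 : ((j:ℂ)+1) ≠ 0 := Nat.cast_add_one_ne_zero j
  have h4 : (j.factorial : ℂ) ≠ 0 := Nat.cast_ne_zero.2 (Nat.factorial_ne_zero j)
  rw [pb, pb, h1, h2]
  field_simp

lemma differentiable_pb (j : ℕ) : Differentiable ℂ (pb j) := by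
  apply Differentiable.div_const
  induction j with
  | zero => simp
  | succ n ih =>
    simp only [Finset.prod_range_succ]
    exact ih.mul (by fun_prop)

/-- entire version of `(s-1) ζ(s)` -/
def xi : ℂ → ℂ :=
  Function.update (fun s => (s - 1) * riemannZeta s) 1
    (limUnder (𝓝[≠] (1:ℂ)) (fun s => (s - 1) * riemannZeta s))

lemma xi_eq {s : ℂ} (hs : s ≠ 1) : xi s = (s - 1) * riemannZeta s := by
  simp [xi, Function.update_of_ne hs]

lemma differentiable_xi : Differentiable ℂ xi := by
  -- removable singularity at 1
  have hd : DifferentiableOn ℂ (fun s => (s - 1) * riemannZeta s) (univ \ {1}) := by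
    intro z hz
    exact (((differentiableAt_id.sub_const 1).mul
      (differentiableAt_riemannZeta hz.2)).differentiableWithinAt)
  -- boundedness near 1 from the residue limit
  obtain ⟨U, hU, hUb⟩ : ∃ U ∈ 𝓝 (1:ℂ), ∀ z ∈ U \ {1},
      ‖(z - 1) * riemannZeta z‖ ≤ 2 := by
    have h := riemannZeta_residue_one
    have h2 : ∀ᶠ z in 𝓝[≠] (1:ℂ), ‖(z - 1) * riemannZeta z‖ ≤ 2 := by
      filter_upwards [h.norm.eventually (eventually_le_nhds (by norm_num : ‖(1:ℂ)‖ < 2))] with z hz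
      exact hz
    rw [eventually_nhdsWithin_iff] at h2
    obtain ⟨U, hU1, hU2⟩ := eventually_nhds_iff.mp h2
    exact ⟨U, hU2.1.mem_nhds hU2.2, fun z hz => hU1 z hz.1 hz.2⟩
  have hV : interior U ∈ 𝓝 (1:ℂ) := by exact interior_mem_nhds.mpr hU
  have hdd : DifferentiableOn ℂ (fun s => (s - 1) * riemannZeta s) (interior U \ {1}) :=
    hd.mono (by intro z hz; exact ⟨trivial, hz.2⟩)
  have hbb : BddAbove (norm ∘ (fun s => (s - 1) * riemannZeta s) '' (interior U \ {1})) := by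
    refine ⟨2, ?_⟩
    rintro x ⟨z, hz, rfl⟩
    exact hUb z ⟨interior_subset hz.1, hz.2⟩
  have hxiV : DifferentiableOn ℂ xi (interior U) :=
    Complex.differentiableOn_update_limUnder_of_bddAbove hV hdd hbb
  intro z
  by_cases hz : z = 1
  · subst hz
    exact (hxiV.differentiableAt hV)
  · have h1 : DifferentiableAt ℂ (fun s : ℂ => (s - 1) * riemannZeta s) z :=
      (differentiableAt_id.sub_const 1).mul (differentiableAt_riemannZeta hz)
    refine h1.congr_of_eventuallyEq ?_
    filter_upwards [isOpen_ne.mem_nhds hz] with w hw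
    exact xi_eq hw


/-- Taylor remainder of `(1+z)^{-s}`, complex version -/
def EeC (J : ℕ) (z : ℂ) (s : ℂ) : ℂ :=
  (1 + z) ^ (-s) - ∑ j ∈ Finset.range J, pb j s * z ^ j

def Ee (J : ℕ) (x : ℝ) (s : ℂ) : ℂ := EeC J (x:ℂ) s

lemma Ee_succ_zero (J : ℕ) (s : ℂ) : Ee (J+1) 0 s = 0 := by
  simp [Ee, EeC, Finset.sum_range_succ' _ J, pb_zero]

lemma continuous_Ee (J : ℕ) (s : ℂ) : ContinuousOn (fun x : ℝ => Ee J x s) (Set.Ici 0) := by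
  apply ContinuousOn.sub
  · intro x hx
    have h1 : ContinuousAt (fun x : ℝ => 1 + (x:ℂ)) x := by fun_prop
    have h2 : ContinuousAt (fun z : ℂ => z ^ (-s)) (1 + (x:ℂ)) := by
      apply continuousAt_cpow_const
      rw [Complex.mem_slitPlane_iff]
      left; simp only [Complex.add_re, Complex.one_re, Complex.ofReal_re]
      have := mem_Ici.mp hx; linarith
    exact (ContinuousAt.comp (g := fun z : ℂ => z ^ (-s)) (f := fun x : ℝ => 1 + (x:ℂ)) h2 h1).continuousWithinAt
  · fun_prop

lemma hasDerivAt_EeC (J : ℕ) (s : ℂ) {z : ℂ} (hz : 1 + z ∈ Complex.slitPlane) :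
    HasDerivAt (fun z : ℂ => EeC (J+1) z s) (-s * EeC J z (s+1)) z := by
  have h1 : HasDerivAt (fun z : ℂ => (1 + z) ^ (-s)) (-s * (1 + z) ^ (-s - 1)) z := by
    have hb : HasDerivAt (fun z : ℂ => 1 + z) 1 z := (hasDerivAt_id z).const_add 1
    have := hb.cpow_const (c := -s) hz
    simpa using this
  have h2 : HasDerivAt (fun z : ℂ => ∑ j ∈ Finset.range (J+1), pb j s * z ^ j)
      (∑ j ∈ Finset.range J, -s * pb j (s+1) * z ^ j) z := by
    have h3 : ∀ j ∈ Finset.range (J+1), HasDerivAt (fun z : ℂ => pb j s * z ^ j)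
        (pb j s * ((j:ℂ) * z ^ (j-1))) z := fun j _ => (hasDerivAt_pow j z).const_mul (pb j s)
    have h4 := HasDerivAt.fun_sum h3
    refine h4.congr_deriv (Eq.symm ?_)
    rw [Finset.sum_range_succ']
    simp only [Nat.cast_zero, mul_zero, zero_mul, add_zero, pow_zero, Nat.add_sub_cancel]
    refine Finset.sum_congr rfl fun j _ => ?_
    have := succ_mul_pb j s
    calc -s * pb j (s+1) * z ^ j = (((j:ℂ)+1) * pb (j+1) s) * z ^ j := by rw [this]
    _ = pb (j+1) s * (((j:ℂ)+1) * z ^ j) := by ring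
    _ = pb (j+1) s * ((j+1:ℕ) * z ^ (j+1-1)) := by push_cast [Nat.add_sub_cancel]; ring
  have h5 := h1.sub h2
  refine h5.congr_deriv (Eq.symm ?_)
  simp only [EeC, mul_sub, Finset.mul_sum]
  congr 1
  · have hes : -(s+1) = -s-1 := by ring
    rw [hes]
  · exact Finset.sum_congr rfl fun j _ => by ring

lemma hasDerivAt_Ee (J : ℕ) (s : ℂ) {x : ℝ} (hx : 0 ≤ x) :
    HasDerivAt (fun x : ℝ => Ee (J+1) x s) (-s * Ee J x (s+1)) x := by
  have hz : 1 + (x:ℂ) ∈ Complex.slitPlane := by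
    rw [Complex.mem_slitPlane_iff]
    left; simp only [Complex.add_re, Complex.one_re, Complex.ofReal_re]; linarith
  exact (hasDerivAt_EeC J s hz).comp_ofReal

lemma Ee_eq_integral (J : ℕ) (s : ℂ) {x : ℝ} (hx : 0 ≤ x) :
    Ee (J+1) x s = -s * ∫ t in (0:ℝ)..x, Ee J t (s+1) := by
  have hint : IntervalIntegrable (fun t : ℝ => -s * Ee J t (s+1))
      MeasureTheory.volume 0 x := by
    apply ContinuousOn.intervalIntegrable
    rw [Set.uIcc_of_le hx]
    exact continuousOn_const.mul ((continuous_Ee J (s+1)).mono fun t ht => ht.1)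
  have key : Ee (J+1) x s - Ee (J+1) 0 s = ∫ t in (0:ℝ)..x, -s * Ee J t (s+1) := by
    refine (intervalIntegral.integral_eq_sub_of_hasDerivAt (f := fun t : ℝ => Ee (J+1) t s) (fun t ht => ?_) hint).symm
    rw [Set.uIcc_of_le hx] at ht
    exact hasDerivAt_Ee J s ht.1
  rw [Ee_succ_zero, sub_zero] at key
  rw [key, intervalIntegral.integral_const_mul]


lemma Ee_bound : ∀ (J : ℕ) (x : ℝ) (s : ℂ) (R : ℝ), 0 ≤ x → ‖s‖ ≤ R →
    ‖Ee J x s‖ ≤ (∏ i ∈ Finset.range J, (R + 1 + i)) * (1+x) ^ (R + J) * x ^ J := by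
  intro J
  induction J with
  | zero =>
    intro x s R hx hs
    have h1 : (0:ℝ) < 1 + x := by linarith
    have h2 : ‖Ee 0 x s‖ = (1+x) ^ (-s.re) := by
      have : Ee 0 x s = ((1+x : ℝ) : ℂ) ^ (-s) := by
        simp [Ee, EeC]
      rw [this, Complex.norm_cpow_eq_rpow_re_of_pos h1, Complex.neg_re]
    rw [h2]
    simp only [Finset.range_zero, Finset.prod_empty, one_mul, pow_zero, mul_one,
      Nat.cast_zero, add_zero]
    apply Real.rpow_le_rpow_of_exponent_le (by linarith)
    have := Complex.abs_re_le_norm s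
    cases abs_le.mp (le_trans this hs) with
    | intro h l => linarith
  | succ J ih =>
    intro x s R hx hs
    have hR : (0:ℝ) ≤ R := le_trans (norm_nonneg s) hs
    set C : ℝ := (∏ i ∈ Finset.range J, (R + 2 + i)) * (1+x) ^ (R + 1 + J) * x ^ J with hC
    have hCnn : 0 ≤ C := by
      apply mul_nonneg (mul_nonneg ?_ ?_) (pow_nonneg hx J)
      · exact Finset.prod_nonneg fun i _ => by positivity
      · exact Real.rpow_nonneg (by linarith) _
    have hbd : ∀ t ∈ Set.uIoc (0:ℝ) x, ‖Ee J t (s+1)‖ ≤ C := by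
      intro t ht
      rw [Set.uIoc_of_le hx] at ht
      have ht0 : 0 ≤ t := le_of_lt ht.1
      have htx : t ≤ x := ht.2
      calc ‖Ee J t (s+1)‖ ≤ (∏ i ∈ Finset.range J, ((R+1) + 1 + i)) * (1+t) ^ ((R+1) + J) * t ^ J :=
            ih t (s+1) (R+1) ht0 (le_trans (norm_add_le s 1) (by rw [norm_one]; linarith))
        _ ≤ C := by
            rw [hC]
            have e1 : ∏ i ∈ Finset.range J, ((R+1) + 1 + (i:ℝ)) = ∏ i ∈ Finset.range J, (R + 2 + (i:ℝ)) :=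
              Finset.prod_congr rfl fun i _ => by ring
            rw [e1]
            have e2 : (R+1) + (J:ℝ) = R + 1 + J := by ring
            rw [e2]
            apply mul_le_mul
            · apply mul_le_mul_of_nonneg_left
              · exact Real.rpow_le_rpow (by linarith) (by linarith) (by positivity)
              · exact Finset.prod_nonneg fun i _ => by positivity
            · exact pow_le_pow_left₀ ht0 htx J
            · exact pow_nonneg ht0 J
            · apply mul_nonneg (Finset.prod_nonneg fun i _ => by positivity)
              exact Real.rpow_nonneg (by linarith) _
    have hval := Ee_eq_integral J s hx
    have hni : ‖∫ t in (0:ℝ)..x, Ee J t (s+1)‖ ≤ C * |x - 0| :=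
      intervalIntegral.norm_integral_le_of_norm_le_const hbd
    rw [sub_zero, _root_.abs_of_nonneg hx] at hni
    calc ‖Ee (J+1) x s‖ = ‖s‖ * ‖∫ t in (0:ℝ)..x, Ee J t (s+1)‖ := by
          rw [hval, norm_mul, norm_neg]
      _ ≤ R * (C * x) := by
          apply mul_le_mul hs hni (norm_nonneg _) hR
      _ ≤ (∏ i ∈ Finset.range (J+1), (R + 1 + i)) * (1+x) ^ (R + (J+1:ℕ)) * x ^ (J+1) := by
          rw [Finset.prod_range_succ']
          have e3 : ∏ i ∈ Finset.range J, (R + 1 + ((i+1:ℕ):ℝ)) = ∏ i ∈ Finset.range J, (R + 2 + (i:ℝ)) :=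
            Finset.prod_congr rfl fun i _ => by push_cast; ring
          rw [e3]
          have e4 : R + ((J+1:ℕ):ℝ) = R + 1 + J := by push_cast; ring
          rw [e4, hC]
          have hP : (0:ℝ) ≤ ∏ i ∈ Finset.range J, (R + 2 + (i:ℝ)) :=
            Finset.prod_nonneg fun i _ => by positivity
          have hrp : (0:ℝ) ≤ (1+x) ^ (R + 1 + (J:ℝ)) := Real.rpow_nonneg (by linarith) _
          have hxJ : (0:ℝ) ≤ x ^ J := pow_nonneg hx J
          simp only [Nat.cast_zero, add_zero]
          rw [pow_succ]
          nlinarith [mul_nonneg (mul_nonneg hP hrp) (mul_nonneg hxJ hx)]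
  

/-- remainder term -/
def rr (k J n : ℕ) (s : ℂ) : ℂ :=
  (2*((n:ℂ)+1) + k) * (((n:ℝ)+1 : ℝ) : ℂ) ^ (-2*s) * Ee J ((k:ℝ)/((n:ℝ)+1)) s

/-- the constant in the uniform bound for `rr` -/
def CC (k J : ℕ) (R : ℝ) : ℝ :=
  (2+(k:ℝ)) * ((∏ i ∈ Finset.range J, (R + 1 + i)) * (1+(k:ℝ)) ^ (R + J) * (k:ℝ) ^ J)

lemma CC_nonneg (k J : ℕ) (R : ℝ) (hR : 0 ≤ R) : 0 ≤ CC k J R := by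
  apply mul_nonneg (by positivity)
  apply mul_nonneg (mul_nonneg (Finset.prod_nonneg fun i _ => by positivity)
    (Real.rpow_nonneg (by positivity) _)) (by positivity)

lemma norm_rr_le (k J n : ℕ) (s : ℂ) (R σ : ℝ) (hs : ‖s‖ ≤ R) (hσ : σ ≤ s.re) :
    ‖rr k J n s‖ ≤ CC k J R * ((n:ℝ)+1) ^ ((1:ℝ) - 2*σ - J) := by
  have hR : (0:ℝ) ≤ R := le_trans (norm_nonneg s) hs
  set b : ℝ := (n:ℝ)+1 with hbdef
  have hb : (0:ℝ) < b := by positivity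
  have hb1 : (1:ℝ) ≤ b := by simp [hbdef]
  have hP : (0:ℝ) ≤ ∏ i ∈ Finset.range J, (R + 1 + (i:ℝ)) :=
    Finset.prod_nonneg fun i _ => by positivity
  -- factor bounds
  have h1 : ‖(2*((n:ℂ)+1) + k)‖ ≤ (2+(k:ℝ)) * b := by
    have : (2*((n:ℂ)+1) + k) = (((2*((n:ℝ)+1) + k) : ℝ) : ℂ) := by push_cast; ring
    rw [this, Complex.norm_real, Real.norm_eq_abs,
      _root_.abs_of_nonneg (by positivity)]
    nlinarith [Nat.cast_nonneg (α := ℝ) k, Nat.cast_nonneg (α := ℝ) n]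
  have h2 : ‖((b:ℝ) : ℂ) ^ (-2*s)‖ ≤ b ^ (-2*σ) := by
    rw [Complex.norm_cpow_eq_rpow_re_of_pos hb]
    apply Real.rpow_le_rpow_of_exponent_le hb1
    have hre : (-2*s).re = -2*s.re := by simp
    rw [hre]; linarith
  have h3 : ‖Ee J ((k:ℝ)/b) s‖ ≤
      (∏ i ∈ Finset.range J, (R + 1 + (i:ℝ))) * (1+(k:ℝ)) ^ (R + J) * ((k:ℝ) ^ J * b ^ (-(J:ℝ))) := by
    have hx : (0:ℝ) ≤ (k:ℝ)/b := by positivity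
    refine le_trans (Ee_bound J ((k:ℝ)/b) s R hx hs) ?_
    have e1 : ((k:ℝ)/b) ^ J = (k:ℝ) ^ J * b ^ (-(J:ℝ)) := by
      rw [div_pow, Real.rpow_neg hb.le, Real.rpow_natCast, div_eq_mul_inv]
    rw [e1]
    apply mul_le_mul_of_nonneg_right _ (by positivity)
    apply mul_le_mul_of_nonneg_left _ hP
    apply Real.rpow_le_rpow (by positivity) _ (by positivity)
    have : (k:ℝ)/b ≤ k := by
      rw [div_le_iff₀ hb]; nlinarith [Nat.cast_nonneg (α := ℝ) k]
    linarith
  have hprod : ‖rr k J n s‖ ≤ ((2+(k:ℝ)) * b) * (b ^ (-2*σ)) *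
      ((∏ i ∈ Finset.range J, (R + 1 + (i:ℝ))) * (1+(k:ℝ)) ^ (R + J) * ((k:ℝ) ^ J * b ^ (-(J:ℝ)))) := by
    rw [rr]
    rw [norm_mul, norm_mul]
    apply mul_le_mul (mul_le_mul h1 h2 (norm_nonneg _) (by positivity)) h3 (norm_nonneg _)
    positivity
  refine le_trans hprod (le_of_eq ?_)
  have e2 : b ^ ((1:ℝ) - 2*σ - J) = b * b ^ (-2*σ) * b ^ (-(J:ℝ)) := by
    rw [show (1:ℝ) - 2*σ - J = 1 + (-2*σ) + (-(J:ℝ)) by ring,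
      Real.rpow_add hb, Real.rpow_add hb, Real.rpow_one]
  rw [CC, e2]
  ring

lemma summable_pow_shift (c : ℝ) (hc : c < -1) :
    Summable (fun n : ℕ => ((n:ℝ)+1) ^ c) := by
  have h := Real.summable_nat_rpow.2 hc
  have h2 := (summable_nat_add_iff 1).2 h
  refine h2.congr fun n => ?_
  push_cast
  ring_nf

lemma summable_rr (k J : ℕ) (s : ℂ) (h : (1:ℝ) - 2*s.re - J < -1) :
    Summable (fun n => rr k J n s) := by
  apply Summable.of_norm_bounded ((summable_pow_shift _ h).mul_left (CC k J ‖s‖))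
  intro n
  exact norm_rr_le k J n s ‖s‖ s.re le_rfl le_rfl

lemma summable_cpow_shift (w : ℂ) (hw : 1 < w.re) :
    Summable (fun n : ℕ => (((n:ℝ)+1 : ℝ) : ℂ) ^ (-w)) := by
  have h := (Complex.summable_one_div_nat_cpow (p := w)).2 hw
  have h2 := (summable_nat_add_iff 1).2 h
  refine h2.congr fun n => ?_
  rw [Complex.cpow_neg, one_div]
  norm_num
lemma tsum_cpow_shift (w : ℂ) (hw : 1 < w.re) :
    ∑' n : ℕ, (((n:ℝ)+1 : ℝ) : ℂ) ^ (-w) = riemannZeta w := by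
  rw [zeta_eq_tsum_one_div_nat_add_one_cpow hw]
  refine tsum_congr fun n => ?_
  rw [Complex.cpow_neg, one_div]
  norm_num


def Fterm (k n : ℕ) (s : ℂ) : ℂ :=
  (2*((n:ℂ)+1) + k) * ((((n:ℝ)+1) * (((n:ℝ)+1)+k) : ℝ) : ℂ) ^ (-s)

def g (k m : ℕ) (s : ℂ) : ℂ :=
  (∑ j ∈ Finset.range m, -((k:ℂ)^(j+1) / ((j:ℂ)+1)) * pb j s * xi (2*s + j)) +
    pb m s * (k:ℂ)^(m+1) * riemannZeta (2*s + m)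

def fg (k m : ℕ) (s : ℂ) : ℂ :=
  2 * riemannZeta (2*s - 1) + g k m s + ∑' n, rr k (m+1) n s

-- cpow helpers
lemma cpow_bmul (b : ℝ) (hb : 0 < b) (w₁ w₂ : ℂ) :
    ((b : ℝ) : ℂ) ^ (w₁ + w₂) = ((b:ℝ):ℂ) ^ w₁ * ((b:ℝ):ℂ) ^ w₂ :=
  Complex.cpow_add _ _ (by exact_mod_cast hb.ne')

lemma cpow_split (n k : ℕ) (s : ℂ) :
    ((((n:ℝ)+1) * (((n:ℝ)+1)+k) : ℝ) : ℂ) ^ (-s) =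
    (((n:ℝ)+1 : ℝ) : ℂ) ^ (-2*s) * (((1 + (k:ℝ)/((n:ℝ)+1)) : ℝ) : ℂ) ^ (-s) := by
  set b : ℝ := (n:ℝ)+1 with hbdef
  have hb : (0:ℝ) < b := by positivity
  have e1 : b * (b + k) = b * (b * (1 + (k:ℝ)/b)) := by
    field_simp
  rw [e1, Complex.ofReal_mul, Complex.mul_cpow_ofReal_nonneg hb.le (by positivity),
    Complex.ofReal_mul, Complex.mul_cpow_ofReal_nonneg hb.le (by positivity)]
  rw [show -2*s = -s + -s by ring, cpow_bmul b hb]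
  ring

/-- the key per-`n`, per-`j` term identity -/
lemma term_j (k n j : ℕ) (s : ℂ) :
    (2*((n:ℂ)+1) + k) * (((n:ℝ)+1 : ℝ) : ℂ) ^ (-2*s) * (pb j s * (((k:ℝ)/((n:ℝ)+1) : ℝ) : ℂ) ^ j) =
    2 * pb j s * (k:ℂ)^j * (((n:ℝ)+1 : ℝ) : ℂ) ^ (-(2*s + j - 1)) +
      pb j s * (k:ℂ)^(j+1) * (((n:ℝ)+1 : ℝ) : ℂ) ^ (-(2*s + j)) := by
  set b : ℝ := (n:ℝ)+1 with hbdef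
  have hb : (0:ℝ) < b := by positivity
  have hbne : ((b:ℝ):ℂ) ≠ 0 := by exact_mod_cast hb.ne'
  have e1 : (((k:ℝ)/b : ℝ) : ℂ) ^ j = (k:ℂ)^j * ((b:ℝ):ℂ)^(-(j:ℂ)) := by
    push_cast
    rw [div_pow, Complex.cpow_neg, Complex.cpow_natCast, div_eq_mul_inv]
  have e2 : (2*((n:ℂ)+1) + k) = 2*((b:ℝ):ℂ) + k := by push_cast [hbdef]; ring
  have e3 : ((b:ℝ):ℂ) * ((b:ℝ):ℂ)^(-2*s) = ((b:ℝ):ℂ)^(1 + -2*s) := by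
    rw [cpow_bmul b hb, Complex.cpow_one]
  rw [e1, e2]
  have e4 : -(2*s + j - 1) = (1 + -2*s) + (-(j:ℂ)) := by ring
  have e5 : -(2*s + j) = (-2*s) + (-(j:ℂ)) := by ring
  rw [e4, e5, cpow_bmul b hb, cpow_bmul b hb, cpow_bmul b hb, Complex.cpow_one]
  ring

lemma Ee_one (k n : ℕ) (s : ℂ) :
    Ee 1 ((k:ℝ)/((n:ℝ)+1)) s =
      (((1 + (k:ℝ)/((n:ℝ)+1)) : ℝ) : ℂ) ^ (-s) - 1 := by
  simp [Ee, EeC, pb_zero]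

lemma Ee_sub_succ (J : ℕ) (x : ℝ) (s : ℂ) :
    Ee J x s - Ee (J+1) x s = pb J s * (x:ℂ)^J := by
  simp [Ee, EeC, Finset.sum_range_succ]

lemma Fterm_eq (k n : ℕ) (s : ℂ) :
    Fterm k n s = rr k 1 n s + (2 * (((n:ℝ)+1 : ℝ) : ℂ) ^ (-(2*s - 1)) +
      (k:ℂ) * (((n:ℝ)+1 : ℝ) : ℂ) ^ (-(2*s))) := by
  have h0 := term_j k n 0 s
  simp only [pb_zero, pow_zero, Nat.cast_zero, one_mul, mul_one, zero_add, pow_one] at h0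
  rw [Fterm, cpow_split n k s, rr, Ee_one k n s]
  have e : -(2*s + (0:ℂ) - 1) = -(2*s-1) := by ring
  have e' : -(2*s + (0:ℂ)) = -(2*s) := by ring
  rw [e, e'] at h0
  set b : ℝ := (n:ℝ)+1
  set A : ℂ := 2*((n:ℂ)+1) + k
  set P : ℂ := ((b:ℝ):ℂ)^(-2*s)
  -- h0 : A * P * (1 * cp1) = 2 * 1 * cpA + 1 * k * cpB form
  calc A * (P * (((1 + (k:ℝ)/b : ℝ)):ℂ)^(-s)) = A * P * ((((1 + (k:ℝ)/b : ℝ)):ℂ)^(-s)) := by ring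
    _ = A * P * ((((1 + (k:ℝ)/b : ℝ)):ℂ)^(-s) - 1) + A * P * 1 := by ring
    _ = _ := by rw [h0]; ring
  

lemma re_2s_add (s : ℂ) (m : ℕ) : (2*s + m).re = 2*s.re + m := by
  simp [Complex.add_re, Complex.mul_re]

lemma summable_Fterm (k : ℕ) (s : ℂ) (hs : 1 < s.re) : Summable (fun n => Fterm k n s) := by
  have h1 : Summable (fun n => rr k 1 n s) := summable_rr k 1 s (by push_cast; linarith)
  have h2 : Summable (fun n : ℕ => (2:ℂ) * (((n:ℝ)+1 : ℝ) : ℂ) ^ (-(2*s-1))) :=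
    (summable_cpow_shift (2*s-1) (by simp [Complex.sub_re, Complex.mul_re]; linarith)).mul_left 2
  have h3 : Summable (fun n : ℕ => (k:ℂ) * (((n:ℝ)+1 : ℝ) : ℂ) ^ (-(2*s))) :=
    (summable_cpow_shift (2*s) (by simp [Complex.mul_re]; linarith)).mul_left _
  have := (h1.add h2).add h3
  refine this.congr fun n => ?_
  rw [Fterm_eq k n s]; ring

lemma tsum_Fterm_eq (k : ℕ) (s : ℂ) (hs : 1 < s.re) :
    ∑' n, Fterm k n s = fg k 0 s := by
  have h1 : Summable (fun n => rr k 1 n s) := summable_rr k 1 s (by push_cast; linarith)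
  have h2 : Summable (fun n : ℕ => (((n:ℝ)+1 : ℝ) : ℂ) ^ (-(2*s-1))) :=
    summable_cpow_shift (2*s-1) (by simp [Complex.sub_re, Complex.mul_re]; linarith)
  have h3 : Summable (fun n : ℕ => (((n:ℝ)+1 : ℝ) : ℂ) ^ (-(2*s))) :=
    summable_cpow_shift (2*s) (by simp [Complex.mul_re]; linarith)
  have step : ∑' n, Fterm k n s =
      (∑' n, rr k 1 n s) + (2 * ∑' n : ℕ, (((n:ℝ)+1 : ℝ) : ℂ) ^ (-(2*s-1)) +
        (k:ℂ) * ∑' n : ℕ, (((n:ℝ)+1 : ℝ) : ℂ) ^ (-(2*s))) := by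
    rw [← tsum_mul_left, ← tsum_mul_left, ← Summable.tsum_add (h2.mul_left 2) (h3.mul_left _),
      ← Summable.tsum_add h1 ((h2.mul_left 2).add (h3.mul_left _))]
    exact tsum_congr fun n => Fterm_eq k n s
  rw [step, tsum_cpow_shift (2*s-1) (by simp [Complex.sub_re, Complex.mul_re]; linarith),
    tsum_cpow_shift (2*s) (by simp [Complex.mul_re]; linarith)]
  rw [fg, g]
  simp [pb_zero]
  ring

lemma rr_sub_eq (k m n : ℕ) (s : ℂ) :
    rr k (m+1) n s - rr k (m+2) n s =
      2 * pb (m+1) s * (k:ℂ)^(m+1) * (((n:ℝ)+1 : ℝ) : ℂ) ^ (-(2*s+m)) +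
        pb (m+1) s * (k:ℂ)^(m+2) * (((n:ℝ)+1 : ℝ) : ℂ) ^ (-(2*s+m+1)) := by
  have hEe : Ee (m+1) ((k:ℝ)/((n:ℝ)+1)) s - Ee (m+2) ((k:ℝ)/((n:ℝ)+1)) s =
      pb (m+1) s * (((k:ℝ)/((n:ℝ)+1) : ℝ) : ℂ)^(m+1) := Ee_sub_succ (m+1) _ s
  have hd : rr k (m+1) n s - rr k (m+2) n s =
      (2*((n:ℂ)+1) + k) * (((n:ℝ)+1 : ℝ) : ℂ)^(-2*s) *
        (pb (m+1) s * (((k:ℝ)/((n:ℝ)+1) : ℝ) : ℂ)^(m+1)) := by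
    simp only [rr]
    rw [← hEe]
    ring
  rw [hd, term_j k n (m+1) s]
  have e1 : -(2*s + ((m+1:ℕ):ℂ) - 1) = -(2*s+m) := by push_cast; ring
  have e2 : -(2*s + ((m+1:ℕ):ℂ)) = -(2*s+m+1) := by push_cast; ring
  rw [e1, e2]

lemma fg_succ (k m : ℕ) (s : ℂ) (h : ((1:ℝ) - m)/2 < s.re) : fg k (m+1) s = fg k m s := by
  have h1 : 1 < (2*s+m).re := by rw [re_2s_add]; linarith
  have h2 : 1 < (2*s+m+1).re := by
    have : (2*s+m+1).re = 2*s.re + m + 1 := by simp [Complex.add_re, Complex.mul_re]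
    rw [this]; linarith
  have hne : (2*s+(m:ℂ)) ≠ 1 := by
    intro hh; rw [hh] at h1; simp at h1
  have hs1 : Summable (fun n => rr k (m+1) n s) := summable_rr k (m+1) s (by push_cast; linarith)
  have hs2 : Summable (fun n => rr k (m+1+1) n s) := summable_rr k (m+1+1) s (by push_cast; linarith)
  have hzA : Summable (fun n : ℕ => (((n:ℝ)+1 : ℝ) : ℂ)^(-(2*s+m))) := summable_cpow_shift _ h1
  have hzB : Summable (fun n : ℕ => (((n:ℝ)+1 : ℝ) : ℂ)^(-(2*s+m+1))) := summable_cpow_shift _ h2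
  have key : (∑' n, rr k (m+1) n s) - (∑' n, rr k (m+1+1) n s) =
      2 * pb (m+1) s * (k:ℂ)^(m+1) * riemannZeta (2*s+m) +
        pb (m+1) s * (k:ℂ)^(m+2) * riemannZeta (2*s+m+1) := by
    rw [← Summable.tsum_sub hs1 hs2]
    rw [tsum_congr (fun n => rr_sub_eq k m n s),
      Summable.tsum_add (hzA.mul_left _) (hzB.mul_left _), tsum_mul_left, tsum_mul_left,
      tsum_cpow_shift _ h1, tsum_cpow_shift _ h2]
  have hxi : xi (2*s+m) = (2*s+m-1) * riemannZeta (2*s+m) := xi_eq hne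
  have hm1 : ((m:ℂ)+1) ≠ 0 := Nat.cast_add_one_ne_zero m
  rw [fg, fg, g, g, Finset.sum_range_succ]
  push_cast
  simp only [← add_assoc]
  rw [hxi, pb_succ m s]
  rw [pb_succ m s] at key
  linear_combination -key + ((k:ℂ) * (k:ℂ)^m * pb m s * riemannZeta (2*s+(m:ℂ))) * (mul_inv_cancel₀ hm1)


lemma differentiable_rr (k J n : ℕ) : Differentiable ℂ (fun s => rr k J n s) := by
  have hb : (((n:ℝ)+1 : ℝ) : ℂ) ≠ 0 := by
    exact_mod_cast (by positivity : ((n:ℝ)+1) ≠ 0)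
  have h1 : Differentiable ℂ (fun s : ℂ => (((n:ℝ)+1 : ℝ) : ℂ) ^ (-2*s)) :=
    ((differentiable_id.const_mul (-2)).const_cpow (Or.inl hb))
  have h2 : Differentiable ℂ (fun s : ℂ => Ee J ((k:ℝ)/((n:ℝ)+1)) s) := by
    have hb2 : (1 + (((k:ℝ)/((n:ℝ)+1) : ℝ) : ℂ)) ≠ 0 := by
      have : (1:ℝ) + (k:ℝ)/((n:ℝ)+1) ≠ 0 := by positivity
      exact_mod_cast (Complex.ofReal_ne_zero.mpr this)
    apply Differentiable.sub
    · exact (differentiable_id.neg).const_cpow (Or.inl hb2)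
    · apply Differentiable.fun_sum
      intro j _
      exact (differentiable_pb j).mul_const _
  exact ((differentiable_const _).mul h1).mul h2

lemma differentiableAt_g (k m : ℕ) {s₀ : ℂ} (h : ((1:ℝ) - m)/2 < s₀.re) :
    DifferentiableAt ℂ (g k m) s₀ := by
  have hz : (2*s₀ + (m:ℂ)) ≠ 1 := by
    intro hh
    have := re_2s_add s₀ m
    rw [hh] at this
    simp only [Complex.one_re] at this
    have hm : (0:ℝ) ≤ m := Nat.cast_nonneg m
    linarith
  have hin : DifferentiableAt ℂ (fun s : ℂ => 2*s + (m:ℂ)) s₀ :=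
    (differentiableAt_id.const_mul 2).add_const _
  apply DifferentiableAt.add
  · apply DifferentiableAt.fun_sum
    intro j _
    apply DifferentiableAt.mul
    · exact (differentiableAt_const _).mul (differentiable_pb j s₀)
    · exact (differentiable_xi _).comp s₀ ((differentiableAt_id.const_mul 2).add_const _)
  · exact ((differentiable_pb m s₀).mul_const _).mul
      ((differentiableAt_riemannZeta hz).comp s₀ hin)

lemma differentiableAt_tsum_rr (k m : ℕ) {s₀ : ℂ} (h : ((1:ℝ) - m)/2 < s₀.re) :
    DifferentiableAt ℂ (fun s => ∑' n, rr k (m+1) n s) s₀ := by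
  set σ₀ : ℝ := (s₀.re + ((1:ℝ)-m)/2)/2 with hσ₀
  have hσlt : ((1:ℝ)-m)/2 < σ₀ := by rw [hσ₀]; linarith
  set δ : ℝ := s₀.re - σ₀ with hδ
  have hδpos : 0 < δ := by rw [hδ, hσ₀]; linarith
  set R : ℝ := ‖s₀‖ + δ with hR
  have hsum : Summable (fun n : ℕ => CC k (m+1) R * ((n:ℝ)+1) ^ ((1:ℝ) - 2*σ₀ - ((m+1:ℕ):ℝ))) := by
    apply Summable.mul_left
    apply summable_pow_shift
    push_cast
    linarith
  have hdiff : DifferentiableOn ℂ (fun s => ∑' n, rr k (m+1) n s) (Metric.ball s₀ δ) := by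
    apply differentiableOn_tsum_of_summable_norm hsum
      (fun n => (differentiable_rr k (m+1) n).differentiableOn) Metric.isOpen_ball
    intro n w hw
    rw [Metric.mem_ball] at hw
    have hd : ‖w - s₀‖ < δ := by rw [← dist_eq_norm]; exact hw
    have h1 : ‖w‖ ≤ R := by
      calc ‖w‖ = ‖s₀ + (w - s₀)‖ := by ring_nf
        _ ≤ ‖s₀‖ + ‖w - s₀‖ := norm_add_le _ _
        _ ≤ R := by rw [hR]; linarith
    have h2 : σ₀ ≤ w.re := by
      have habs : |w.re - s₀.re| ≤ ‖w - s₀‖ := by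
        rw [← Complex.sub_re]
        exact Complex.abs_re_le_norm _
      have h4 := (abs_le.mp habs).1
      have h5 : δ = s₀.re - σ₀ := hδ
      linarith
    exact norm_rr_le k (m+1) n w R σ₀ h1 h2
  exact hdiff.differentiableAt (Metric.isOpen_ball.mem_nhds (Metric.mem_ball_self hδpos))

lemma differentiableAt_fg (k m : ℕ) {s₀ : ℂ} (h : ((1:ℝ) - m)/2 < s₀.re) (h1 : s₀ ≠ 1) :
    DifferentiableAt ℂ (fg k m) s₀ := by
  have hz : 2*s₀ - 1 ≠ 1 := by
    intro hh
    apply h1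
    have : 2*s₀ = 2*1 := by rw [two_mul]; linear_combination hh
    exact mul_left_cancel₀ (two_ne_zero) this
  apply DifferentiableAt.add
  apply DifferentiableAt.add
  · exact (differentiableAt_const 2).mul
      ((differentiableAt_riemannZeta hz).comp s₀ ((differentiableAt_id.const_mul 2).sub_const 1))
  · exact differentiableAt_g k m h
  · exact differentiableAt_tsum_rr k m h

/-- the analytic continuation -/
def ff (k : ℕ) (s : ℂ) : ℂ := fg k (⌈1 - 2*s.re⌉₊ + 1) s

lemma fg_eq_of_le (k : ℕ) (s : ℂ) (m m' : ℕ) (hmm : m ≤ m') (h : ((1:ℝ) - m)/2 < s.re) :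
    fg k m' s = fg k m s := by
  induction m', hmm using Nat.le_induction with
  | base => rfl
  | succ m' hmm ih =>
    rw [← ih]
    apply fg_succ
    have : ((1:ℝ) - m')/2 ≤ ((1:ℝ)-m)/2 := by
      have : (m:ℝ) ≤ m' := Nat.cast_le.mpr hmm
      linarith
    linarith

lemma ff_eq_fg (k m : ℕ) (s : ℂ) (h : ((1:ℝ) - m)/2 < s.re) : ff k s = fg k m s := by
  set N : ℕ := ⌈1 - 2*s.re⌉₊ + 1 with hN
  have hNh : ((1:ℝ) - N)/2 < s.re := by
    have h1 : (1:ℝ) - 2*s.re ≤ (⌈1 - 2*s.re⌉₊ : ℝ) := Nat.le_ceil _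
    have h2 : ((N:ℕ):ℝ) = (⌈1 - 2*s.re⌉₊ : ℝ) + 1 := by rw [hN]; push_cast; ring
    rw [h2]
    linarith
  rcases le_total m N with hc | hc
  · exact fg_eq_of_le k s m N hc h
  · exact (fg_eq_of_le k s N m hc hNh).symm

lemma differentiableAt_ff (k : ℕ) {w : ℂ} (hw : w ≠ 1) : DifferentiableAt ℂ (ff k) w := by
  set m : ℕ := ⌈1 - 2*w.re⌉₊ + 1 with hm
  have hmh : ((1:ℝ) - m)/2 < w.re := by
    have h1 : (1:ℝ) - 2*w.re ≤ (⌈1 - 2*w.re⌉₊ : ℝ) := Nat.le_ceil _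
    have h2 : ((m:ℕ):ℝ) = (⌈1 - 2*w.re⌉₊ : ℝ) + 1 := by rw [hm]; push_cast; ring
    rw [h2]; linarith
  have hopen : IsOpen {s : ℂ | ((1:ℝ) - m)/2 < s.re} := isOpen_lt continuous_const Complex.continuous_re
  refine (differentiableAt_fg k m hmh hw).congr_of_eventuallyEq ?_
  filter_upwards [hopen.mem_nhds hmh] with s hs
  exact ff_eq_fg k m s hs

lemma ff_residue (k : ℕ) :
    Tendsto (fun w : ℂ => (w - 1) * ff k w) (𝓝[≠] (1:ℂ)) (𝓝 1) := by
  have hm2 : ((1:ℝ) - (2:ℕ))/2 < (1:ℂ).re := by norm_num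
  -- continuity of the regular part
  have hcont : ContinuousAt (fun w => g k 2 w + ∑' n, rr k (2+1) n w) 1 :=
    ((differentiableAt_g k 2 hm2).add (differentiableAt_tsum_rr k 2 hm2)).continuousAt
  have hzero : Tendsto (fun w : ℂ => (w - 1) * (g k 2 w + ∑' n, rr k (2+1) n w))
      (𝓝[≠] (1:ℂ)) (𝓝 0) := by
    have h1 : Tendsto (fun w : ℂ => w - 1) (𝓝[≠] (1:ℂ)) (𝓝 0) := by
      have h0 : Tendsto (fun w : ℂ => w - 1) (𝓝 (1:ℂ)) (𝓝 0) := by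
        have h00 : Tendsto (fun w : ℂ => w - 1) (𝓝 (1:ℂ)) (𝓝 ((1:ℂ) - 1)) :=
          Filter.Tendsto.sub_const tendsto_id 1
        simpa using h00
      exact h0.mono_left nhdsWithin_le_nhds
    have h2 : Tendsto (fun w => g k 2 w + ∑' n, rr k (2+1) n w) (𝓝[≠] (1:ℂ))
        (𝓝 (g k 2 1 + ∑' n, rr k (2+1) n 1)) :=
      hcont.tendsto.mono_left nhdsWithin_le_nhds
    simpa using h1.mul h2
  have hmain : Tendsto (fun w : ℂ => (w - 1) * (2 * riemannZeta (2*w - 1)))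
      (𝓝[≠] (1:ℂ)) (𝓝 1) := by
    have hmap : Tendsto (fun w : ℂ => 2*w - 1) (𝓝[≠] (1:ℂ)) (𝓝[≠] (1:ℂ)) := by
      rw [tendsto_nhdsWithin_iff]
      constructor
      · have h0 : Tendsto (fun w : ℂ => 2*w - 1) (𝓝 (1:ℂ)) (𝓝 (2*1-1)) :=
          Filter.Tendsto.sub_const (Filter.Tendsto.const_mul 2 tendsto_id) 1
        norm_num at h0
        exact h0.mono_left nhdsWithin_le_nhds
      · filter_upwards [eventually_mem_nhdsWithin] with w hw
        simp only [Set.mem_compl_iff, Set.mem_singleton_iff] at hw ⊢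
        intro hc
        apply hw
        have : 2*w = 2*1 := by rw [two_mul]; linear_combination hc
        exact mul_left_cancel₀ two_ne_zero this
    have := riemannZeta_residue_one.comp hmap
    have heq : (fun w : ℂ => (w - 1) * (2 * riemannZeta (2*w - 1))) =
        (fun s : ℂ => (s - 1) * riemannZeta s) ∘ (fun w : ℂ => 2*w - 1) := by
      funext w
      simp only [Function.comp_apply]
      ring
    rw [heq]
    exact this
  have := hmain.add hzero
  rw [add_zero] at this
  refine this.congr' ?_
  filter_upwards [eventually_nhdsWithin_of_eventually_nhds
    ((isOpen_lt continuous_const Complex.continuous_re).eventually_mem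
      (show (1:ℂ) ∈ {s : ℂ | ((1:ℝ) - (2:ℕ))/2 < s.re} from hm2))] with w hw
  rw [ff_eq_fg k 2 w hw, fg]
  ring


lemma ff_eq_series (k : ℕ) (s : ℂ) (hs : 1 < s.re) : ff k s = ∑' n, Fterm k n s := by
  rw [ff_eq_fg k 0 s (by push_cast; linarith), ← tsum_Fterm_eq k s hs]

end
end ZCPkAux

open ZCPkAux in
/-- Proposition 3: `ζ(s,ℂP^k)` extends analytically to `ℂ ∖ {1,…,k}` with
simple poles at `s = n`, `1 ≤ n ≤ k`, of residue `4^{-n} k a_{k,n-1}/((k-1)!)²`. -/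
theorem zeta_CPk_poles (k : ℕ) (hk : 2 ≤ k) (a : ℕ → ℝ)
    (ha : (∏ i ∈ Finset.Icc 1 (k - 1), (X + C (i : ℝ)) ^ 2) =
      ∑ l ∈ Finset.range k, C (a l) * (X ^ 2 + C ((k : ℕ) : ℝ) * X) ^ l) :
    ∃ Z : ℂ → ℂ,
      DifferentiableOn ℂ Z {s : ℂ | ∀ n : ℕ, 1 ≤ n → n ≤ k → s ≠ (n : ℂ)} ∧
      (∀ s : ℂ, (k : ℝ) < s.re →
        Z s = (4 : ℂ) ^ (-s) * ∑' n : ℕ,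
          (((k : ℝ) * (2 * ((n : ℝ) + 1) + k) / (Nat.factorial (k - 1) : ℝ) ^ 2 *
              ∏ i ∈ Finset.Icc 1 (k - 1), ((n : ℝ) + 1 + i) ^ 2 : ℝ) : ℂ) /
            ((((n : ℝ) + 1) * ((n : ℝ) + 1 + k) : ℝ) : ℂ) ^ s) ∧
      ∀ n : ℕ, 1 ≤ n → n ≤ k →
        Tendsto (fun s : ℂ => (s - (n : ℂ)) * Z s)
          (nhdsWithin (n : ℂ) {(n : ℂ)}ᶜ)
          (nhds ((((1 / 4 ^ n) * k * a (n - 1) / (Nat.factorial (k - 1) : ℝ) ^ 2 : ℝ) : ℂ))) := by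
  set Cc : ℂ := (k:ℂ) / ((Nat.factorial (k-1) : ℂ))^2 with hCc
  refine ⟨fun s => (4:ℂ)^(-s) * (Cc * ∑ l ∈ Finset.range k, (a l : ℂ) * ff k (s - l)),
    ?_, ?_, ?_⟩
  · -- differentiability
    intro s hs
    simp only [Set.mem_setOf_eq] at hs
    apply DifferentiableAt.differentiableWithinAt
    apply DifferentiableAt.mul
    · exact (differentiableAt_id.neg).const_cpow (Or.inl (by norm_num))
    · apply DifferentiableAt.const_mul
      apply DifferentiableAt.fun_sum
      intro l hl
      apply DifferentiableAt.const_mul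
      have hsl : s - (l:ℂ) ≠ 1 := by
        intro hcon
        apply hs (l+1) (by omega) (by
          simp only [Finset.mem_range] at hl; omega)
        push_cast
        linear_combination hcon
      exact (differentiableAt_ff k hsl).comp s (differentiableAt_id.sub_const _)
  · -- series identity
    intro s hs
    have hk1 : (1:ℝ) ≤ (k:ℝ) := by exact_mod_cast Nat.one_le_iff_ne_zero.mpr (by omega)
    beta_reduce
    congr 1
    have hsl : ∀ l ∈ Finset.range k, 1 < (s - (l:ℂ)).re := by
      intro l hl
      simp only [Finset.mem_range] at hl
      have : ((l:ℂ)).re = (l:ℝ) := by simp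
      rw [Complex.sub_re, this]
      have : (l:ℝ) ≤ (k:ℝ) - 1 := by
        have : (l:ℝ) + 1 ≤ (k:ℝ) := by exact_mod_cast Nat.succ_le_of_lt hl
        linarith
      linarith
    -- replace ff by the series
    have step1 : ∀ l ∈ Finset.range k, (a l : ℂ) * ff k (s - l) =
        ∑' n, (a l : ℂ) * Fterm k n (s - l) := by
      intro l hl
      rw [ff_eq_series k _ (hsl l hl), tsum_mul_left]
    rw [Finset.sum_congr rfl step1]
    rw [← Summable.tsum_finsetSum (fun l hl => ((summable_Fterm k _ (hsl l hl)).mul_left _))]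
    rw [← tsum_mul_left]
    apply tsum_congr
    intro n
    -- per-n computation
    set u : ℝ := ((n:ℝ)+1) * (((n:ℝ)+1)+k) with hu
    have hupos : 0 < u := by positivity
    have hfl : ∀ l ∈ Finset.range k, Fterm k n (s - l) =
        (2*((n:ℂ)+1)+k) * (((u:ℝ):ℂ)^(l:ℕ) * ((u:ℝ):ℂ)^(-s)) := by
      intro l _
      rw [Fterm]
      congr 1
      rw [show -(s - (l:ℂ)) = (l:ℂ) + (-s) by ring, cpow_bmul u hupos, Complex.cpow_natCast]
    -- evaluate the polynomial identity at (n:ℝ)+1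
    have heval := congrArg (Polynomial.eval ((n:ℝ)+1)) ha
    simp only [Polynomial.eval_prod, Polynomial.eval_pow, Polynomial.eval_add,
      Polynomial.eval_mul, Polynomial.eval_finset_sum, Polynomial.eval_X, Polynomial.eval_C] at heval
    have heval2 : (∏ i ∈ Finset.Icc 1 (k-1), (((n:ℝ)+1) + i)^2) =
        ∑ l ∈ Finset.range k, a l * u^l := by
      rw [heval]
      refine Finset.sum_congr rfl fun l _ => ?_
      congr 1
      rw [hu]; ring
    -- cast to ℂ
    have hevalC : (((∏ i ∈ Finset.Icc 1 (k-1), (((n:ℝ)+1) + i)^2 : ℝ)) : ℂ) =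
        ∑ l ∈ Finset.range k, (a l : ℂ) * ((u:ℝ):ℂ)^l := by
      rw [heval2]
      push_cast
      rfl
    calc Cc * ∑ l ∈ Finset.range k, (a l : ℂ) * Fterm k n (s - l)
        = Cc * (2*((n:ℂ)+1)+k) * ((u:ℝ):ℂ)^(-s) *
            (∑ l ∈ Finset.range k, (a l : ℂ) * ((u:ℝ):ℂ)^l) := by
          rw [Finset.mul_sum, Finset.mul_sum]
          refine Finset.sum_congr rfl fun l hl => ?_
          rw [hfl l hl]
          ring
      _ = Cc * (2*((n:ℂ)+1)+k) * ((u:ℝ):ℂ)^(-s) *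
            (((∏ i ∈ Finset.Icc 1 (k-1), (((n:ℝ)+1) + i)^2 : ℝ)) : ℂ) := by rw [hevalC]
      _ = _ := by
          rw [Complex.cpow_neg, hCc]
          push_cast
          rw [div_eq_mul_inv, div_eq_mul_inv]
          ring
  · -- residues
    intro n₀ hn1 hnk
    have hl0 : n₀ - 1 ∈ Finset.range k := by simp only [Finset.mem_range]; omega
    set c : ℂ := ((n₀-1:ℕ):ℂ) with hc
    have hc1 : (n₀:ℂ) - c = 1 := by
      rw [hc, Nat.cast_sub hn1]; push_cast; ring
    have hT4 : Tendsto (fun s : ℂ => (4:ℂ)^(-s)) (𝓝[≠] ((n₀:ℕ):ℂ)) (𝓝 ((4:ℂ)^(-((n₀:ℕ):ℂ)))) := by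
      have hca : ContinuousAt (fun s : ℂ => (4:ℂ)^(-s)) ((n₀:ℕ):ℂ) :=
        ((differentiableAt_id.neg).const_cpow (Or.inl (by norm_num))).continuousAt
      exact hca.tendsto.mono_left nhdsWithin_le_nhds
    have hsum : Tendsto (fun s : ℂ => ∑ l ∈ Finset.range k, (a l:ℂ) * ((s - (n₀:ℕ)) * ff k (s - l)))
        (𝓝[≠] ((n₀:ℕ):ℂ)) (𝓝 (∑ l ∈ Finset.range k, if l = n₀ - 1 then (a l:ℂ) else 0)) := by
      apply tendsto_finset_sum
      intro l hl
      by_cases hln : l = n₀ - 1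
      · subst hln
        simp only [if_pos]
        have hmap : Tendsto (fun s : ℂ => s - c) (𝓝[≠] ((n₀:ℕ):ℂ)) (𝓝[≠] (1:ℂ)) := by
          rw [tendsto_nhdsWithin_iff]
          constructor
          · have h0 : Tendsto (fun s : ℂ => s - c) (𝓝 ((n₀:ℕ):ℂ)) (𝓝 ((n₀:ℂ) - c)) :=
              Filter.Tendsto.sub_const tendsto_id c
            rw [hc1] at h0
            exact h0.mono_left nhdsWithin_le_nhds
          · filter_upwards [eventually_mem_nhdsWithin] with w hw
            simp only [Set.mem_compl_iff, Set.mem_singleton_iff] at hw ⊢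
            intro hcon
            apply hw
            linear_combination hcon - hc1
        have hres := (ff_residue k).comp hmap
        have hcompeq : ((fun w : ℂ => (w - 1) * ff k w) ∘ (fun s : ℂ => s - c)) =
            fun s : ℂ => (s - ((n₀:ℕ):ℂ)) * ff k (s - c) := by
          funext w
          simp only [Function.comp_apply]
          congr 1
          linear_combination hc1
        rw [hcompeq] at hres
        have := hres.const_mul ((a (n₀-1) : ℂ))
        simpa using this
      · simp only [if_neg hln]
        have hne1 : ((n₀:ℕ):ℂ) - (l:ℂ) ≠ 1 := by
          intro hcon
          apply hln
          have h2 : ((n₀:ℕ):ℂ) = ((l+1:ℕ):ℂ) := by push_cast; linear_combination hcon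
          have h3 : n₀ = l + 1 := Nat.cast_injective h2
          omega
        have hcff : ContinuousAt (fun s : ℂ => ff k (s - l)) ((n₀:ℕ):ℂ) := by
          apply ContinuousAt.comp (x := ((n₀:ℕ):ℂ)) (g := ff k) (f := fun s : ℂ => s - (l:ℂ))
            ((differentiableAt_ff k hne1).continuousAt)
            (continuousAt_id.sub continuousAt_const)
        have h0 : Tendsto (fun s : ℂ => s - ((n₀:ℕ):ℂ)) (𝓝[≠] ((n₀:ℕ):ℂ)) (𝓝 0) := by
          have h00 : Tendsto (fun s : ℂ => s - ((n₀:ℕ):ℂ)) (𝓝 ((n₀:ℕ):ℂ))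
              (𝓝 (((n₀:ℕ):ℂ) - ((n₀:ℕ):ℂ))) := Filter.Tendsto.sub_const tendsto_id _
          rw [sub_self] at h00
          exact h00.mono_left nhdsWithin_le_nhds
        have h1 : Tendsto (fun s : ℂ => ff k (s - l)) (𝓝[≠] ((n₀:ℕ):ℂ))
            (𝓝 (ff k (((n₀:ℕ):ℂ) - l))) :=
          hcff.tendsto.mono_left nhdsWithin_le_nhds
        have h2 := (h0.mul h1).const_mul ((a l : ℂ))
        simpa using h2
    have hfinal := hT4.mul ((tendsto_const_nhds (x := Cc)).mul hsum)
    have hfun : ∀ s : ℂ, (4:ℂ)^(-s) * (Cc * ∑ l ∈ Finset.range k, (a l:ℂ) * ((s - (n₀:ℕ)) * ff k (s - l))) =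
        (s - ((n₀:ℕ):ℂ)) * ((4:ℂ)^(-s) * (Cc * ∑ l ∈ Finset.range k, (a l:ℂ) * ff k (s - l))) := by
      intro s
      have hinner : ∑ l ∈ Finset.range k, (a l:ℂ) * ((s - (n₀:ℕ)) * ff k (s - l)) =
          (s - ((n₀:ℕ):ℂ)) * ∑ l ∈ Finset.range k, (a l:ℂ) * ff k (s - l) := by
        rw [Finset.mul_sum]
        exact Finset.sum_congr rfl fun l _ => by ring
      rw [hinner]
      ring
    have hfinal2 := hfinal.congr hfun
    have hvs : ∑ l ∈ Finset.range k, (if l = n₀ - 1 then (a l:ℂ) else 0) = (a (n₀-1) : ℂ) := by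
      rw [Finset.sum_ite_eq' (Finset.range k) (n₀-1) (fun l => (a l : ℂ))]
      rw [if_pos hl0]
    rw [hvs] at hfinal2
    have hval : (4:ℂ)^(-((n₀:ℕ):ℂ)) * (Cc * (a (n₀-1) : ℂ)) =
        (((1 / 4 ^ n₀) * k * a (n₀ - 1) / (Nat.factorial (k - 1) : ℝ) ^ 2 : ℝ) : ℂ) := by
      rw [Complex.cpow_neg, Complex.cpow_natCast, hCc]
      push_cast
      rw [div_eq_mul_inv, div_eq_mul_inv]
      ring
    rw [hval] at hfinal2
    exact hfinal2
end
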